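/- arXiv:2604.05143 — 5 statements merged into one kernel-verified Lean document; each statement's English description precedes it below -/
import Mathlib

section
/- Local solvability (Lemma 1): for every Φ₀ > 0 there exists u₀ > 0 such that the Volterra equation (★) has a unique continuous solution g on [0, u₀], i.e., there is exactly one continuous g : [0, u₀] → ℝ satisfying g(u) = μ u^{−γ} e^{α/u} ∫₀ᵘ t^{γ−2} e^{−α/t} (Φ₀ F̄(t) + (Bg)(t)) dt for all u ∈ (0, u₀]; moreover this solution satisfies g(0) = (μ/α) Φ₀. -/
open MeasureTheory Filter Set Topology

/-- Tail of a distribution function. -/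
noncomputable def Fbar (F : ℝ → ℝ) (x : ℝ) : ℝ := 1 - F x

/-- `F` is the distribution function of a positive random variable: nondecreasing,
right-continuous, vanishing on `(-∞, 0]`, tending to `1` at `+∞`. -/
def IsCDF (F : ℝ → ℝ) : Prop :=
  Monotone F ∧ (∀ x, ContinuousWithinAt F (Set.Ici x) x) ∧
    (∀ x ≤ 0, F x = 0) ∧ Tendsto F atTop (𝓝 1)

/-- The convolution operator `(Bg)(t) = ∫₀ᵗ g(t-y) F̄(y) dy`. -/
noncomputable def Bop (F g : ℝ → ℝ) (t : ℝ) : ℝ :=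
  ∫ y in (0:ℝ)..t, g (t - y) * Fbar F y

/-- `g` is a continuous solution of the Volterra equation (★) on `[0, ∞)`. -/
def IsVolterraSol (γ α μ Φ₀ : ℝ) (F g : ℝ → ℝ) : Prop :=
  ContinuousOn g (Set.Ici 0) ∧
  ∀ u : ℝ, 0 < u → g u = μ * u ^ (-γ) * Real.exp (α / u) *
    ∫ t in (0:ℝ)..u, t ^ (γ - 2) * Real.exp (-α / t) * (Φ₀ * Fbar F t + Bop F g t)

noncomputable def Ee (α c : ℝ) (t : ℝ) : ℝ := if t ≤ 0 then 0 else t ^ c * Real.exp (-α / t)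

lemma Ee_nonneg (α c t : ℝ) : 0 ≤ Ee α c t := by
  unfold Ee; split
  · exact le_refl 0
  · have ht : (0:ℝ) < t := lt_of_not_ge (by assumption)
    positivity

lemma Ee_of_pos {α c t : ℝ} (ht : 0 < t) : Ee α c t = t ^ c * Real.exp (-α / t) := by
  simp [Ee, not_le.2 ht]

lemma Ee_tendsto_zero (hα : 0 < α) (c : ℝ) :
    Tendsto (fun t => t ^ c * Real.exp (-α / t)) (𝓝[>] (0:ℝ)) (𝓝 0) := by
  have h1 : Tendsto (fun s : ℝ => s ^ (-c) * Real.exp (-α * s)) atTop (𝓝 0) :=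
    tendsto_rpow_mul_exp_neg_mul_atTop_nhds_zero _ _ hα
  have h2 := h1.comp tendsto_inv_nhdsGT_zero
  refine h2.congr' ?_
  filter_upwards [self_mem_nhdsWithin] with t (ht : 0 < t)
  have h3 : (t⁻¹ : ℝ) ^ (-c) = t ^ c := by
    rw [Real.inv_rpow ht.le, ← Real.rpow_neg ht.le, neg_neg]
  simp only [Function.comp_apply, h3]
  ring_nf

lemma Ee_continuous (hα : 0 < α) (c : ℝ) : Continuous (Ee α c) := by
  rw [continuous_iff_continuousAt]
  intro x
  rcases lt_trichotomy x 0 with hx | hx | hx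
  · have h : Ee α c =ᶠ[𝓝 x] fun _ => 0 := by
      filter_upwards [Iio_mem_nhds hx] with y (hy : y < 0)
      simp [Ee, hy.le]
    exact continuousAt_const.congr h.symm
  · subst hx
    have h0 : Ee α c 0 = 0 := by simp [Ee]
    rw [ContinuousAt, h0]
    have : Tendsto (Ee α c) (𝓝[≤] (0:ℝ) ⊔ 𝓝[>] (0:ℝ)) (𝓝 0) := by
      rw [tendsto_sup]
      constructor
      · refine tendsto_const_nhds.congr' ?_
        filter_upwards [self_mem_nhdsWithin] with t (ht : t ≤ 0)
        simp [Ee, ht]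
      · refine (Ee_tendsto_zero hα c).congr' ?_
        filter_upwards [self_mem_nhdsWithin] with t (ht : 0 < t)
        simp [Ee, not_le.2 ht]
    rwa [nhdsLE_sup_nhdsGT] at this
  · have h : Ee α c =ᶠ[𝓝 x] fun t => t ^ c * Real.exp (-α / t) := by
      filter_upwards [Ioi_mem_nhds hx] with y (hy : 0 < y)
      simp [Ee, not_le.2 hy]
    refine ContinuousAt.congr ?_ h.symm
    exact (Real.continuousAt_rpow_const x c (Or.inl hx.ne')).mul
      (Real.continuous_exp.continuousAt.comp
        ((continuousAt_const.div continuousAt_id hx.ne')))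



lemma Ee_hasDerivAt (α : ℝ) (c : ℝ) {t : ℝ} (ht : 0 < t) :
    HasDerivAt (Ee α c) (c * Ee α (c-1) t + α * Ee α (c-2) t) t := by
  have hne : t ≠ 0 := ht.ne'
  have h1 : HasDerivAt (fun s : ℝ => s ^ c) (c * t ^ (c-1)) t := by
    simpa [mul_comm] using Real.hasDerivAt_rpow_const (p := c) (Or.inl hne)
  have h2 : HasDerivAt (fun s : ℝ => Real.exp (-α / s))
      (Real.exp (-α / t) * (α * (t^2)⁻¹)) t := by
    have h3 : HasDerivAt (fun s : ℝ => -α / s) (α * (t^2)⁻¹) t := by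
      have := (hasDerivAt_inv hne).const_mul (-α)
      simpa [div_eq_mul_inv, neg_mul, mul_comm] using this
    simpa using h3.exp
  have h4 := h1.mul h2
  have heq : Ee α c =ᶠ[𝓝 t] fun s : ℝ => s ^ c * Real.exp (-α / s) := by
    filter_upwards [Ioi_mem_nhds ht] with y (hy : 0 < y)
    exact Ee_of_pos hy
  refine HasDerivAt.congr_of_eventuallyEq ?_ heq
  refine h4.congr_deriv ?_
  rw [Ee_of_pos ht, Ee_of_pos ht]
  have e1 : t ^ (c-1) = t ^ c / t := by
    rw [Real.rpow_sub ht, Real.rpow_one]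
  have e2 : t ^ (c-2) = t ^ c / t^2 := by
    rw [Real.rpow_sub ht, Real.rpow_two]
  rw [e1, e2]
  field_simp

lemma Ee_FTC (α : ℝ) (hα : 0 < α) (c : ℝ) {u : ℝ} (hu : 0 < u) :
    ∫ t in (0:ℝ)..u, (c * Ee α (c-1) t + α * Ee α (c-2) t) = u ^ c * Real.exp (-α / u) := by
  have h : ∫ t in (0:ℝ)..u, (c * Ee α (c-1) t + α * Ee α (c-2) t) = Ee α c u - Ee α c 0 :=
    intervalIntegral.integral_eq_sub_of_hasDerivAt_of_le hu.le
      (Ee_continuous hα c).continuousOn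
      (fun x hx => Ee_hasDerivAt α c hx.1)
      (((continuous_const.mul (Ee_continuous hα (c-1))).add
        (continuous_const.mul (Ee_continuous hα (c-2)))).intervalIntegrable 0 u)
  rw [h, Ee_of_pos hu]
  simp [Ee]


lemma Ee_split {α : ℝ} (hα : 0 < α) (c : ℝ) {u : ℝ} (hu : 0 < u) :
    α * ∫ t in (0:ℝ)..u, Ee α (c-2) t
      = u ^ c * Real.exp (-α / u) - c * ∫ t in (0:ℝ)..u, Ee α (c-1) t := by
  have h := Ee_FTC α hα c hu
  rw [intervalIntegral.integral_add (f := fun t => c * Ee α (c-1) t) (g := fun t => α * Ee α (c-2) t)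
      ((continuous_const.mul (Ee_continuous hα (c-1))).intervalIntegrable 0 u)
      ((continuous_const.mul (Ee_continuous hα (c-2))).intervalIntegrable 0 u),
    intervalIntegral.integral_const_mul, intervalIntegral.integral_const_mul] at h
  linarith

lemma Ee_integral_nonneg {α : ℝ} (c : ℝ) {u : ℝ} (hu : 0 < u) :
    0 ≤ ∫ t in (0:ℝ)..u, Ee α c t :=
  intervalIntegral.integral_nonneg hu.le (fun t _ => Ee_nonneg α c t)

lemma Ee_integral_le2 {α : ℝ} (hα : 0 < α) {c : ℝ} (hc : 0 ≤ c) {u : ℝ} (hu : 0 < u) :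
    ∫ t in (0:ℝ)..u, Ee α (c-2) t ≤ u ^ c * Real.exp (-α / u) / α := by
  have h := Ee_split hα c hu
  have h2 : 0 ≤ c * ∫ t in (0:ℝ)..u, Ee α (c-1) t :=
    mul_nonneg hc (Ee_integral_nonneg _ hu)
  rw [le_div_iff₀ hα]
  nlinarith

lemma F_nonneg {F : ℝ → ℝ} (hF : IsCDF F) (x : ℝ) : 0 ≤ F x := by
  rcases le_or_gt x 0 with h | h
  · rw [hF.2.2.1 x h]
  · rw [← hF.2.2.1 0 le_rfl]; exact hF.1 h.le

lemma F_le_one {F : ℝ → ℝ} (hF : IsCDF F) (x : ℝ) : F x ≤ 1 :=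
  Monotone.ge_of_tendsto hF.1 hF.2.2.2 x

lemma Fbar_abs_le {F : ℝ → ℝ} (hF : IsCDF F) (x : ℝ) : |Fbar F x| ≤ 1 := by
  rw [abs_le, Fbar]
  constructor <;> nlinarith [F_nonneg hF x, F_le_one hF x]

lemma Fbar_intervalIntegrable {F : ℝ → ℝ} (hF : IsCDF F) (a b : ℝ) :
    IntervalIntegrable (Fbar F) volume a b := by
  have : Antitone (Fbar F) := fun x y hxy => by
    simp only [Fbar]; linarith [hF.1 hxy]
  exact this.intervalIntegrable

lemma Bop_integrand_II {F h : ℝ → ℝ} (hF : IsCDF F) (hc : Continuous h) (t : ℝ) :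
    IntervalIntegrable (fun y => h (t - y) * Fbar F y) volume 0 t :=
  (Fbar_intervalIntegrable hF 0 t).continuousOn_mul
    ((hc.comp (continuous_const.sub continuous_id)).continuousOn)

lemma Bop_abs_le {F h : ℝ → ℝ} (hF : IsCDF F) {M : ℝ} (hM : ∀ x, |h x| ≤ M)
    {t : ℝ} (ht : 0 ≤ t) : |Bop F h t| ≤ M * t := by
  have h1 : ∀ y ∈ Set.uIoc (0:ℝ) t, ‖h (t - y) * Fbar F y‖ ≤ M := by
    intro y _
    rw [norm_mul]
    calc ‖h (t-y)‖ * ‖Fbar F y‖ ≤ M * 1 :=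
          mul_le_mul (hM _) (Fbar_abs_le hF y) (abs_nonneg _) ((abs_nonneg _).trans (hM 0))
      _ = M := mul_one M
  have := intervalIntegral.norm_integral_le_of_norm_le_const h1
  rwa [sub_zero, abs_of_nonneg ht] at this

lemma Bop_sub {F h₁ h₂ : ℝ → ℝ} (hF : IsCDF F) (hc₁ : Continuous h₁) (hc₂ : Continuous h₂)
    (t : ℝ) : Bop F h₁ t - Bop F h₂ t = ∫ y in (0:ℝ)..t, (h₁ (t-y) - h₂ (t-y)) * Fbar F y := by
  rw [Bop, Bop, ← intervalIntegral.integral_sub (Bop_integrand_II hF hc₁ t)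
    (Bop_integrand_II hF hc₂ t)]
  congr 1; funext y; ring

lemma Bop_sub_abs_le {F h₁ h₂ : ℝ → ℝ} (hF : IsCDF F) (hc₁ : Continuous h₁)
    (hc₂ : Continuous h₂) {D : ℝ} (hD : ∀ x, |h₁ x - h₂ x| ≤ D) {t : ℝ} (ht : 0 ≤ t) :
    |Bop F h₁ t - Bop F h₂ t| ≤ D * t := by
  rw [Bop_sub hF hc₁ hc₂ t]
  have h1 : ∀ y ∈ Set.uIoc (0:ℝ) t, ‖(h₁ (t-y) - h₂ (t-y)) * Fbar F y‖ ≤ D := by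
    intro y _
    rw [norm_mul]
    calc ‖h₁ (t-y) - h₂ (t-y)‖ * ‖Fbar F y‖ ≤ D * 1 :=
          mul_le_mul (hD _) (Fbar_abs_le hF y) (abs_nonneg _) ((abs_nonneg _).trans (hD 0))
      _ = D := mul_one D
  have := intervalIntegral.norm_integral_le_of_norm_le_const h1
  rwa [sub_zero, abs_of_nonneg ht] at this

lemma Bop_measurable_aux {F h : ℝ → ℝ} (hF : IsCDF F) (hc : Continuous h) :
    ∃ B' : ℝ → ℝ, Measurable B' ∧ ∀ t, 0 ≤ t → Bop F h t = B' t := by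
  set f : ℝ → ℝ → ℝ := fun t y => if 0 < y ∧ y ≤ t then h (t - y) * Fbar F y else 0 with hf
  have hjm : StronglyMeasurable (Function.uncurry f) := by
    have : Function.uncurry f = ({q : ℝ × ℝ | 0 < q.2 ∧ q.2 ≤ q.1}).indicator
        (fun q => h (q.1 - q.2) * Fbar F q.2) := by
      funext p
      by_cases hp : 0 < p.2 ∧ p.2 ≤ p.1 <;>
        simp [Function.uncurry, hf, hp, Set.indicator, Set.mem_setOf_eq]
    rw [this]
    refine Measurable.stronglyMeasurable (Measurable.indicator ?_ ?_)
    · exact (hc.measurable.comp (measurable_fst.sub measurable_snd)).mul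
        (((measurable_const.sub hF.1.measurable)).comp measurable_snd)
    · exact (measurableSet_lt measurable_const measurable_snd).inter
        (measurableSet_le measurable_snd measurable_fst)
  refine ⟨fun t => ∫ y, f t y, hjm.integral_prod_right.measurable, ?_⟩
  intro t ht
  rw [Bop, intervalIntegral.integral_of_le ht, ← integral_indicator measurableSet_Ioc]
  congr 1
  funext y
  by_cases hy : 0 < y ∧ y ≤ t
  · rw [Set.indicator_of_mem (Set.mem_Ioc.2 hy), hf]; exact (if_pos hy).symm
  · rw [Set.indicator_of_notMem (fun hmem => hy (Set.mem_Ioc.1 hmem)), hf]; exact (if_neg hy).symm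

noncomputable def Tfun (γ α μ Φ₀ : ℝ) (F h : ℝ → ℝ) : ℝ → ℝ := fun u =>
  if u ≤ 0 then μ / α * Φ₀
  else μ * u ^ (-γ) * Real.exp (α / u) *
    ∫ t in (0:ℝ)..u, t ^ (γ - 2) * Real.exp (-α / t) * (Φ₀ * Fbar F t + Bop F h t)

section main
variable {γ α μ Φ₀ : ℝ} {F h : ℝ → ℝ} {u₀ M : ℝ}

lemma integrableOn_EepsiIcc (hγ : 1 < γ) (hα : 0 < α) (hF : IsCDF F)
    (hc : Continuous h) (hM : ∀ x, |h x| ≤ M) (hu₀ : 0 ≤ u₀) :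
    IntegrableOn (fun t => Ee α (γ-2) t * (Φ₀ * Fbar F t + Bop F h t)) (Icc 0 u₀) := by
  obtain ⟨B', hB'm, hB'eq⟩ := Bop_measurable_aux hF hc
  obtain ⟨CE, hCE⟩ := isCompact_Icc.exists_bound_of_continuousOn
    (Ee_continuous hα (γ-2)).continuousOn
  have hM0 : 0 ≤ M := (abs_nonneg _).trans (hM 0)
  have hG : IntegrableOn (fun t => Ee α (γ-2) t * (Φ₀ * Fbar F t + B' t)) (Icc 0 u₀) := by
    apply Measure.integrableOn_of_bounded (M := CE * (|Φ₀| + M * u₀))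
    · exact (measure_Icc_lt_top).ne
    · refine AEStronglyMeasurable.mul ?_ (AEStronglyMeasurable.add ?_ ?_)
      · exact (Ee_continuous hα (γ-2)).aestronglyMeasurable
      · exact ((measurable_const.mul
          (measurable_const.sub hF.1.measurable)).aestronglyMeasurable)
      · exact hB'm.aestronglyMeasurable
    · refine (ae_restrict_iff' measurableSet_Icc).2 (ae_of_all _ ?_)
      intro t ht
      rw [norm_mul]
      have h1 : ‖Ee α (γ-2) t‖ ≤ CE := hCE t ht
      have h2 : ‖Φ₀ * Fbar F t + B' t‖ ≤ |Φ₀| + M * u₀ := by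
        rw [← hB'eq t ht.1]
        refine (norm_add_le _ _).trans ?_
        rw [Real.norm_eq_abs, Real.norm_eq_abs, abs_mul]
        have := Bop_abs_le hF hM ht.1
        have h3 : |Φ₀| * |Fbar F t| ≤ |Φ₀| * 1 :=
          mul_le_mul_of_nonneg_left (Fbar_abs_le hF t) (abs_nonneg _)
        have h4 : M * t ≤ M * u₀ := mul_le_mul_of_nonneg_left ht.2 hM0
        linarith
      exact mul_le_mul h1 h2 (norm_nonneg _) ((norm_nonneg _).trans h1)
  refine hG.congr_fun (fun t ht => ?_) measurableSet_Icc
  rw [hB'eq t ht.1]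

lemma II_Eepsi (hγ : 1 < γ) (hα : 0 < α) (hF : IsCDF F)
    (hc : Continuous h) (hM : ∀ x, |h x| ≤ M) {u : ℝ} (hu : 0 ≤ u) (huu : u ≤ u₀) :
    IntervalIntegrable (fun t => Ee α (γ-2) t * (Φ₀ * Fbar F t + Bop F h t)) volume 0 u := by
  rw [intervalIntegrable_iff_integrableOn_Ioc_of_le hu]
  exact (integrableOn_EepsiIcc hγ hα hF hc hM (hu.trans huu)).mono_set
    (Ioc_subset_Icc_self.trans (Icc_subset_Icc le_rfl huu))

lemma Tfun_eq (hγ : 1 < γ) {u : ℝ} (hu : 0 < u) :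
    Tfun γ α μ Φ₀ F h u = μ * u ^ (-γ) * Real.exp (α / u) *
      ∫ t in (0:ℝ)..u, Ee α (γ-2) t * (Φ₀ * Fbar F t + Bop F h t) := by
  rw [Tfun, if_neg (not_le.2 hu)]
  congr 1
  rw [intervalIntegral.integral_of_le hu.le, intervalIntegral.integral_of_le hu.le]
  refine setIntegral_congr_fun measurableSet_Ioc (fun t ht => ?_)
  rw [Ee_of_pos ht.1]

lemma Tfun_zero : Tfun γ α μ Φ₀ F h 0 = μ / α * Φ₀ := by rw [Tfun, if_pos le_rfl]


lemma rpow_helper1 {u γ : ℝ} (hu : 0 < u) : u ^ (-γ) * u ^ (γ+1) = u := by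
  rw [← Real.rpow_add hu, show -γ + (γ+1) = 1 by ring, Real.rpow_one]

lemma rpow_helper2 {u γ : ℝ} (hu : 0 < u) : u ^ (-γ) * u ^ γ = 1 := by
  rw [← Real.rpow_add hu, neg_add_cancel, Real.rpow_zero]

lemma exp_helper {α u : ℝ} : Real.exp (α/u) * Real.exp (-α/u) = 1 := by
  rw [← Real.exp_add, neg_div, add_neg_cancel, Real.exp_zero]

lemma Tfun_contraction {M₁ M₂ : ℝ} {h₁ h₂ : ℝ → ℝ} (hγ : 1 < γ) (hα : 0 < α) (hμ : 0 < μ)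
    (hF : IsCDF F) (hc₁ : Continuous h₁) (hc₂ : Continuous h₂)
    (hM₁ : ∀ x, |h₁ x| ≤ M₁) (hM₂ : ∀ x, |h₂ x| ≤ M₂)
    {D : ℝ} (hD : ∀ x, |h₁ x - h₂ x| ≤ D) {u : ℝ} (hu : 0 < u) (huu : u ≤ u₀) :
    |Tfun γ α μ Φ₀ F h₁ u - Tfun γ α μ Φ₀ F h₂ u| ≤ μ * u / α * D := by
  have hD0 : 0 ≤ D := (abs_nonneg _).trans (hD 0)
  have hint1 := II_Eepsi (Φ₀ := Φ₀) (u₀ := u₀) hγ hα hF hc₁ hM₁ hu.le huu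
  have hint2 := II_Eepsi (Φ₀ := Φ₀) (u₀ := u₀) hγ hα hF hc₂ hM₂ hu.le huu
  have hsub : Tfun γ α μ Φ₀ F h₁ u - Tfun γ α μ Φ₀ F h₂ u
      = μ * u ^ (-γ) * Real.exp (α / u) *
        ∫ t in (0:ℝ)..u, Ee α (γ-2) t * (Bop F h₁ t - Bop F h₂ t) := by
    rw [Tfun_eq hγ hu, Tfun_eq hγ hu, ← mul_sub,
      ← intervalIntegral.integral_sub hint1 hint2]
    congr 1
    refine intervalIntegral.integral_congr fun t _ => ?_
    ring
  have hptw : ∀ᵐ t ∂(volume.restrict (Set.uIoc (0:ℝ) u)),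
      ‖Ee α (γ-2) t * (Bop F h₁ t - Bop F h₂ t)‖ ≤ D * Ee α (γ-1) t := by
    refine ae_restrict_iff' measurableSet_uIoc |>.2 (ae_of_all _ ?_)
    intro t ht
    rw [Set.uIoc_of_le hu.le] at ht
    rw [Real.norm_eq_abs, abs_mul, abs_of_nonneg (Ee_nonneg _ _ _)]
    calc Ee α (γ-2) t * |Bop F h₁ t - Bop F h₂ t|
        ≤ Ee α (γ-2) t * (D * t) := by
          exact mul_le_mul_of_nonneg_left
            (Bop_sub_abs_le hF hc₁ hc₂ hD ht.1.le) (Ee_nonneg _ _ _)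
      _ = D * Ee α (γ-1) t := by
          rw [Ee_of_pos ht.1, Ee_of_pos ht.1,
            show γ - 1 = (γ-2) + 1 by ring, Real.rpow_add_one ht.1.ne']
          ring
  have habs : |∫ t in (0:ℝ)..u, Ee α (γ-2) t * (Bop F h₁ t - Bop F h₂ t)|
      ≤ ∫ t in (0:ℝ)..u, D * Ee α (γ-1) t := by
    have := intervalIntegral.norm_integral_le_abs_of_norm_le hptw
      ((continuous_const.mul (Ee_continuous hα (γ-1))).intervalIntegrable 0 u)
    rwa [Real.norm_eq_abs, abs_of_nonneg (intervalIntegral.integral_nonneg hu.le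
      (fun t _ => mul_nonneg hD0 (Ee_nonneg _ _ _)))] at this
  have habs2 : ∫ t in (0:ℝ)..u, D * Ee α (γ-1) t
      ≤ D * (u ^ (γ+1) * Real.exp (-α/u) / α) := by
    rw [intervalIntegral.integral_const_mul]
    refine mul_le_mul_of_nonneg_left ?_ hD0
    rw [show γ - 1 = (γ+1) - 2 by ring]
    exact Ee_integral_le2 hα (by linarith) hu
  have hpref : (0:ℝ) < μ * u ^ (-γ) * Real.exp (α / u) := by positivity
  rw [hsub, abs_mul, abs_of_pos hpref]
  calc μ * u ^ (-γ) * Real.exp (α / u) * |∫ t in (0:ℝ)..u, Ee α (γ-2) t * (Bop F h₁ t - Bop F h₂ t)|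
      ≤ μ * u ^ (-γ) * Real.exp (α / u) * (D * (u ^ (γ+1) * Real.exp (-α/u) / α)) :=
        mul_le_mul_of_nonneg_left (habs.trans habs2) hpref.le
    _ = μ * u / α * D := by
        linear_combination (μ*D/α * Real.exp (α/u) * Real.exp (-α/u)) * rpow_helper1 (γ := γ) hu
          + (μ*D*u/α) * exp_helper (α := α) (u := u)

end main

section main
variable {γ α μ Φ₀ : ℝ} {F h : ℝ → ℝ} {u₀ M : ℝ}

lemma Tfun_near_zero (hγ : 1 < γ) (hα : 0 < α) (hμ : 0 < μ) (hΦ₀ : 0 < Φ₀)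
    (hF : IsCDF F) (hc : Continuous h) (hM : ∀ x, |h x| ≤ M)
    {u : ℝ} (hu : 0 < u) (huu : u ≤ u₀) :
    |Tfun γ α μ Φ₀ F h u - μ / α * Φ₀|
      ≤ μ*Φ₀*γ*u/(α*α) + μ*M*u/α + μ*Φ₀*(F u)/α := by
  have hM0 : 0 ≤ M := (abs_nonneg _).trans (hM 0)
  have hFu0 : 0 ≤ F u := F_nonneg hF u
  set I := ∫ t in (0:ℝ)..u, Ee α (γ-2) t with hI
  set J := ∫ t in (0:ℝ)..u, Ee α (γ-1) t with hJ
  have hsplit : α * I = u ^ γ * Real.exp (-α/u) - γ * J := Ee_split hα γ hu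
  have hJle : J ≤ u ^ (γ+1) * Real.exp (-α/u) / α := by
    rw [hJ, show γ - 1 = (γ+1) - 2 by ring]
    exact Ee_integral_le2 hα (by linarith) hu
  have hIle : I ≤ u ^ γ * Real.exp (-α/u) / α := by
    rw [hI, show γ - 2 = γ - 2 by ring]
    exact Ee_integral_le2 hα (by linarith) hu
  have hJ0 : 0 ≤ J := Ee_integral_nonneg _ hu
  have hI0 : 0 ≤ I := Ee_integral_nonneg _ hu
  have hint := II_Eepsi (Φ₀ := Φ₀) (u₀ := u₀) hγ hα hF hc hM hu.le huu
  set R := ∫ t in (0:ℝ)..u,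
    (Ee α (γ-2) t * (Φ₀ * Fbar F t + Bop F h t) - Φ₀ * Ee α (γ-2) t) with hR
  have hRrepr : ∫ t in (0:ℝ)..u, Ee α (γ-2) t * (Φ₀ * Fbar F t + Bop F h t)
      = Φ₀ * I + R := by
    rw [hR, intervalIntegral.integral_sub (g := fun t => Φ₀ * Ee α (γ-2) t) hint
      ((continuous_const.mul (Ee_continuous hα (γ-2))).intervalIntegrable 0 u),
      intervalIntegral.integral_const_mul, hI]
    ring
  have hRabs : |R| ≤ M * J + Φ₀ * F u * I := by
    have hptw : ∀ᵐ t ∂(volume.restrict (Set.uIoc (0:ℝ) u)),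
        ‖Ee α (γ-2) t * (Φ₀ * Fbar F t + Bop F h t) - Φ₀ * Ee α (γ-2) t‖
          ≤ M * Ee α (γ-1) t + Φ₀ * F u * Ee α (γ-2) t := by
      refine ae_restrict_iff' measurableSet_uIoc |>.2 (ae_of_all _ ?_)
      intro t ht
      rw [Set.uIoc_of_le hu.le] at ht
      have e1 : Ee α (γ-2) t * (Φ₀ * Fbar F t + Bop F h t) - Φ₀ * Ee α (γ-2) t
          = Ee α (γ-2) t * (Bop F h t - Φ₀ * F t) := by
        rw [Fbar]; ring
      rw [e1, Real.norm_eq_abs, abs_mul, abs_of_nonneg (Ee_nonneg _ _ _)]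
      have e2 : |Bop F h t - Φ₀ * F t| ≤ M * t + Φ₀ * F u := by
        have b1 := Bop_abs_le hF hM ht.1.le
        have b2 : |Φ₀ * F t| ≤ Φ₀ * F u := by
          rw [abs_mul, abs_of_pos hΦ₀, abs_of_nonneg (F_nonneg hF t)]
          exact mul_le_mul_of_nonneg_left (hF.1 ht.2) hΦ₀.le
        calc |Bop F h t - Φ₀ * F t| ≤ |Bop F h t| + |Φ₀ * F t| := abs_sub _ _
          _ ≤ M * t + Φ₀ * F u := add_le_add b1 b2
      calc Ee α (γ-2) t * |Bop F h t - Φ₀ * F t|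
          ≤ Ee α (γ-2) t * (M * t + Φ₀ * F u) :=
            mul_le_mul_of_nonneg_left e2 (Ee_nonneg _ _ _)
        _ = M * Ee α (γ-1) t + Φ₀ * F u * Ee α (γ-2) t := by
            rw [Ee_of_pos ht.1, Ee_of_pos ht.1,
              show γ - 1 = (γ-2) + 1 by ring, Real.rpow_add_one ht.1.ne']
            ring
    have hbint : IntervalIntegrable
        (fun t => M * Ee α (γ-1) t + Φ₀ * F u * Ee α (γ-2) t) volume 0 u :=
      ((continuous_const.mul (Ee_continuous hα (γ-1))).add
        (continuous_const.mul (Ee_continuous hα (γ-2)))).intervalIntegrable 0 u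
    have := intervalIntegral.norm_integral_le_abs_of_norm_le hptw hbint
    rw [Real.norm_eq_abs, abs_of_nonneg (intervalIntegral.integral_nonneg hu.le
      (fun t _ => add_nonneg (mul_nonneg hM0 (Ee_nonneg _ _ _))
        (mul_nonneg (mul_nonneg hΦ₀.le hFu0) (Ee_nonneg _ _ _))))] at this
    rwa [intervalIntegral.integral_add (f := fun t => M * Ee α (γ-1) t) (g := fun t => Φ₀ * F u * Ee α (γ-2) t)
        ((continuous_const.mul (Ee_continuous hα (γ-1))).intervalIntegrable 0 u)
        ((continuous_const.mul (Ee_continuous hα (γ-2))).intervalIntegrable 0 u),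
      intervalIntegral.integral_const_mul, intervalIntegral.integral_const_mul] at this
  set P := u ^ (-γ) * Real.exp (α/u) with hP
  have hPpos : 0 < P := by rw [hP]; positivity
  have hmain : Tfun γ α μ Φ₀ F h u - μ / α * Φ₀
      = μ * P * R - (μ * Φ₀ * γ / α) * (P * J) := by
    rw [Tfun_eq hγ hu, hRrepr, hP]
    have hαinv : α * α⁻¹ = 1 := mul_inv_cancel₀ hα.ne'
    linear_combination (μ * u ^ (-γ) * Real.exp (α/u) * Φ₀ / α) * hsplit
      + (μ * Φ₀ / α * Real.exp (α/u) * Real.exp (-α/u)) * rpow_helper2 (γ := γ) hu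
      + (μ * Φ₀ / α) * exp_helper (α := α) (u := u)
      + (-(μ * u ^ (-γ) * Real.exp (α/u) * Φ₀ * I)) * hαinv
  have q1 : P * J ≤ u / α := by
    calc P * J ≤ P * (u ^ (γ+1) * Real.exp (-α/u) / α) :=
          mul_le_mul_of_nonneg_left hJle hPpos.le
      _ = u / α := by
          rw [hP]
          linear_combination (Real.exp (α/u) * Real.exp (-α/u) / α) * rpow_helper1 (γ := γ) hu
            + (u / α) * exp_helper (α := α) (u := u)
  have q2 : P * I ≤ 1 / α := by
    calc P * I ≤ P * (u ^ γ * Real.exp (-α/u) / α) :=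
          mul_le_mul_of_nonneg_left hIle hPpos.le
      _ = 1 / α := by
          rw [hP]
          linear_combination (Real.exp (α/u) * Real.exp (-α/u) / α) * rpow_helper2 (γ := γ) hu
            + (1 / α) * exp_helper (α := α) (u := u)
  rw [hmain]
  have r1 : μ * M * (P * J) ≤ μ * M * (u / α) :=
    mul_le_mul_of_nonneg_left q1 (by positivity)
  have r2 : μ * (Φ₀ * F u) * (P * I) ≤ μ * (Φ₀ * F u) * (1 / α) :=
    mul_le_mul_of_nonneg_left q2 (by positivity)
  have r3 : (μ * Φ₀ * γ / α) * (P * J) ≤ (μ * Φ₀ * γ / α) * (u / α) :=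
    mul_le_mul_of_nonneg_left q1 (by positivity)
  calc |μ * P * R - (μ * Φ₀ * γ / α) * (P * J)|
      ≤ |μ * P * R| + |(μ * Φ₀ * γ / α) * (P * J)| := abs_sub _ _
    _ = μ * P * |R| + (μ * Φ₀ * γ / α) * (P * J) := by
        rw [abs_mul, abs_of_nonneg (by positivity : (0:ℝ) ≤ μ * P),
          abs_of_nonneg (by positivity : (0:ℝ) ≤ (μ * Φ₀ * γ / α) * (P * J))]
    _ ≤ μ * P * (M * J + Φ₀ * F u * I) + (μ * Φ₀ * γ / α) * (P * J) := by
        have := mul_le_mul_of_nonneg_left hRabs (by positivity : (0:ℝ) ≤ μ * P)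
        linarith
    _ ≤ μ*Φ₀*γ*u/(α*α) + μ*M*u/α + μ*Φ₀*(F u)/α := by
        have e3 : μ * P * (M * J + Φ₀ * F u * I)
            = μ * M * (P * J) + μ * (Φ₀ * F u) * (P * I) := by ring
        rw [e3]
        calc μ * M * (P * J) + μ * (Φ₀ * F u) * (P * I) + μ * Φ₀ * γ / α * (P * J)
            ≤ μ * M * (u/α) + μ * (Φ₀ * F u) * (1/α) + μ * Φ₀ * γ / α * (u/α) := by
              linarith
          _ = μ*Φ₀*γ*u/(α*α) + μ*M*u/α + μ*Φ₀*(F u)/α := by ring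
end main

section main
variable {γ α μ Φ₀ : ℝ} {F h : ℝ → ℝ} {u₀ M : ℝ}

lemma Tfun_continuousOn (hγ : 1 < γ) (hα : 0 < α) (hμ : 0 < μ) (hΦ₀ : 0 < Φ₀)
    (hF : IsCDF F) (hc : Continuous h) (hM : ∀ x, |h x| ≤ M) (hu₀ : 0 < u₀) :
    ContinuousOn (Tfun γ α μ Φ₀ F h) (Icc 0 u₀) := by
  intro u hu
  rcases eq_or_lt_of_le hu.1 with h0 | hpos
  · -- at zero
    have h0' : u = 0 := h0.symm
    subst h0'
    rw [ContinuousWithinAt, Tfun_zero]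
    rw [tendsto_iff_dist_tendsto_zero]
    set β : ℝ → ℝ := fun x => (μ*Φ₀*γ/(α*α)) * x + (μ*M/α) * x + (μ*Φ₀/α) * F x with hβ
    have hb : ∀ x ∈ Icc (0:ℝ) u₀, dist (Tfun γ α μ Φ₀ F h x) (μ / α * Φ₀) ≤ β x := by
      intro x hx
      rcases eq_or_lt_of_le hx.1 with hx0 | hx0
      · rw [← hx0, Tfun_zero, dist_self, hβ]
        have : F 0 = 0 := hF.2.2.1 0 le_rfl
        simp [this]
      · rw [Real.dist_eq]
        calc |Tfun γ α μ Φ₀ F h x - μ / α * Φ₀|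
            ≤ μ*Φ₀*γ*x/(α*α) + μ*M*x/α + μ*Φ₀*(F x)/α :=
              Tfun_near_zero hγ hα hμ hΦ₀ hF hc hM hx0 hx.2
          _ = β x := by rw [hβ]; ring
    have hFt : Tendsto F (𝓝[Icc (0:ℝ) u₀] 0) (𝓝 0) := by
      have h1 := hF.2.1 0
      rw [ContinuousWithinAt, hF.2.2.1 0 le_rfl] at h1
      exact h1.mono_left (nhdsWithin_mono 0 Icc_subset_Ici_self)
    have hid : Tendsto (fun x : ℝ => x) (𝓝[Icc (0:ℝ) u₀] 0) (𝓝 0) :=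
      Filter.Tendsto.mono_left tendsto_id nhdsWithin_le_nhds
    have hβt : Tendsto β (𝓝[Icc (0:ℝ) u₀] 0) (𝓝 0) := by
      have := ((hid.const_mul (μ*Φ₀*γ/(α*α))).add (hid.const_mul (μ*M/α))).add
        (hFt.const_mul (μ*Φ₀/α))
      simpa using this
    refine squeeze_zero' ?_ ?_ hβt
    · filter_upwards with x using dist_nonneg
    · filter_upwards [self_mem_nhdsWithin] with x hx using hb x hx
  · -- positive
    have hP := intervalIntegral.continuousOn_primitive (μ := volume)
      (integrableOn_EepsiIcc (Φ₀ := Φ₀) hγ hα hF hc hM hu₀.le)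
    have hcw : ContinuousWithinAt (fun v : ℝ => μ * v ^ (-γ) * Real.exp (α / v) *
        ∫ t in Ioc (0:ℝ) v, Ee α (γ-2) t * (Φ₀ * Fbar F t + Bop F h t))
        (Icc 0 u₀) u := by
      refine ContinuousWithinAt.mul (ContinuousWithinAt.mul
        (ContinuousWithinAt.mul continuousWithinAt_const ?_) ?_) (hP u hu)
      · exact (Real.continuousAt_rpow_const u (-γ) (Or.inl hpos.ne')).continuousWithinAt
      · exact (Real.continuous_exp.continuousAt.comp
          (continuousAt_const.div continuousAt_id hpos.ne')).continuousWithinAt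
    refine hcw.congr_of_eventuallyEq ?_ ?_
    · filter_upwards [eventually_nhdsWithin_of_eventually_nhds
        (eventually_gt_nhds hpos)] with v (hv : 0 < v)
      rw [Tfun_eq hγ hv, intervalIntegral.integral_of_le hv.le]
    · rw [Tfun_eq hγ hpos, intervalIntegral.integral_of_le hpos.le]

end main

section glue
variable {γ α μ Φ₀ : ℝ} {F : ℝ → ℝ} {u₀ : ℝ}

lemma Bop_congr {F h₁ h₂ : ℝ → ℝ} {u₀ : ℝ} (heq : EqOn h₁ h₂ (Icc 0 u₀)) {t : ℝ}
    (ht : t ∈ Icc 0 u₀) : Bop F h₁ t = Bop F h₂ t := by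
  refine intervalIntegral.integral_congr fun y hy => ?_
  rw [uIcc_of_le ht.1] at hy
  have hmem : t - y ∈ Icc 0 u₀ := ⟨sub_nonneg.2 hy.2, by
    have := hy.1; have := ht.2; linarith⟩
  rw [heq hmem]

lemma Volterra_congr {h₁ h₂ : ℝ → ℝ} (heq : EqOn h₁ h₂ (Icc 0 u₀)) {u : ℝ}
    (hu : u ∈ Icc 0 u₀) :
    (∫ t in (0:ℝ)..u, t ^ (γ - 2) * Real.exp (-α / t) * (Φ₀ * Fbar F t + Bop F h₁ t))
      = ∫ t in (0:ℝ)..u, t ^ (γ - 2) * Real.exp (-α / t) * (Φ₀ * Fbar F t + Bop F h₂ t) := by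
  refine intervalIntegral.integral_congr fun t htt => ?_
  rw [uIcc_of_le hu.1] at htt
  rw [Bop_congr (F := F) heq ⟨htt.1, htt.2.trans hu.2⟩]

lemma sol_at_zero (hγ : 1 < γ) (hα : 0 < α) (hμ : 0 < μ) (hΦ₀ : 0 < Φ₀) (hF : IsCDF F)
    (hu₀ : 0 < u₀) (g : ℝ → ℝ) (hcont : ContinuousOn g (Icc 0 u₀))
    (heqn : ∀ u ∈ Ioc (0:ℝ) u₀, g u = μ * u ^ (-γ) * Real.exp (α / u) *
      ∫ t in (0:ℝ)..u, t ^ (γ - 2) * Real.exp (-α / t) * (Φ₀ * Fbar F t + Bop F g t)) :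
    g 0 = μ / α * Φ₀ := by
  set h : ℝ → ℝ := fun x => g ((projIcc 0 u₀ hu₀.le x : Icc (0:ℝ) u₀) : ℝ) with hh
  have hc : Continuous h := hcont.restrict.comp continuous_projIcc
  have heqOn : EqOn h g (Icc 0 u₀) := fun x hx => by
    rw [hh]; simp only [projIcc_of_mem hu₀.le hx]
  obtain ⟨M, hM⟩ := isCompact_Icc.exists_bound_of_continuousOn hcont
  have hMh : ∀ x, |h x| ≤ M := fun x => by
    rw [hh, ← Real.norm_eq_abs]
    exact hM _ (projIcc 0 u₀ hu₀.le x).2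
  have hTg : ∀ u ∈ Ioc (0:ℝ) u₀, Tfun γ α μ Φ₀ F h u = g u := by
    intro u hu
    rw [Tfun, if_neg (not_le.2 hu.1), heqn u hu]
    congr 1
    exact Volterra_congr heqOn ⟨hu.1.le, hu.2⟩
  have hne : (𝓝[Ioc (0:ℝ) u₀] (0:ℝ)).NeBot := by
    rw [← mem_closure_iff_nhdsWithin_neBot, closure_Ioc hu₀.ne]
    exact ⟨le_rfl, hu₀.le⟩
  have h1 : Tendsto g (𝓝[Ioc (0:ℝ) u₀] 0) (𝓝 (g 0)) :=
    (hcont 0 ⟨le_rfl, hu₀.le⟩).mono_left (nhdsWithin_mono 0 Ioc_subset_Icc_self)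
  have h2 : Tendsto g (𝓝[Ioc (0:ℝ) u₀] 0) (𝓝 (μ / α * Φ₀)) := by
    have hTc : ContinuousWithinAt (Tfun γ α μ Φ₀ F h) (Icc 0 u₀) 0 :=
      Tfun_continuousOn hγ hα hμ hΦ₀ hF hc hMh hu₀ 0 ⟨le_rfl, hu₀.le⟩
    rw [ContinuousWithinAt, Tfun_zero] at hTc
    refine (hTc.mono_left (nhdsWithin_mono 0 Ioc_subset_Icc_self)).congr' ?_
    filter_upwards [self_mem_nhdsWithin] with v hv using hTg v hv
  exact tendsto_nhds_unique h1 h2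

lemma main_aux (hγ : 1 < γ) (hα : 0 < α) (hμ : 0 < μ) (hF : IsCDF F) (hΦ₀ : 0 < Φ₀)
    (hu₀ : 0 < u₀) (hhalf : μ * u₀ / α ≤ 1/2) :
    ∃! g : ℝ → ℝ, (∀ x ∉ Set.Icc (0:ℝ) u₀, g x = 0) ∧
      ContinuousOn g (Set.Icc 0 u₀) ∧
      ∀ u ∈ Set.Ioc (0:ℝ) u₀, g u = μ * u ^ (-γ) * Real.exp (α / u) *
        ∫ t in (0:ℝ)..u, t ^ (γ - 2) * Real.exp (-α / t) * (Φ₀ * Fbar F t + Bop F g t) := by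
  have hextc : ∀ g : C(Icc (0:ℝ) u₀, ℝ), Continuous
      (fun x : ℝ => g (projIcc 0 u₀ hu₀.le x)) :=
    fun g => g.continuous.comp continuous_projIcc
  have hextb : ∀ g : C(Icc (0:ℝ) u₀, ℝ), ∀ x : ℝ, |g (projIcc 0 u₀ hu₀.le x)| ≤ ‖g‖ :=
    fun g x => by rw [← Real.norm_eq_abs]; exact g.norm_coe_le_norm _
  set T : C(Icc (0:ℝ) u₀, ℝ) → C(Icc (0:ℝ) u₀, ℝ) := fun g =>
    ⟨(Icc (0:ℝ) u₀).restrict (Tfun γ α μ Φ₀ F (fun x => g (projIcc 0 u₀ hu₀.le x))),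
     (Tfun_continuousOn hγ hα hμ hΦ₀ hF (hextc g) (hextb g) hu₀).restrict⟩ with hT
  have hcontr : ContractingWith (1/2 : NNReal) T := by
    constructor
    · rw [← NNReal.coe_lt_coe]; norm_num
    · refine LipschitzWith.of_dist_le_mul fun g₁ g₂ => ?_
      have hhalfc : ((1/2 : NNReal) : ℝ) = 1/2 := by norm_num
      rw [hhalfc]
      refine (ContinuousMap.dist_le (by positivity)).2 fun x => ?_
      have hD : ∀ y : ℝ, |g₁ (projIcc 0 u₀ hu₀.le y) - g₂ (projIcc 0 u₀ hu₀.le y)|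
          ≤ dist g₁ g₂ := fun y => by
        rw [← Real.dist_eq]; exact ContinuousMap.dist_apply_le_dist _
      show dist (Tfun γ α μ Φ₀ F _ (x:ℝ)) (Tfun γ α μ Φ₀ F _ (x:ℝ)) ≤ _
      rcases eq_or_lt_of_le x.2.1 with h0 | h0
      · rw [show (x:ℝ) = 0 from h0.symm, Tfun_zero, Tfun_zero, dist_self]
        positivity
      · rw [Real.dist_eq]
        calc |Tfun γ α μ Φ₀ F _ (x:ℝ) - Tfun γ α μ Φ₀ F _ (x:ℝ)|
            ≤ μ * (x:ℝ) / α * dist g₁ g₂ :=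
              Tfun_contraction (u₀ := u₀) hγ hα hμ hF (hextc g₁) (hextc g₂)
                (hextb g₁) (hextb g₂) hD h0 x.2.2
          _ ≤ 1/2 * dist g₁ g₂ := by
              refine mul_le_mul_of_nonneg_right ?_ dist_nonneg
              refine le_trans ?_ hhalf
              gcongr
              exact x.2.2
  set gs := ContractingWith.fixedPoint T hcontr with hgs
  have hfix : T gs = gs := hcontr.fixedPoint_isFixedPt
  set gsol : ℝ → ℝ := fun x => if hx : x ∈ Icc (0:ℝ) u₀ then gs ⟨x, hx⟩ else 0 with hgsol
  have hout : ∀ x ∉ Icc (0:ℝ) u₀, gsol x = 0 := fun x hx => dif_neg hx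
  have heqext : EqOn (fun x : ℝ => gs (projIcc 0 u₀ hu₀.le x)) gsol (Icc 0 u₀) := by
    intro x hx
    simp only [hgsol, dif_pos hx, projIcc_of_mem hu₀.le hx]
  have hcontOn : ContinuousOn gsol (Icc 0 u₀) :=
    ((hextc gs).continuousOn).congr heqext.symm
  have heqn : ∀ u ∈ Ioc (0:ℝ) u₀, gsol u = μ * u ^ (-γ) * Real.exp (α / u) *
      ∫ t in (0:ℝ)..u, t ^ (γ - 2) * Real.exp (-α / t) * (Φ₀ * Fbar F t + Bop F gsol t) := by
    intro u hu
    have hmem : u ∈ Icc (0:ℝ) u₀ := ⟨hu.1.le, hu.2⟩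
    have h1 : gsol u = gs ⟨u, hmem⟩ := dif_pos hmem
    have h2 : gs ⟨u, hmem⟩ = (T gs) ⟨u, hmem⟩ := by rw [hfix]
    have h3 : (T gs) ⟨u, hmem⟩
        = Tfun γ α μ Φ₀ F (fun x => gs (projIcc 0 u₀ hu₀.le x)) u := rfl
    rw [h1, h2, h3, Tfun, if_neg (not_le.2 hu.1)]
    congr 1
    exact Volterra_congr heqext hmem
  refine ⟨gsol, ⟨hout, hcontOn, heqn⟩, fun g hg => ?_⟩
  obtain ⟨hg0, hgc, hge⟩ := hg
  have hat0 : g 0 = μ / α * Φ₀ := sol_at_zero hγ hα hμ hΦ₀ hF hu₀ g hgc hge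
  set gX : C(Icc (0:ℝ) u₀, ℝ) := ⟨(Icc (0:ℝ) u₀).restrict g, hgc.restrict⟩ with hgX
  have hXeq : EqOn (fun x : ℝ => gX (projIcc 0 u₀ hu₀.le x)) g (Icc 0 u₀) := by
    intro x hx
    simp only [hgX, projIcc_of_mem hu₀.le hx]
    rfl
  have hfixX : T gX = gX := by
    ext x
    show Tfun γ α μ Φ₀ F _ (x:ℝ) = g (x:ℝ)
    rcases eq_or_lt_of_le x.2.1 with h0 | h0
    · rw [show (x:ℝ) = 0 from h0.symm, Tfun_zero, hat0]
    · rw [Tfun, if_neg (not_le.2 h0), hge (x:ℝ) ⟨h0, x.2.2⟩]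
      congr 1
      exact Volterra_congr hXeq ⟨x.2.1, x.2.2⟩
  have hgXgs : gX = gs := hcontr.fixedPoint_unique hfixX
  funext x
  by_cases hx : x ∈ Icc (0:ℝ) u₀
  · have e1 : g x = gX ⟨x, hx⟩ := rfl
    rw [e1, hgXgs]
    simp only [hgsol, dif_pos hx]
  · rw [hg0 x hx, hout x hx]

end glue

theorem stmt1 (γ α μ : ℝ) (hγ : 1 < γ) (hα : 0 < α) (hμ : 0 < μ)
    (F : ℝ → ℝ) (hF : IsCDF F) (Φ₀ : ℝ) (hΦ₀ : 0 < Φ₀) :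
    ∃ u₀ : ℝ, 0 < u₀ ∧
      (∃! g : ℝ → ℝ, (∀ x ∉ Set.Icc (0:ℝ) u₀, g x = 0) ∧
        ContinuousOn g (Set.Icc 0 u₀) ∧
        ∀ u ∈ Set.Ioc (0:ℝ) u₀, g u = μ * u ^ (-γ) * Real.exp (α / u) *
          ∫ t in (0:ℝ)..u, t ^ (γ - 2) * Real.exp (-α / t) * (Φ₀ * Fbar F t + Bop F g t)) ∧
      ∀ g : ℝ → ℝ, ((∀ x ∉ Set.Icc (0:ℝ) u₀, g x = 0) ∧
        ContinuousOn g (Set.Icc 0 u₀) ∧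
        ∀ u ∈ Set.Ioc (0:ℝ) u₀, g u = μ * u ^ (-γ) * Real.exp (α / u) *
          ∫ t in (0:ℝ)..u, t ^ (γ - 2) * Real.exp (-α / t) * (Φ₀ * Fbar F t + Bop F g t)) →
        g 0 = μ / α * Φ₀ := by
  refine ⟨α/(2*μ), by positivity, main_aux hγ hα hμ hF hΦ₀ (by positivity) ?_,
    fun g hg => sol_at_zero hγ hα hμ hΦ₀ hF (by positivity) g hg.2.1 hg.2.2⟩
  have : μ * (α/(2*μ)) / α = 1/2 := by field_simp
  rw [this]
end

section
/- Uniform boundedness (Lemma 2): suppose ε ∈ (0,1) and C₀ > 0 satisfy F̄(z) ≤ C₀ z^{−ε} for all z > 0, and let g be a continuous solution of the Volterra equation (★) on [0, ∞). Then g is uniformly bounded: sup_{u ≥ 0} |g(u)| < ∞. -/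
open MeasureTheory Filter Set Topology

lemma exp_neg_le_inv' {x : ℝ} (hx : 0 < x) : Real.exp (-x) ≤ 1 / x := by
  rw [Real.exp_neg, one_div]
  exact inv_anti₀ hx (by linarith [Real.add_one_le_exp x])

lemma inner_bound (F g : ℝ → ℝ) (C₀ ε M u t : ℝ) (hC₀ : 0 < C₀)
    (hε0 : 0 < ε) (hε1 : ε < 1)
    (hFb : ∀ y, 0 ≤ Fbar F y)
    (htail : ∀ z : ℝ, 0 < z → Fbar F z ≤ C₀ * z ^ (-ε))
    (hM : 0 ≤ M) (ht0 : 0 < t) (htu : t ≤ u)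
    (hgM : ∀ v ∈ Set.Icc 0 u, |g v| ≤ M) :
    |Bop F g t| ≤ M * C₀ / (1 - ε) * t ^ (1 - ε) := by
  have h1 : Bop F g t = ∫ y in Set.Ioc 0 t, g (t - y) * Fbar F y := by
    rw [Bop, intervalIntegral.integral_of_le ht0.le]
  have hdom : Integrable (fun y => M * C₀ * y ^ (-ε)) (volume.restrict (Set.Ioc 0 t)) := by
    have h := (intervalIntegral.intervalIntegrable_rpow' (a := 0) (b := t) (r := -ε)
      (by linarith)).1
    exact h.const_mul _
  have key : |∫ y in Set.Ioc 0 t, g (t - y) * Fbar F y|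
      ≤ ∫ y in Set.Ioc 0 t, M * C₀ * y ^ (-ε) := by
    calc |∫ y in Set.Ioc 0 t, g (t - y) * Fbar F y|
        ≤ ∫ y in Set.Ioc 0 t, |g (t - y) * Fbar F y| := by
          simpa only [Real.norm_eq_abs] using
            MeasureTheory.norm_integral_le_integral_norm
              (μ := volume.restrict (Set.Ioc 0 t)) (fun y => g (t - y) * Fbar F y)
      _ ≤ ∫ y in Set.Ioc 0 t, M * C₀ * y ^ (-ε) := by
          apply integral_mono_of_nonneg
          · exact Filter.Eventually.of_forall fun y => abs_nonneg _
          · exact hdom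
          · rw [Filter.EventuallyLE, ae_restrict_iff' measurableSet_Ioc]
            refine Filter.Eventually.of_forall fun y hy => ?_
            have hy0 := hy.1
            have hyt := hy.2
            have h2 : |g (t - y)| ≤ M := hgM _ ⟨by linarith, by linarith⟩
            calc |g (t - y) * Fbar F y| = |g (t - y)| * Fbar F y := by
                  rw [abs_mul, abs_of_nonneg (hFb y)]
              _ ≤ M * (C₀ * y ^ (-ε)) := mul_le_mul h2 (htail y hy0) (hFb y) hM
              _ = M * C₀ * y ^ (-ε) := by ring
  have hval : ∫ y in Set.Ioc 0 t, M * C₀ * y ^ (-ε) = M * C₀ / (1 - ε) * t ^ (1 - ε) := by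
    rw [MeasureTheory.integral_const_mul, ← intervalIntegral.integral_of_le ht0.le,
      integral_rpow (Or.inl (by linarith)),
      Real.zero_rpow (by intro h; linarith [h] : -ε + 1 ≠ 0)]
    have he : -ε + 1 = 1 - ε := by ring
    rw [he]
    ring
  rw [h1]
  exact key.trans hval.le

lemma stepA (γ α μ Φ₀ C₀ ε : ℝ) (F g : ℝ → ℝ)
    (hγ : 1 < γ) (hα : 0 < α) (hμ : 0 < μ) (hΦ₀ : 0 < Φ₀) (hC₀ : 0 < C₀)
    (hε0 : 0 < ε) (hε1 : ε < 1)
    (hFb : ∀ y, 0 ≤ Fbar F y)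
    (htail : ∀ z : ℝ, 0 < z → Fbar F z ≤ C₀ * z ^ (-ε))
    (hsol : ∀ u : ℝ, 0 < u → g u = μ * u ^ (-γ) * Real.exp (α / u) *
      ∫ t in (0:ℝ)..u, t ^ (γ - 2) * Real.exp (-α / t) * (Φ₀ * Fbar F t + Bop F g t))
    (u M : ℝ) (hu : 1 ≤ u) (hM : 0 ≤ M) (hgM : ∀ v ∈ Set.Icc 0 u, |g v| ≤ M) :
    |g u| ≤ μ * (Φ₀ * C₀ * (2 * Real.exp (α / 2) / α)) / (γ - ε) * u ^ (-ε)
      + μ * C₀ / ((1 - ε) * (γ - ε)) * u ^ (-ε) * M := by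
  have hu0 : (0:ℝ) < u := lt_of_lt_of_le one_pos hu
  have hε1' : (0:ℝ) < 1 - ε := by linarith
  have hγε : (0:ℝ) < γ - ε := by linarith
  set D : ℝ := Φ₀ * C₀ * (2 * Real.exp (α / 2) / α) + M * C₀ / (1 - ε) with hD
  have hD0 : 0 ≤ D := by
    apply add_nonneg
    · positivity
    · exact div_nonneg (mul_nonneg hM hC₀.le) hε1'.le
  have hptwise : ∀ t ∈ Set.Ioc (0:ℝ) u,
      |t ^ (γ - 2) * Real.exp (-α / t) * (Φ₀ * Fbar F t + Bop F g t)|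
        ≤ Real.exp (-α / u) * D * t ^ (γ - 1 - ε) := by
    intro t ht
    obtain ⟨ht0, htu⟩ := ht
    have hBop := inner_bound F g C₀ ε M u t hC₀ hε0 hε1 hFb htail hM ht0 htu hgM
    have habs : |Φ₀ * Fbar F t + Bop F g t|
        ≤ Φ₀ * (C₀ * t ^ (-ε)) + M * C₀ / (1 - ε) * t ^ (1 - ε) := by
      calc |Φ₀ * Fbar F t + Bop F g t| ≤ |Φ₀ * Fbar F t| + |Bop F g t| := abs_add_le _ _
        _ ≤ Φ₀ * (C₀ * t ^ (-ε)) + M * C₀ / (1 - ε) * t ^ (1 - ε) := by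
            refine add_le_add ?_ hBop
            rw [abs_mul, abs_of_pos hΦ₀, abs_of_nonneg (hFb t)]
            exact mul_le_mul_of_nonneg_left (htail t ht0) hΦ₀.le
    have hexp1 : Real.exp (-α / t) ≤ Real.exp (-α / u) * (2 * Real.exp (α / 2) / α) * t := by
      have h2t : (0:ℝ) < α / (2 * t) := by positivity
      have e1 : Real.exp (-α / t) = Real.exp (-(α / (2 * t))) * Real.exp (-(α / (2 * t))) := by
        rw [← Real.exp_add]
        congr 1
        field_simp
        ring
      have e2 : Real.exp (-(α / (2 * t))) ≤ 2 * t / α := by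
        calc Real.exp (-(α / (2 * t))) ≤ 1 / (α / (2 * t)) := exp_neg_le_inv' h2t
          _ = 2 * t / α := one_div_div _ _
      have e3 : Real.exp (-(α / (2 * t))) ≤ Real.exp (-α / u) * Real.exp (α / 2) := by
        have h1 : Real.exp (-(α / (2 * t))) ≤ Real.exp (-(α / (2 * u))) := by
          apply Real.exp_le_exp.mpr
          have : α / (2 * u) ≤ α / (2 * t) := by
            apply div_le_div_of_nonneg_left hα.le (by linarith) (by linarith)
          linarith
        have h2 : Real.exp (-(α / (2 * u))) = Real.exp (-α / u) * Real.exp (α / (2 * u)) := by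
          rw [← Real.exp_add]
          congr 1
          field_simp
          ring
        have h3 : Real.exp (α / (2 * u)) ≤ Real.exp (α / 2) := by
          apply Real.exp_le_exp.mpr
          apply div_le_div_of_nonneg_left hα.le (by norm_num) (by linarith)
        calc Real.exp (-(α / (2 * t))) ≤ Real.exp (-(α / (2 * u))) := h1
          _ = Real.exp (-α / u) * Real.exp (α / (2 * u)) := h2
          _ ≤ Real.exp (-α / u) * Real.exp (α / 2) :=
              mul_le_mul_of_nonneg_left h3 (Real.exp_pos _).le
      calc Real.exp (-α / t) = Real.exp (-(α / (2 * t))) * Real.exp (-(α / (2 * t))) := e1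
        _ ≤ (Real.exp (-α / u) * Real.exp (α / 2)) * (2 * t / α) :=
            mul_le_mul e3 e2 (Real.exp_pos _).le (by positivity)
        _ = Real.exp (-α / u) * (2 * Real.exp (α / 2) / α) * t := by ring
    have hexp2 : Real.exp (-α / t) ≤ Real.exp (-α / u) := by
      apply Real.exp_le_exp.mpr
      have : α / u ≤ α / t := div_le_div_of_nonneg_left hα.le ht0 htu
      rw [neg_div, neg_div]
      linarith
    have hT : 0 ≤ t ^ (γ - 2) := Real.rpow_nonneg ht0.le _
    have e1 : t ^ (γ - 2) * t ^ (-ε) * t = t ^ (γ - 1 - ε) := by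
      nth_rewrite 3 [← Real.rpow_one t]
      rw [← Real.rpow_add ht0, ← Real.rpow_add ht0]
      congr 1
      ring
    have e2 : t ^ (γ - 2) * t ^ (1 - ε) = t ^ (γ - 1 - ε) := by
      rw [← Real.rpow_add ht0]
      congr 1
      ring
    calc |t ^ (γ - 2) * Real.exp (-α / t) * (Φ₀ * Fbar F t + Bop F g t)|
        = t ^ (γ - 2) * Real.exp (-α / t) * |Φ₀ * Fbar F t + Bop F g t| := by
          rw [abs_mul, abs_of_nonneg (mul_nonneg hT (Real.exp_pos _).le)]
      _ ≤ t ^ (γ - 2) * Real.exp (-α / t)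
            * (Φ₀ * (C₀ * t ^ (-ε)) + M * C₀ / (1 - ε) * t ^ (1 - ε)) :=
          mul_le_mul_of_nonneg_left habs (mul_nonneg hT (Real.exp_pos _).le)
      _ = t ^ (γ - 2) * t ^ (-ε) * (Φ₀ * C₀) * Real.exp (-α / t)
          + t ^ (γ - 2) * t ^ (1 - ε) * (M * C₀ / (1 - ε)) * Real.exp (-α / t) := by ring
      _ ≤ t ^ (γ - 2) * t ^ (-ε) * (Φ₀ * C₀)
            * (Real.exp (-α / u) * (2 * Real.exp (α / 2) / α) * t)
          + t ^ (γ - 2) * t ^ (1 - ε) * (M * C₀ / (1 - ε)) * Real.exp (-α / u) := by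
          apply add_le_add
          · exact mul_le_mul_of_nonneg_left hexp1 (by positivity)
          · apply mul_le_mul_of_nonneg_left hexp2
            have : (0:ℝ) ≤ t ^ (1 - ε) := Real.rpow_nonneg ht0.le _
            positivity
      _ = Real.exp (-α / u) * D * t ^ (γ - 1 - ε) := by
          have expand : t ^ (γ - 2) * t ^ (-ε) * (Φ₀ * C₀)
                * (Real.exp (-α / u) * (2 * Real.exp (α / 2) / α) * t)
              + t ^ (γ - 2) * t ^ (1 - ε) * (M * C₀ / (1 - ε)) * Real.exp (-α / u)
            = Φ₀ * C₀ * (2 * Real.exp (α / 2) / α) * Real.exp (-α / u)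
                * (t ^ (γ - 2) * t ^ (-ε) * t)
              + (M * C₀ / (1 - ε)) * Real.exp (-α / u) * (t ^ (γ - 2) * t ^ (1 - ε)) := by
            ring
          rw [expand, e1, e2, hD]
          ring
  have hβ : (-1:ℝ) < γ - 1 - ε := by linarith
  have hdom : Integrable (fun t => Real.exp (-α / u) * D * t ^ (γ - 1 - ε))
      (volume.restrict (Set.Ioc 0 u)) := by
    have h := (intervalIntegral.intervalIntegrable_rpow' (a := 0) (b := u)
      (r := γ - 1 - ε) hβ).1
    exact h.const_mul _
  have hintval : ∫ t in Set.Ioc 0 u, Real.exp (-α / u) * D * t ^ (γ - 1 - ε)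
      = Real.exp (-α / u) * D * (u ^ (γ - ε) / (γ - ε)) := by
    rw [MeasureTheory.integral_const_mul, ← intervalIntegral.integral_of_le hu0.le,
      integral_rpow (Or.inl hβ),
      Real.zero_rpow (by intro h; linarith [h] : γ - 1 - ε + 1 ≠ 0)]
    have he : γ - 1 - ε + 1 = γ - ε := by ring
    rw [he]
    ring
  have hIbound : |∫ t in (0:ℝ)..u, t ^ (γ - 2) * Real.exp (-α / t)
        * (Φ₀ * Fbar F t + Bop F g t)|
      ≤ Real.exp (-α / u) * D * (u ^ (γ - ε) / (γ - ε)) := by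
    rw [intervalIntegral.integral_of_le hu0.le]
    calc |∫ t in Set.Ioc 0 u, t ^ (γ - 2) * Real.exp (-α / t) * (Φ₀ * Fbar F t + Bop F g t)|
        ≤ ∫ t in Set.Ioc 0 u,
            |t ^ (γ - 2) * Real.exp (-α / t) * (Φ₀ * Fbar F t + Bop F g t)| := by
          simpa only [Real.norm_eq_abs] using
            MeasureTheory.norm_integral_le_integral_norm
              (μ := volume.restrict (Set.Ioc 0 u))
              (fun t => t ^ (γ - 2) * Real.exp (-α / t) * (Φ₀ * Fbar F t + Bop F g t))
      _ ≤ ∫ t in Set.Ioc 0 u, Real.exp (-α / u) * D * t ^ (γ - 1 - ε) := by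
          apply integral_mono_of_nonneg
          · exact Filter.Eventually.of_forall fun t => abs_nonneg _
          · exact hdom
          · rw [Filter.EventuallyLE, ae_restrict_iff' measurableSet_Ioc]
            exact Filter.Eventually.of_forall hptwise
      _ = Real.exp (-α / u) * D * (u ^ (γ - ε) / (γ - ε)) := hintval
  have hpos : 0 < μ * u ^ (-γ) * Real.exp (α / u) := by positivity
  rw [hsol u hu0, abs_mul, abs_of_pos hpos]
  have hee : Real.exp (α / u) * Real.exp (-α / u) = 1 := by
    rw [← Real.exp_add, show α / u + -α / u = 0 by ring, Real.exp_zero]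
  have huu : u ^ (-γ) * u ^ (γ - ε) = u ^ (-ε) := by
    rw [← Real.rpow_add hu0]
    congr 1
    ring
  calc μ * u ^ (-γ) * Real.exp (α / u)
        * |∫ t in (0:ℝ)..u, t ^ (γ - 2) * Real.exp (-α / t) * (Φ₀ * Fbar F t + Bop F g t)|
      ≤ μ * u ^ (-γ) * Real.exp (α / u)
          * (Real.exp (-α / u) * D * (u ^ (γ - ε) / (γ - ε))) :=
        mul_le_mul_of_nonneg_left hIbound hpos.le
    _ = μ * D / (γ - ε) * (u ^ (-γ) * u ^ (γ - ε))
          * (Real.exp (α / u) * Real.exp (-α / u)) := by ring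
    _ = μ * (Φ₀ * C₀ * (2 * Real.exp (α / 2) / α)) / (γ - ε) * u ^ (-ε)
        + μ * C₀ / ((1 - ε) * (γ - ε)) * u ^ (-ε) * M := by
        rw [hee, huu, mul_one, hD]
        field_simp

theorem stmt5 (γ α μ : ℝ) (hγ : 1 < γ) (hα : 0 < α) (hμ : 0 < μ)
    (F : ℝ → ℝ) (hF : IsCDF F) (Φ₀ : ℝ) (hΦ₀ : 0 < Φ₀)
    (ε C₀ : ℝ) (hε : ε ∈ Set.Ioo (0:ℝ) 1) (hC₀ : 0 < C₀)
    (htail : ∀ z : ℝ, 0 < z → Fbar F z ≤ C₀ * z ^ (-ε))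
    (g : ℝ → ℝ) (hg : IsVolterraSol γ α μ Φ₀ F g) :
    ∃ M : ℝ, ∀ u : ℝ, 0 ≤ u → |g u| ≤ M := by
  obtain ⟨hε0, hε1⟩ := hε
  obtain ⟨hgc, hsol⟩ := hg
  have hγε : (0:ℝ) < γ - ε := by linarith
  have hε1' : (0:ℝ) < 1 - ε := by linarith
  have hF1 : ∀ x, F x ≤ 1 := fun x =>
    ge_of_tendsto hF.2.2.2 ((eventually_ge_atTop x).mono fun y hy => hF.1 hy)
  have hFb : ∀ y, 0 ≤ Fbar F y := fun y => by
    simp only [Fbar]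
    linarith [hF1 y]
  set K₁ : ℝ := μ * (Φ₀ * C₀ * (2 * Real.exp (α / 2) / α)) / (γ - ε) with hK₁def
  set K₂ : ℝ := μ * C₀ / ((1 - ε) * (γ - ε)) with hK₂def
  have hK₁ : 0 < K₁ := by
    rw [hK₁def]
    apply div_pos (by positivity) hγε
  have hK₂ : 0 < K₂ := by
    rw [hK₂def]
    apply div_pos (by positivity) (mul_pos hε1' hγε)
  set U : ℝ := max 1 ((2 * K₂) ^ (1 / ε)) with hUdef
  have hU1 : (1:ℝ) ≤ U := le_max_left _ _
  have hU0 : (0:ℝ) < U := lt_of_lt_of_le one_pos hU1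
  have h2K : (0:ℝ) < 2 * K₂ := by linarith
  have hUK : K₂ * U ^ (-ε) ≤ 1 / 2 := by
    have hUe : 2 * K₂ ≤ U ^ ε := by
      calc 2 * K₂ = ((2 * K₂) ^ (1 / ε)) ^ ε := by
            rw [← Real.rpow_mul h2K.le, one_div_mul_cancel (ne_of_gt hε0), Real.rpow_one]
        _ ≤ U ^ ε := Real.rpow_le_rpow (Real.rpow_nonneg h2K.le _) (le_max_right _ _) hε0.le
    have hinv : U ^ (-ε) ≤ (2 * K₂)⁻¹ := by
      rw [Real.rpow_neg hU0.le]
      exact inv_anti₀ h2K hUe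
    calc K₂ * U ^ (-ε) ≤ K₂ * (2 * K₂)⁻¹ := mul_le_mul_of_nonneg_left hinv hK₂.le
      _ = 1 / 2 := by
          field_simp
  have hUe1 : U ^ (-ε) ≤ 1 := Real.rpow_le_one_of_one_le_of_nonpos hU1 (by linarith)
  obtain ⟨v₀, hv₀mem, hv₀⟩ := (isCompact_Icc : IsCompact (Set.Icc (0:ℝ) U)).exists_isMaxOn
    (Set.nonempty_Icc.2 (by linarith)) ((hgc.mono (fun x hx => hx.1)).abs)
  refine ⟨max (|g v₀|) (2 * K₁), fun u hu => ?_⟩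
  set u' : ℝ := max u U with hu'def
  have hu'0 : (0:ℝ) ≤ u' := le_trans hU0.le (le_max_right u U)
  obtain ⟨v, hvmem, hv⟩ := (isCompact_Icc : IsCompact (Set.Icc (0:ℝ) u')).exists_isMaxOn
    (Set.nonempty_Icc.2 hu'0) ((hgc.mono (fun x hx => hx.1)).abs)
  have hgu : |g u| ≤ |g v| := hv ⟨hu, le_max_left u U⟩
  rcases le_or_gt v U with hcase | hcase
  · have h1 : |g v| ≤ |g v₀| := hv₀ ⟨hvmem.1, hcase⟩
    exact hgu.trans (h1.trans (le_max_left _ _))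
  · have hv1 : (1:ℝ) ≤ v := le_trans hU1 hcase.le
    have hgMv : ∀ w ∈ Set.Icc (0:ℝ) v, |g w| ≤ |g v| := fun w hw =>
      hv ⟨hw.1, le_trans hw.2 hvmem.2⟩
    have hstep := stepA γ α μ Φ₀ C₀ ε F g hγ hα hμ hΦ₀ hC₀ hε0 hε1 hFb htail hsol
      v (|g v|) hv1 (abs_nonneg _) hgMv
    rw [← hK₁def, ← hK₂def] at hstep
    have hvU : v ^ (-ε) ≤ U ^ (-ε) :=
      Real.rpow_le_rpow_of_nonpos hU0 hcase.le (by linarith)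
    have h1 : K₁ * v ^ (-ε) ≤ K₁ := by
      calc K₁ * v ^ (-ε) ≤ K₁ * U ^ (-ε) := mul_le_mul_of_nonneg_left hvU hK₁.le
        _ ≤ K₁ * 1 := mul_le_mul_of_nonneg_left hUe1 hK₁.le
        _ = K₁ := mul_one _
    have h2 : K₂ * v ^ (-ε) * |g v| ≤ 1 / 2 * |g v| := by
      apply mul_le_mul_of_nonneg_right _ (abs_nonneg _)
      calc K₂ * v ^ (-ε) ≤ K₂ * U ^ (-ε) := mul_le_mul_of_nonneg_left hvU hK₂.le
        _ ≤ 1 / 2 := hUK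
    have hfin : |g v| ≤ 2 * K₁ := by linarith
    exact hgu.trans (hfin.trans (le_max_right _ _))
end

section
/- Bootstrap improvement of the decay rate: suppose ε ∈ (0,1) with γ − 1 − ε > 0, C₀ > 0 with F̄(z) ≤ C₀ z^{−ε} for all z > 0, and let g be a continuous solution of the Volterra equation (★) on [0, ∞). If for some δ ∈ [0,1] and C > 0 one has |g(u)| ≤ C (1+u)^{−δ} for all u ≥ 0, then there exist C′ > 0 and U > 0 such that |g(u)| ≤ C′ u^{−(δ+ε)} for all u ≥ U. -/
open MeasureTheory Filter Set Topology
open intervalIntegral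

lemma aux1 (β T : ℝ) (hT : 0 ≤ T) (hβ : β ≠ 1) :
    ∫ s in (0:ℝ)..T, (1+s) ^ (-β) = ((1+T) ^ (1-β) - 1) / (1-β) := by
  have h1 : (∫ s in (0:ℝ)..T, (1+s) ^ (-β)) = ∫ x in (1:ℝ)..(1+T), x ^ (-β) := by
    simpa using intervalIntegral.integral_comp_add_left (a := 0) (b := T) (fun x : ℝ => x ^ (-β)) 1
  rw [h1, integral_rpow]
  · rw [Real.one_rpow]; ring_nf
  · right
    constructor
    · intro h; apply hβ; linarith [neg_eq_iff_eq_neg.mp h]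
    · intro h
      rw [Set.mem_uIcc] at h
      rcases h with ⟨h1, _⟩ | ⟨h1, _⟩ <;> linarith

lemma conv_raw (F g : ℝ → ℝ) (hF0 : ∀ x, 0 ≤ Fbar F x)
    (ε C₀ : ℝ) (hε0 : 0 < ε) (hε1 : ε < 1) (hC₀ : 0 < C₀)
    (htail : ∀ z : ℝ, 0 < z → Fbar F z ≤ C₀ * z ^ (-ε))
    (β D : ℝ) (hβ0 : 0 ≤ β) (hβ1 : β ≠ 1) (hD : 0 < D)
    (hgb : ∀ s : ℝ, 0 ≤ s → |g s| ≤ D * (1+s) ^ (-β))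
    (t : ℝ) (ht : 0 < t) :
    |Bop F g t| ≤ D * C₀ * ((1+t/2) ^ (-β) * ((t/2) ^ (1-ε) / (1-ε)))
      + D * C₀ * ((t/2) ^ (-ε) * (((1+t/2) ^ (1-β) - 1) / (1-β))) := by
  set H : ℝ → ℝ := fun y => y ^ (-ε) * (D * C₀ * (1+(t-y)) ^ (-β)) with hH
  have hcont : ∀ a b : ℝ, 0 ≤ a → a ≤ b → b ≤ t →
      ContinuousOn (fun y : ℝ => D * C₀ * (1+(t-y)) ^ (-β)) (Set.uIcc a b) := by
    intro a b ha hab hb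
    apply ContinuousOn.mul continuousOn_const
    apply ContinuousOn.rpow_const (by fun_prop)
    intro x hx
    rw [Set.uIcc_of_le hab] at hx
    left; nlinarith [hx.1, hx.2]
  have hHint : ∀ a b : ℝ, 0 ≤ a → a ≤ b → b ≤ t → IntervalIntegrable H volume a b := by
    intro a b ha hab hb
    apply IntervalIntegrable.mul_continuousOn _ (hcont a b ha hab hb)
    exact intervalIntegrable_rpow' (by linarith)
  have step1 : |Bop F g t| ≤ |∫ y in (0:ℝ)..t, H y| := by
    rw [Bop, ← Real.norm_eq_abs]
    apply intervalIntegral.norm_integral_le_abs_of_norm_le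
    · rw [MeasureTheory.ae_restrict_iff' measurableSet_uIoc]
      apply MeasureTheory.ae_of_all
      intro y hy
      rw [Set.uIoc_of_le ht.le] at hy
      have hy0 : 0 < y := hy.1
      have hyt : y ≤ t := hy.2
      have h1 : ‖g (t - y) * Fbar F y‖ = |g (t-y)| * Fbar F y := by
        rw [norm_mul, Real.norm_eq_abs, Real.norm_eq_abs, abs_of_nonneg (hF0 y)]
      rw [h1, hH]
      have h2 : |g (t-y)| * Fbar F y ≤ (D * (1+(t-y)) ^ (-β)) * (C₀ * y ^ (-ε)) := by
        have hb0 : (0:ℝ) ≤ (1+(t-y)) ^ (-β) := Real.rpow_nonneg (by linarith [hy.2]) _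
        apply mul_le_mul (hgb _ (by linarith)) (htail y hy0) (hF0 y) (by positivity)
      calc |g (t-y)| * Fbar F y ≤ (D * (1+(t-y)) ^ (-β)) * (C₀ * y ^ (-ε)) := h2
        _ = y ^ (-ε) * (D * C₀ * (1+(t-y)) ^ (-β)) := by ring
    · exact hHint 0 t le_rfl ht.le le_rfl
  have habs : |∫ y in (0:ℝ)..t, H y| = ∫ y in (0:ℝ)..t, H y := by
    apply abs_of_nonneg
    apply intervalIntegral.integral_nonneg ht.le
    intro y hy
    have : 0 ≤ y ^ (-ε) := Real.rpow_nonneg hy.1 _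
    have h2 : (0:ℝ) ≤ (1+(t-y)) ^ (-β) := Real.rpow_nonneg (by nlinarith [hy.1, hy.2]) _
    positivity
  have hsplit : (∫ y in (0:ℝ)..t, H y) = (∫ y in (0:ℝ)..(t/2), H y) + ∫ y in (t/2)..t, H y :=
    (intervalIntegral.integral_add_adjacent_intervals
      (hHint 0 (t/2) le_rfl (by linarith) (by linarith))
      (hHint (t/2) t (by linarith) (by linarith) le_rfl)).symm
  -- piece 1
  have hp1 : (∫ y in (0:ℝ)..(t/2), H y) ≤ D * C₀ * ((1+t/2) ^ (-β) * ((t/2) ^ (1-ε) / (1-ε))) := by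
    have hmono : (∫ y in (0:ℝ)..(t/2), H y) ≤ ∫ y in (0:ℝ)..(t/2), y ^ (-ε) * (D * C₀ * (1+t/2) ^ (-β)) := by
      apply intervalIntegral.integral_mono_on (by linarith)
        (hHint 0 (t/2) le_rfl (by linarith) (by linarith))
        ((intervalIntegrable_rpow' (by linarith : (-1:ℝ) < -ε)).mul_const _)
      intro y hy
      have hy0 : 0 ≤ y := hy.1
      have h3 : (1+(t-y)) ^ (-β) ≤ (1+t/2) ^ (-β) := by
        apply Real.rpow_le_rpow_of_nonpos (by linarith) (by nlinarith [hy.2]) (by linarith)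
      have h4 : 0 ≤ y ^ (-ε) := Real.rpow_nonneg hy0 _
      have h5 : D * C₀ * (1+(t-y)) ^ (-β) ≤ D * C₀ * (1+t/2) ^ (-β) :=
        mul_le_mul_of_nonneg_left h3 (by positivity)
      exact mul_le_mul_of_nonneg_left h5 h4
    have hcomp : (∫ y in (0:ℝ)..(t/2), y ^ (-ε) * (D * C₀ * (1+t/2) ^ (-β)))
        = ((t/2) ^ (1-ε) / (1-ε)) * (D * C₀ * (1+t/2) ^ (-β)) := by
      rw [intervalIntegral.integral_mul_const, integral_rpow (Or.inl (by linarith))]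
      rw [Real.zero_rpow (by intro h; linarith [h.symm.le, h.le] : -ε + 1 ≠ 0)]
      ring_nf
    rw [hcomp] at hmono
    calc (∫ y in (0:ℝ)..(t/2), H y) ≤ _ := hmono
      _ = D * C₀ * ((1+t/2) ^ (-β) * ((t/2) ^ (1-ε) / (1-ε))) := by ring
  -- piece 2
  have hp2 : (∫ y in (t/2)..t, H y) ≤ D * C₀ * ((t/2) ^ (-ε) * (((1+t/2) ^ (1-β) - 1) / (1-β))) := by
    have hmono : (∫ y in (t/2)..t, H y) ≤ ∫ y in (t/2)..t, (t/2) ^ (-ε) * (D * C₀ * (1+(t-y)) ^ (-β)) := by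
      apply intervalIntegral.integral_mono_on (by linarith)
        (hHint (t/2) t (by linarith) (by linarith) le_rfl)
        ((continuousOn_const.mul (hcont (t/2) t (by linarith) (by linarith) le_rfl)).intervalIntegrable)
      intro y hy
      have h3 : y ^ (-ε) ≤ (t/2) ^ (-ε) :=
        Real.rpow_le_rpow_of_nonpos (by linarith) hy.1 (by linarith)
      have h4 : (0:ℝ) ≤ D * C₀ * (1+(t-y)) ^ (-β) := by
        have := Real.rpow_nonneg (by nlinarith [hy.2] : (0:ℝ) ≤ 1+(t-y)) (-β)
        positivity
      exact mul_le_mul_of_nonneg_right h3 h4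
    have hsub : (∫ y in (t/2)..t, (1+(t-y)) ^ (-β)) = ∫ s in (0:ℝ)..(t/2), (1+s) ^ (-β) := by
      have h := intervalIntegral.integral_comp_sub_left (a := t/2) (b := t) (fun s : ℝ => (1+s) ^ (-β)) t
      rw [show t - t = (0:ℝ) by ring, show t - t/2 = t/2 by ring] at h
      exact h
    have hcomp : (∫ y in (t/2)..t, (t/2) ^ (-ε) * (D * C₀ * (1+(t-y)) ^ (-β)))
        = (t/2) ^ (-ε) * D * C₀ * (((1+t/2) ^ (1-β) - 1) / (1-β)) := by
      have : (fun y => (t/2) ^ (-ε) * (D * C₀ * (1+(t-y)) ^ (-β)))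
          = fun y => ((t/2) ^ (-ε) * D * C₀) * (1+(t-y)) ^ (-β) := by funext y; ring
      rw [this, intervalIntegral.integral_const_mul, hsub, aux1 β (t/2) (by linarith) hβ1]
    rw [hcomp] at hmono
    calc (∫ y in (t/2)..t, H y) ≤ _ := hmono
      _ = D * C₀ * ((t/2) ^ (-ε) * (((1+t/2) ^ (1-β) - 1) / (1-β))) := by ring
  calc |Bop F g t| ≤ |∫ y in (0:ℝ)..t, H y| := step1
    _ = (∫ y in (0:ℝ)..(t/2), H y) + ∫ y in (t/2)..t, H y := by rw [habs, hsplit]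
    _ ≤ _ := add_le_add hp1 hp2

lemma conv_lt (F g : ℝ → ℝ) (hF0 : ∀ x, 0 ≤ Fbar F x)
    (Φ₀ : ℝ) (hΦ₀ : 0 < Φ₀)
    (ε C₀ : ℝ) (hε0 : 0 < ε) (hε1 : ε < 1) (hC₀ : 0 < C₀)
    (htail : ∀ z : ℝ, 0 < z → Fbar F z ≤ C₀ * z ^ (-ε))
    (β D : ℝ) (hβ0 : 0 ≤ β) (hβ1 : β < 1) (hD : 0 < D)
    (hgb : ∀ s : ℝ, 0 ≤ s → |g s| ≤ D * (1+s) ^ (-β)) :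
    ∃ M : ℝ, 0 < M ∧ ∀ t : ℝ, 0 < t →
      Φ₀ * Fbar F t + |Bop F g t| ≤ M * (t ^ (-ε) * (1+t) ^ (1-β)) := by
  have hε' : (0:ℝ) < 1 - ε := by linarith
  have hβ' : (0:ℝ) < 1 - β := by linarith
  refine ⟨Φ₀ * C₀ + D * C₀ * ((2:ℝ) ^ β / (1-ε)) + D * C₀ * ((2:ℝ) ^ ε / (1-β)), by positivity, ?_⟩
  intro t ht
  have h1t : (0:ℝ) < 1 + t := by linarith
  have ht2 : (0:ℝ) < t/2 := by linarith
  have h1t2 : (0:ℝ) < 1 + t/2 := by linarith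
  have hεt : (0:ℝ) ≤ t ^ (-ε) := Real.rpow_nonneg ht.le _
  have hone : (1:ℝ) ≤ (1+t) ^ (1-β) := Real.one_le_rpow (by linarith) (by linarith)
  -- tail part
  have hA : Φ₀ * Fbar F t ≤ Φ₀ * C₀ * (t ^ (-ε) * (1+t) ^ (1-β)) := by
    have := htail t ht
    calc Φ₀ * Fbar F t ≤ Φ₀ * (C₀ * t ^ (-ε)) := by nlinarith [hF0 t]
      _ = Φ₀ * C₀ * (t ^ (-ε) * 1) := by ring
      _ ≤ Φ₀ * C₀ * (t ^ (-ε) * (1+t) ^ (1-β)) := by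
          apply mul_le_mul_of_nonneg_left (mul_le_mul_of_nonneg_left hone hεt) (by positivity)
  -- first raw term
  have hB : (1+t/2) ^ (-β) * ((t/2) ^ (1-ε) / (1-ε))
      ≤ ((2:ℝ) ^ β / (1-ε)) * (t ^ (-ε) * (1+t) ^ (1-β)) := by
    have e1 : (1+t/2) ^ (-β) ≤ (2:ℝ) ^ β * (1+t) ^ (-β) := by
      have h0 : (1+t/2) ^ (-β) ≤ ((1+t)/2) ^ (-β) :=
        Real.rpow_le_rpow_of_nonpos (by linarith) (by linarith) (by linarith)
      have h2 : ((1+t)/2) ^ (-β) = (1+t) ^ (-β) / (2:ℝ) ^ (-β) :=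
        Real.div_rpow h1t.le (by norm_num) _
      rw [h2, Real.rpow_neg (by norm_num : (0:ℝ) ≤ 2)] at h0
      calc (1+t/2) ^ (-β) ≤ (1+t) ^ (-β) / ((2:ℝ) ^ β)⁻¹ := h0
        _ = (2:ℝ) ^ β * (1+t) ^ (-β) := by field_simp
    have e2 : (t/2) ^ (1-ε) ≤ t ^ (1-ε) :=
      Real.rpow_le_rpow ht2.le (by linarith) (by linarith)
    have e3 : t ^ (1-ε) * (1+t) ^ (-β) ≤ t ^ (-ε) * (1+t) ^ (1-β) := by
      have f1 : t ^ (1-ε) = t ^ (-ε) * t := by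
        rw [show (1-ε) = -ε + 1 by ring, Real.rpow_add ht, Real.rpow_one]
      have f2 : (1+t) ^ (1-β) = (1+t) ^ (-β) * (1+t) := by
        rw [show (1-β) = -β + 1 by ring, Real.rpow_add h1t, Real.rpow_one]
      rw [f1, f2]
      have : t * (1+t) ^ (-β) ≤ (1+t) ^ (-β) * (1+t) := by
        have := Real.rpow_nonneg h1t.le (-β); nlinarith
      nlinarith [hεt, Real.rpow_nonneg h1t.le (-β)]
    have e0 : (0:ℝ) ≤ (1+t) ^ (-β) := Real.rpow_nonneg h1t.le _
    have e4 : (1+t/2) ^ (-β) * (t/2) ^ (1-ε) ≤ (2:ℝ) ^ β * (t ^ (-ε) * (1+t) ^ (1-β)) := by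
      calc (1+t/2) ^ (-β) * (t/2) ^ (1-ε) ≤ ((2:ℝ) ^ β * (1+t) ^ (-β)) * t ^ (1-ε) := by
            apply mul_le_mul e1 e2 (Real.rpow_nonneg ht2.le _)
            positivity
        _ = (2:ℝ) ^ β * (t ^ (1-ε) * (1+t) ^ (-β)) := by ring
        _ ≤ (2:ℝ) ^ β * (t ^ (-ε) * (1+t) ^ (1-β)) := by
            apply mul_le_mul_of_nonneg_left e3 (by positivity)
    calc (1+t/2) ^ (-β) * ((t/2) ^ (1-ε) / (1-ε))
        = ((1+t/2) ^ (-β) * (t/2) ^ (1-ε)) / (1-ε) := by ring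
      _ ≤ ((2:ℝ) ^ β * (t ^ (-ε) * (1+t) ^ (1-β))) / (1-ε) := by
          exact (div_le_div_iff_of_pos_right hε').mpr e4
      _ = ((2:ℝ) ^ β / (1-ε)) * (t ^ (-ε) * (1+t) ^ (1-β)) := by ring
  -- second raw term
  have hCterm : (t/2) ^ (-ε) * (((1+t/2) ^ (1-β) - 1) / (1-β))
      ≤ ((2:ℝ) ^ ε / (1-β)) * (t ^ (-ε) * (1+t) ^ (1-β)) := by
    have e1 : (t/2) ^ (-ε) = (2:ℝ) ^ ε * t ^ (-ε) := by
      rw [show t/2 = t * (2:ℝ)⁻¹ by ring, Real.mul_rpow ht.le (by norm_num),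
        Real.inv_rpow (by norm_num : (0:ℝ) ≤ 2), Real.rpow_neg (by norm_num : (0:ℝ) ≤ 2), inv_inv]
      ring
    have e2 : (1+t/2) ^ (1-β) - 1 ≤ (1+t) ^ (1-β) := by
      have := Real.rpow_le_rpow h1t2.le (by linarith : 1+t/2 ≤ 1+t) (by linarith : (0:ℝ) ≤ 1-β)
      linarith
    have e3 : ((1+t/2) ^ (1-β) - 1) / (1-β) ≤ (1+t) ^ (1-β) / (1-β) :=
      (div_le_div_iff_of_pos_right hβ').mpr e2
    calc (t/2) ^ (-ε) * (((1+t/2) ^ (1-β) - 1) / (1-β))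
        ≤ (t/2) ^ (-ε) * ((1+t) ^ (1-β) / (1-β)) := by
          apply mul_le_mul_of_nonneg_left e3 (Real.rpow_nonneg ht2.le _)
      _ = ((2:ℝ) ^ ε / (1-β)) * (t ^ (-ε) * (1+t) ^ (1-β)) := by rw [e1]; ring
  have hraw := conv_raw F g hF0 ε C₀ hε0 hε1 hC₀ htail β D hβ0 (by linarith) hD hgb t ht
  have hBC : |Bop F g t| ≤ (D * C₀ * ((2:ℝ) ^ β / (1-ε)) + D * C₀ * ((2:ℝ) ^ ε / (1-β)))
      * (t ^ (-ε) * (1+t) ^ (1-β)) := by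
    have b1 := mul_le_mul_of_nonneg_left hB (by positivity : (0:ℝ) ≤ D * C₀)
    have b2 := mul_le_mul_of_nonneg_left hCterm (by positivity : (0:ℝ) ≤ D * C₀)
    calc |Bop F g t| ≤ _ := hraw
      _ ≤ D * C₀ * (((2:ℝ) ^ β / (1-ε)) * (t ^ (-ε) * (1+t) ^ (1-β)))
          + D * C₀ * (((2:ℝ) ^ ε / (1-β)) * (t ^ (-ε) * (1+t) ^ (1-β))) := add_le_add b1 b2
      _ = _ := by ring
  calc Φ₀ * Fbar F t + |Bop F g t| ≤ _ := add_le_add hA hBC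
    _ = _ := by ring

lemma conv_gt (F g : ℝ → ℝ) (hF0 : ∀ x, 0 ≤ Fbar F x)
    (Φ₀ : ℝ) (hΦ₀ : 0 < Φ₀)
    (ε C₀ : ℝ) (hε0 : 0 < ε) (hε1 : ε < 1) (hC₀ : 0 < C₀)
    (htail : ∀ z : ℝ, 0 < z → Fbar F z ≤ C₀ * z ^ (-ε))
    (β D : ℝ) (hβ1 : 1 < β) (hD : 0 < D)
    (hgb : ∀ s : ℝ, 0 ≤ s → |g s| ≤ D * (1+s) ^ (-β)) :
    ∃ M : ℝ, 0 < M ∧ ∀ t : ℝ, 0 < t →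
      Φ₀ * Fbar F t + |Bop F g t| ≤ M * (t ^ (-ε) * (1+t) ^ (0:ℝ)) := by
  have hε' : (0:ℝ) < 1 - ε := by linarith
  have hβ' : (0:ℝ) < β - 1 := by linarith
  refine ⟨Φ₀ * C₀ + D * C₀ * ((2:ℝ) ^ β / (1-ε)) + D * C₀ * ((2:ℝ) ^ ε / (β-1)), by positivity, ?_⟩
  intro t ht
  have h1t : (0:ℝ) < 1 + t := by linarith
  have ht2 : (0:ℝ) < t/2 := by linarith
  have h1t2 : (0:ℝ) < 1 + t/2 := by linarith
  have hεt : (0:ℝ) ≤ t ^ (-ε) := Real.rpow_nonneg ht.le _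
  rw [Real.rpow_zero, mul_one]
  have hA : Φ₀ * Fbar F t ≤ Φ₀ * C₀ * t ^ (-ε) := by
    have := htail t ht
    nlinarith [hF0 t]
  -- first raw term
  have hB : (1+t/2) ^ (-β) * ((t/2) ^ (1-ε) / (1-ε)) ≤ ((2:ℝ) ^ β / (1-ε)) * t ^ (-ε) := by
    have e1 : (1+t/2) ^ (-β) ≤ (2:ℝ) ^ β * (1+t) ^ (-β) := by
      have h0 : (1+t/2) ^ (-β) ≤ ((1+t)/2) ^ (-β) :=
        Real.rpow_le_rpow_of_nonpos (by linarith) (by linarith) (by linarith)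
      have h2 : ((1+t)/2) ^ (-β) = (1+t) ^ (-β) / (2:ℝ) ^ (-β) :=
        Real.div_rpow h1t.le (by norm_num) _
      rw [h2, Real.rpow_neg (by norm_num : (0:ℝ) ≤ 2)] at h0
      calc (1+t/2) ^ (-β) ≤ (1+t) ^ (-β) / ((2:ℝ) ^ β)⁻¹ := h0
        _ = (2:ℝ) ^ β * (1+t) ^ (-β) := by field_simp
    have e2 : (t/2) ^ (1-ε) ≤ t ^ (1-ε) :=
      Real.rpow_le_rpow ht2.le (by linarith) (by linarith)
    have e3 : t ^ (1-ε) * (1+t) ^ (-β) ≤ t ^ (-ε) := by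
      have f1 : t ^ (1-ε) = t ^ (-ε) * t := by
        rw [show (1-ε) = -ε + 1 by ring, Real.rpow_add ht, Real.rpow_one]
      have f4 : t * (1+t) ^ (-β) ≤ 1 := by
        have g1 : (1+t) ^ (1-β) = (1+t) ^ (-β) * (1+t) := by
          rw [show (1-β) = -β + 1 by ring, Real.rpow_add h1t, Real.rpow_one]
        have g2 : (1+t) ^ (1-β) ≤ 1 :=
          Real.rpow_le_one_of_one_le_of_nonpos (by linarith) (by linarith)
        have g3 : (0:ℝ) ≤ (1+t) ^ (-β) := Real.rpow_nonneg h1t.le _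
        nlinarith
      rw [f1, mul_assoc]
      nlinarith
    have e0 : (0:ℝ) ≤ (1+t) ^ (-β) := Real.rpow_nonneg h1t.le _
    have e4 : (1+t/2) ^ (-β) * (t/2) ^ (1-ε) ≤ (2:ℝ) ^ β * t ^ (-ε) := by
      calc (1+t/2) ^ (-β) * (t/2) ^ (1-ε) ≤ ((2:ℝ) ^ β * (1+t) ^ (-β)) * t ^ (1-ε) := by
            apply mul_le_mul e1 e2 (Real.rpow_nonneg ht2.le _); positivity
        _ = (2:ℝ) ^ β * (t ^ (1-ε) * (1+t) ^ (-β)) := by ring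
        _ ≤ (2:ℝ) ^ β * t ^ (-ε) := by apply mul_le_mul_of_nonneg_left e3 (by positivity)
    calc (1+t/2) ^ (-β) * ((t/2) ^ (1-ε) / (1-ε))
        = ((1+t/2) ^ (-β) * (t/2) ^ (1-ε)) / (1-ε) := by ring
      _ ≤ ((2:ℝ) ^ β * t ^ (-ε)) / (1-ε) := (div_le_div_iff_of_pos_right hε').mpr e4
      _ = ((2:ℝ) ^ β / (1-ε)) * t ^ (-ε) := by ring
  -- second raw term
  have hCterm : (t/2) ^ (-ε) * (((1+t/2) ^ (1-β) - 1) / (1-β)) ≤ ((2:ℝ) ^ ε / (β-1)) * t ^ (-ε) := by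
    have e1 : (t/2) ^ (-ε) = (2:ℝ) ^ ε * t ^ (-ε) := by
      rw [show t/2 = t * (2:ℝ)⁻¹ by ring, Real.mul_rpow ht.le (by norm_num),
        Real.inv_rpow (by norm_num : (0:ℝ) ≤ 2), Real.rpow_neg (by norm_num : (0:ℝ) ≤ 2), inv_inv]
      ring
    have e2 : ((1+t/2) ^ (1-β) - 1) / (1-β) ≤ 1 / (β-1) := by
      have hA0 : (0:ℝ) ≤ (1+t/2) ^ (1-β) := Real.rpow_nonneg h1t2.le _
      have heq : ((1+t/2) ^ (1-β) - 1) / (1-β) = (1 - (1+t/2) ^ (1-β)) / (β-1) := by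
        rw [div_eq_div_iff (by linarith) (by linarith)]; ring
      rw [heq]
      exact (div_le_div_iff_of_pos_right hβ').mpr (by linarith)
    calc (t/2) ^ (-ε) * (((1+t/2) ^ (1-β) - 1) / (1-β))
        ≤ (t/2) ^ (-ε) * (1 / (β-1)) := by
          apply mul_le_mul_of_nonneg_left e2 (Real.rpow_nonneg ht2.le _)
      _ = ((2:ℝ) ^ ε / (β-1)) * t ^ (-ε) := by rw [e1]; ring
  have hraw := conv_raw F g hF0 ε C₀ hε0 hε1 hC₀ htail β D (by linarith) (by linarith) hD hgb t ht
  have hBC : |Bop F g t| ≤ (D * C₀ * ((2:ℝ) ^ β / (1-ε)) + D * C₀ * ((2:ℝ) ^ ε / (β-1))) * t ^ (-ε) := by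
    have b1 := mul_le_mul_of_nonneg_left hB (by positivity : (0:ℝ) ≤ D * C₀)
    have b2 := mul_le_mul_of_nonneg_left hCterm (by positivity : (0:ℝ) ≤ D * C₀)
    calc |Bop F g t| ≤ _ := hraw
      _ ≤ D * C₀ * (((2:ℝ) ^ β / (1-ε)) * t ^ (-ε)) + D * C₀ * (((2:ℝ) ^ ε / (β-1)) * t ^ (-ε)) :=
          add_le_add b1 b2
      _ = _ := by ring
  calc Φ₀ * Fbar F t + |Bop F g t| ≤ _ := add_le_add hA hBC
    _ = _ := by ring

lemma vol (γ α μ Φ₀ : ℝ) (hγ : 1 < γ) (hα : 0 < α) (hμ : 0 < μ)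
    (F g : ℝ → ℝ) (hF0 : ∀ x, 0 ≤ Fbar F x) (hΦ₀ : 0 < Φ₀)
    (hg : IsVolterraSol γ α μ Φ₀ F g)
    (ε : ℝ) (hε0 : 0 < ε) (hγε : 0 < γ - 1 - ε)
    (σ M : ℝ) (hσ : 0 ≤ σ) (hM : 0 < M)
    (hconv : ∀ t : ℝ, 0 < t → Φ₀ * Fbar F t + |Bop F g t| ≤ M * (t ^ (-ε) * (1+t) ^ σ)) :
    ∀ u : ℝ, 1 ≤ u → |g u| ≤ (μ * Real.exp α * M * 2 ^ σ / (γ-1-ε)) * u ^ (σ - 1 - ε) := by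
  intro u hu
  have hu0 : (0:ℝ) < u := by linarith
  rw [hg.2 u hu0]
  have hexp : (0:ℝ) < Real.exp (α / u) := Real.exp_pos _
  have huγ : (0:ℝ) < u ^ (-γ) := Real.rpow_pos_of_pos hu0 _
  rw [abs_mul, abs_of_pos (by positivity : (0:ℝ) < μ * u ^ (-γ) * Real.exp (α / u))]
  set I := ∫ t in (0:ℝ)..u, t ^ (γ - 2) * Real.exp (-α / t) * (Φ₀ * Fbar F t + Bop F g t) with hI
  have hIb : |I| ≤ (M * (1+u) ^ σ) * (u ^ (γ-1-ε) / (γ-1-ε)) := by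
    have h1 : |I| ≤ |∫ t in (0:ℝ)..u, t ^ (γ-2-ε) * (M * (1+u) ^ σ)| := by
      rw [hI, ← Real.norm_eq_abs]
      apply intervalIntegral.norm_integral_le_abs_of_norm_le
      · rw [MeasureTheory.ae_restrict_iff' measurableSet_uIoc]
        apply MeasureTheory.ae_of_all
        intro t htm
        rw [Set.uIoc_of_le hu0.le] at htm
        have ht0 : 0 < t := htm.1
        have htu : t ≤ u := htm.2
        have e1 : ‖t ^ (γ-2) * Real.exp (-α / t) * (Φ₀ * Fbar F t + Bop F g t)‖
            = t ^ (γ-2) * Real.exp (-α / t) * |Φ₀ * Fbar F t + Bop F g t| := by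
          rw [norm_mul, norm_mul, Real.norm_eq_abs, Real.norm_eq_abs, Real.norm_eq_abs,
            abs_of_nonneg (Real.rpow_nonneg ht0.le _), abs_of_pos (Real.exp_pos _)]
        rw [e1]
        have e2 : |Φ₀ * Fbar F t + Bop F g t| ≤ Φ₀ * Fbar F t + |Bop F g t| := by
          calc |Φ₀ * Fbar F t + Bop F g t| ≤ |Φ₀ * Fbar F t| + |Bop F g t| := abs_add_le _ _
            _ = Φ₀ * Fbar F t + |Bop F g t| := by
                rw [abs_of_nonneg (by have := hF0 t; positivity)]
        have e3 : Real.exp (-α / t) ≤ 1 := by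
          rw [Real.exp_le_one_iff, neg_div]
          have : 0 < α / t := by positivity
          linarith
        have e4 : (1+t) ^ σ ≤ (1+u) ^ σ := Real.rpow_le_rpow (by linarith) (by linarith) hσ
        have e5 : M * (t ^ (-ε) * (1+t) ^ σ) ≤ M * (t ^ (-ε) * (1+u) ^ σ) := by
          apply mul_le_mul_of_nonneg_left _ hM.le
          exact mul_le_mul_of_nonneg_left e4 (Real.rpow_nonneg ht0.le _)
        have e6 : t ^ (γ-2) * (M * (t ^ (-ε) * (1+u) ^ σ)) = t ^ (γ-2-ε) * (M * (1+u) ^ σ) := by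
          rw [show γ-2-ε = (γ-2) + (-ε) by ring, Real.rpow_add ht0]; ring
        have hrt : (0:ℝ) ≤ t ^ (γ-2) := Real.rpow_nonneg ht0.le _
        calc t ^ (γ-2) * Real.exp (-α / t) * |Φ₀ * Fbar F t + Bop F g t|
            ≤ t ^ (γ-2) * 1 * (Φ₀ * Fbar F t + |Bop F g t|) := by
              apply mul_le_mul (mul_le_mul_of_nonneg_left e3 hrt) e2 (abs_nonneg _)
              nlinarith [Real.exp_pos (-α / t)]
          _ = t ^ (γ-2) * (Φ₀ * Fbar F t + |Bop F g t|) := by ring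
          _ ≤ t ^ (γ-2) * (M * (t ^ (-ε) * (1+t) ^ σ)) :=
              mul_le_mul_of_nonneg_left (hconv t ht0) hrt
          _ ≤ t ^ (γ-2) * (M * (t ^ (-ε) * (1+u) ^ σ)) := mul_le_mul_of_nonneg_left e5 hrt
          _ = t ^ (γ-2-ε) * (M * (1+u) ^ σ) := e6
      · exact (intervalIntegrable_rpow' (by linarith)).mul_const _
    have h2 : (∫ t in (0:ℝ)..u, t ^ (γ-2-ε) * (M * (1+u) ^ σ))
        = (u ^ (γ-1-ε) / (γ-1-ε)) * (M * (1+u) ^ σ) := by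
      rw [intervalIntegral.integral_mul_const, integral_rpow (Or.inl (by linarith))]
      rw [Real.zero_rpow (by intro h; linarith [h.le] : γ-2-ε + 1 ≠ 0),
        show γ-2-ε+1 = γ-1-ε by ring]
      ring_nf
    rw [h2] at h1
    calc |I| ≤ _ := h1
      _ = (M * (1+u) ^ σ) * (u ^ (γ-1-ε) / (γ-1-ε)) := by
          rw [abs_of_nonneg]
          · ring
          · have h3 : (0:ℝ) ≤ u ^ (γ-1-ε) := Real.rpow_nonneg hu0.le _
            have h4 : (0:ℝ) ≤ (1+u) ^ σ := Real.rpow_nonneg (by linarith) _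
            positivity
  -- assemble
  have hexpb : Real.exp (α / u) ≤ Real.exp α := by
    apply Real.exp_le_exp.mpr
    calc α / u ≤ α / 1 := by apply div_le_div_of_nonneg_left hα.le one_pos hu -- maybe rename
    _ = α := by ring
  have h2u : (1+u) ^ σ ≤ 2 ^ σ * u ^ σ := by
    calc (1+u) ^ σ ≤ (2*u) ^ σ := Real.rpow_le_rpow (by linarith) (by linarith) hσ
      _ = 2 ^ σ * u ^ σ := Real.mul_rpow (by norm_num) hu0.le
  have hpow : u ^ (-γ) * (u ^ σ * u ^ (γ-1-ε)) = u ^ (σ-1-ε) := by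
    rw [← Real.rpow_add hu0, ← Real.rpow_add hu0, show -γ + (σ + (γ-1-ε)) = σ-1-ε by ring]
  calc μ * u ^ (-γ) * Real.exp (α / u) * |I|
      ≤ μ * u ^ (-γ) * Real.exp (α / u) * ((M * (1+u) ^ σ) * (u ^ (γ-1-ε) / (γ-1-ε))) := by
        apply mul_le_mul_of_nonneg_left hIb (by positivity)
    _ ≤ μ * u ^ (-γ) * Real.exp α * ((M * (2 ^ σ * u ^ σ)) * (u ^ (γ-1-ε) / (γ-1-ε))) := by
        have h3 : (0:ℝ) ≤ u ^ (γ-1-ε) / (γ-1-ε) := by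
          have := Real.rpow_nonneg hu0.le (γ-1-ε); positivity
        have hm1 : (M * (1+u) ^ σ) * (u ^ (γ-1-ε) / (γ-1-ε))
            ≤ (M * (2 ^ σ * u ^ σ)) * (u ^ (γ-1-ε) / (γ-1-ε)) := by
          apply mul_le_mul_of_nonneg_right (mul_le_mul_of_nonneg_left h2u hM.le) h3
        have hm2 : μ * u ^ (-γ) * Real.exp (α / u) ≤ μ * u ^ (-γ) * Real.exp α := by
          apply mul_le_mul_of_nonneg_left hexpb (by positivity)
        have hnn : (0:ℝ) ≤ (M * (1+u) ^ σ) * (u ^ (γ-1-ε) / (γ-1-ε)) := by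
          have := Real.rpow_nonneg (by linarith : (0:ℝ) ≤ 1+u) σ; positivity
        apply mul_le_mul hm2 hm1 hnn (by positivity)
    _ = (μ * Real.exp α * M * 2 ^ σ / (γ-1-ε)) * (u ^ (-γ) * (u ^ σ * u ^ (γ-1-ε))) := by ring
    _ = _ := by rw [hpow]

theorem stmt7 (γ α μ : ℝ) (hγ : 1 < γ) (hα : 0 < α) (hμ : 0 < μ)
    (F : ℝ → ℝ) (hF : IsCDF F) (Φ₀ : ℝ) (hΦ₀ : 0 < Φ₀)
    (ε C₀ : ℝ) (hε : ε ∈ Set.Ioo (0:ℝ) 1) (hγε : 0 < γ - 1 - ε) (hC₀ : 0 < C₀)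
    (htail : ∀ z : ℝ, 0 < z → Fbar F z ≤ C₀ * z ^ (-ε))
    (g : ℝ → ℝ) (hg : IsVolterraSol γ α μ Φ₀ F g)
    (δ : ℝ) (hδ : δ ∈ Set.Icc (0:ℝ) 1) (C : ℝ) (hC : 0 < C)
    (hgdec : ∀ u : ℝ, 0 ≤ u → |g u| ≤ C * (1 + u) ^ (-δ)) :
    ∃ C' : ℝ, 0 < C' ∧ ∃ U : ℝ, 0 < U ∧
      ∀ u : ℝ, U ≤ u → |g u| ≤ C' * u ^ (-(δ + ε)) := by
  have hF0 : ∀ x, 0 ≤ Fbar F x := by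
    intro x
    have : F x ≤ 1 := hF.1.ge_of_tendsto hF.2.2.2 x
    simp only [Fbar]; linarith
  obtain ⟨hε0, hε1⟩ := hε
  rcases lt_or_eq_of_le hδ.2 with hlt | heq
  · -- δ < 1
    obtain ⟨M, hM, hMc⟩ := conv_lt F g hF0 Φ₀ hΦ₀ ε C₀ hε0 hε1 hC₀ htail δ C hδ.1 hlt hC
      (fun s hs => hgdec s hs)
    have hb := vol γ α μ Φ₀ hγ hα hμ F g hF0 hΦ₀ hg ε hε0 hγε (1-δ) M (by linarith) hM hMc
    refine ⟨μ * Real.exp α * M * 2 ^ (1-δ) / (γ-1-ε), by positivity, 1, one_pos, ?_⟩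
    intro u hu
    have := hb u hu
    rwa [show (1-δ)-1-ε = -(δ+ε) by ring] at this
  · -- δ = 1
    subst heq
    have hgb1 : ∀ s : ℝ, 0 ≤ s → |g s| ≤ C * (1+s) ^ (-(1-ε/2)) := by
      intro s hs
      refine (hgdec s hs).trans (mul_le_mul_of_nonneg_left ?_ hC.le)
      exact Real.rpow_le_rpow_of_exponent_le (by linarith) (by linarith)
    obtain ⟨M₁, hM₁, hc1⟩ := conv_lt F g hF0 Φ₀ hΦ₀ ε C₀ hε0 hε1 hC₀ htail (1-ε/2) C
      (by linarith) (by linarith) hC hgb1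
    have hb1 := vol γ α μ Φ₀ hγ hα hμ F g hF0 hΦ₀ hg ε hε0 hγε (1-(1-ε/2)) M₁
      (by linarith) hM₁ hc1
    set θ : ℝ := 1 + ε/2 with hθ
    have hθ1 : (1:ℝ) < θ := by rw [hθ]; linarith
    set K₁ : ℝ := μ * Real.exp α * M₁ * 2 ^ (1-(1-ε/2)) / (γ-1-ε) with hK₁
    have hK₁0 : 0 < K₁ := by rw [hK₁]; positivity
    have hb1' : ∀ u : ℝ, 1 ≤ u → |g u| ≤ K₁ * u ^ (-θ) := by
      intro u hu
      have := hb1 u hu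
      rwa [show (1-(1-ε/2))-1-ε = -θ by rw [hθ]; ring] at this
    set D₂ : ℝ := 2 ^ θ * max K₁ C with hD₂
    have hD₂0 : 0 < D₂ := by
      have : (0:ℝ) < max K₁ C := lt_max_of_lt_left hK₁0
      rw [hD₂]; positivity
    have hgb2 : ∀ s : ℝ, 0 ≤ s → |g s| ≤ D₂ * (1+s) ^ (-θ) := by
      intro s hs
      have h1s : (0:ℝ) < 1 + s := by linarith
      have hpowpos : (0:ℝ) ≤ (1+s) ^ (-θ) := Real.rpow_nonneg h1s.le _
      rcases le_or_gt 1 s with h1 | h1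
      · have e1 : s ^ (-θ) ≤ ((1+s)/2) ^ (-θ) :=
          Real.rpow_le_rpow_of_nonpos (by linarith) (by linarith) (by linarith)
        have e2 : ((1+s)/2) ^ (-θ) = 2 ^ θ * (1+s) ^ (-θ) := by
          rw [show (1+s)/2 = (1+s) * 2⁻¹ by ring, Real.mul_rpow h1s.le (by norm_num),
            Real.inv_rpow (by norm_num : (0:ℝ) ≤ 2), Real.rpow_neg (by norm_num : (0:ℝ) ≤ 2),
            inv_inv]
          ring
        calc |g s| ≤ K₁ * s ^ (-θ) := hb1' s h1
          _ ≤ K₁ * (2 ^ θ * (1+s) ^ (-θ)) := by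
              rw [← e2]; exact mul_le_mul_of_nonneg_left e1 hK₁0.le
          _ = (2 ^ θ * K₁) * (1+s) ^ (-θ) := by ring
          _ ≤ D₂ * (1+s) ^ (-θ) := by
              apply mul_le_mul_of_nonneg_right _ hpowpos
              rw [hD₂]
              exact mul_le_mul_of_nonneg_left (le_max_left _ _) (by positivity)
      · have e1 : (1+s) ^ (-(1:ℝ)) = (1+s) ^ (θ - 1 - θ) := by norm_num
        have e2 : (1+s) ^ (-(1:ℝ)) ≤ 2 ^ θ * (1+s) ^ (-θ) := by
          rw [e1, show θ - 1 - θ = (θ-1) + (-θ) by ring, Real.rpow_add h1s]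
          apply mul_le_mul_of_nonneg_right _ hpowpos
          calc (1+s) ^ (θ-1) ≤ (2:ℝ) ^ (θ-1) :=
              Real.rpow_le_rpow h1s.le (by linarith) (by linarith)
            _ ≤ (2:ℝ) ^ θ := Real.rpow_le_rpow_of_exponent_le (by norm_num) (by linarith)
        calc |g s| ≤ C * (1+s) ^ (-(1:ℝ)) := hgdec s hs
          _ ≤ C * (2 ^ θ * (1+s) ^ (-θ)) := mul_le_mul_of_nonneg_left e2 hC.le
          _ = (2 ^ θ * C) * (1+s) ^ (-θ) := by ring
          _ ≤ D₂ * (1+s) ^ (-θ) := by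
              apply mul_le_mul_of_nonneg_right _ hpowpos
              rw [hD₂]
              exact mul_le_mul_of_nonneg_left (le_max_right _ _) (by positivity)
    obtain ⟨M₂, hM₂, hc2⟩ := conv_gt F g hF0 Φ₀ hΦ₀ ε C₀ hε0 hε1 hC₀ htail θ D₂ hθ1 hD₂0 hgb2
    have hb2 := vol γ α μ Φ₀ hγ hα hμ F g hF0 hΦ₀ hg ε hε0 hγε 0 M₂ le_rfl hM₂ hc2
    refine ⟨μ * Real.exp α * M₂ * 2 ^ (0:ℝ) / (γ-1-ε), by positivity, 1, one_pos, ?_⟩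
    intro u hu
    have := hb2 u hu
    rwa [show (0:ℝ)-1-ε = -(1+ε) by ring] at this
end

section
/- Absolute integrability (Lemma 3): suppose ε ∈ (0,1) with γ − 1 − ε > 0 and C₀ > 0 with F̄(z) ≤ C₀ z^{−ε} for all z > 0, and let g be a continuous solution of the Volterra equation (★) on [0, ∞). Then there exist C > 0 and U > 0 such that |g(u)| ≤ C u^{−1−ε} for all u ≥ U; in particular g is Lebesgue integrable on (0, ∞): ∫₀^∞ |g(u)| du < ∞. -/
set_option maxHeartbeats 1000000


open MeasureTheory Filter Set Topology

section aux

variable {F G : ℝ → ℝ}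

/-- workhorse: bounded measurable on finite-measure set is integrable -/
lemma integrableOn_of_bound {f : ℝ → ℝ} {s : Set ℝ} (hs : MeasurableSet s)
    (hvol : volume s < ⊤) (hm : AEStronglyMeasurable f (volume.restrict s))
    (c : ℝ) (hb : ∀ x ∈ s, |f x| ≤ c) : IntegrableOn f s := by
  refine Integrable.mono' ((integrableOn_const_iff (C := c)).2 (Or.inr hvol)) hm ?_
  exact ae_restrict_of_forall_mem hs (fun x hx => by simpa using hb x hx)

lemma integrableOn_rpow_Ioc {u c : ℝ} (hu : 0 < u) (hc : -1 < c) :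
    IntegrableOn (fun t : ℝ => t ^ c) (Ioc 0 u) := by
  have h := intervalIntegral.intervalIntegrable_rpow' (a := 0) (b := u) hc
  exact h.1

lemma integrableOn_of_rpow_bound {f : ℝ → ℝ} {u c C : ℝ} (hu : 0 < u) (hc : -1 < c)
    (hm : AEStronglyMeasurable f (volume.restrict (Ioc 0 u)))
    (hb : ∀ t ∈ Ioc (0:ℝ) u, |f t| ≤ C * t ^ c) : IntegrableOn f (Ioc 0 u) := by
  refine Integrable.mono' ((integrableOn_rpow_Ioc hu hc).const_mul C) hm ?_
  exact ae_restrict_of_forall_mem measurableSet_Ioc (fun x hx => by simpa using hb x hx)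

lemma int_rpow_Ioc {u c : ℝ} (hu : 0 < u) (hc : -1 < c) :
    ∫ t in Ioc (0:ℝ) u, t ^ c = u ^ (c+1) / (c+1) := by
  rw [← intervalIntegral.integral_of_le hu.le, integral_rpow (Or.inl hc),
    Real.zero_rpow (by linarith : c + 1 ≠ 0)]
  ring

lemma Fbar_nonneg (hF : Monotone F) (hF0 : ∀ x ≤ 0, F x = 0) (hFtop : Tendsto F atTop (𝓝 1)) :
    ∀ y, 0 ≤ Fbar F y := by
  intro y
  have := hF.ge_of_tendsto hFtop y
  simp [Fbar]; linarith

lemma Fbar_le_one (hF : Monotone F) (hF0 : ∀ x ≤ 0, F x = 0) : ∀ y, Fbar F y ≤ 1 := by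
  intro y
  rcases le_or_gt y 0 with h | h
  · simp [Fbar, hF0 y h]
  · have : F 0 ≤ F y := hF h.le
    rw [hF0 0 le_rfl] at this
    simp [Fbar]; linarith

lemma Fbar_meas (hF : Monotone F) : Measurable (Fbar F) :=
  measurable_const.sub hF.measurable

/-- a measurable version of `Bop F G` on the nonnegative axis -/
lemma Bop_meas (hG : Continuous G) (hF : Monotone F) :
    ∃ φ : ℝ → ℝ, Measurable φ ∧ ∀ t, 0 ≤ t → Bop F G t = φ t := by
  set k : ℝ × ℝ → ℝ :=
    fun p => Set.indicator {q : ℝ × ℝ | 0 < q.2 ∧ q.2 ≤ q.1}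
      (fun q => G (q.1 - q.2) * Fbar F q.2) p with hk
  have hS : MeasurableSet {q : ℝ × ℝ | 0 < q.2 ∧ q.2 ≤ q.1} :=
    (measurableSet_lt measurable_const measurable_snd).inter
      (measurableSet_le measurable_snd measurable_fst)
  have hkm : Measurable k :=
    ((hG.measurable.comp (measurable_fst.sub measurable_snd)).mul
      ((Fbar_meas hF).comp measurable_snd)).indicator hS
  refine ⟨fun t => ∫ y, k (t, y), ?_, ?_⟩
  · exact (hkm.stronglyMeasurable.integral_prod_right').measurable
  · intro t ht
    rw [Bop, intervalIntegral.integral_of_le ht]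
    have : ∀ y : ℝ, k (t, y) = (Ioc (0:ℝ) t).indicator (fun y => G (t - y) * Fbar F y) y := by
      intro y
      simp only [hk, Set.indicator_apply, Set.mem_setOf_eq, Set.mem_Ioc]
    calc ∫ y in Ioc (0:ℝ) t, G (t - y) * Fbar F y
        = ∫ y, (Ioc (0:ℝ) t).indicator (fun y => G (t - y) * Fbar F y) y :=
          (integral_indicator measurableSet_Ioc).symm
      _ = ∫ y, k (t, y) := by simp_rw [this]

end aux

section aux2

variable {F G : ℝ → ℝ} {ε C₀ : ℝ}

lemma measurable_rpow_const (c : ℝ) : Measurable fun x : ℝ => x ^ c :=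
  measurable_of_continuousOn_compl_singleton 0 (continuousOn_of_forall_continuousAt
    fun x hx => Real.continuousAt_rpow_const x c (Or.inl (by simpa using hx)))

lemma integrableOn_conv (hG : Continuous G) (hF : Monotone F)
    (hF0 : ∀ y, 0 ≤ Fbar F y) (hF1 : ∀ y, Fbar F y ≤ 1) (t a b : ℝ) :
    IntegrableOn (fun y => |G (t - y)| * Fbar F y) (Ioc a b) := by
  obtain ⟨c, hc⟩ := (isCompact_Icc (a := a) (b := b)).exists_bound_of_continuousOn
    ((hG.comp (continuous_const.sub continuous_id)).continuousOn)
  refine integrableOn_of_bound measurableSet_Ioc measure_Ioc_lt_top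
    (((hG.measurable.comp (measurable_const.sub measurable_id)).abs.mul
      (Fbar_meas hF)).aestronglyMeasurable) (max c 0) ?_
  intro y hy
  have h1 : |G (t - y)| ≤ max c 0 := by
    have := hc y (Ioc_subset_Icc_self hy)
    simp only [Function.comp, Real.norm_eq_abs] at this
    exact le_trans this (le_max_left _ _)
  have h2 : 0 ≤ |G (t - y)| * Fbar F y := mul_nonneg (abs_nonneg _) (hF0 y)
  rw [abs_of_nonneg h2]
  calc |G (t - y)| * Fbar F y ≤ max c 0 * 1 :=
        mul_le_mul h1 (hF1 y) (hF0 y) (le_max_right _ _)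
    _ = max c 0 := mul_one _

lemma abs_Bop_le (hF0 : ∀ y, 0 ≤ Fbar F y) {t : ℝ} (ht : 0 ≤ t) :
    |Bop F G t| ≤ ∫ y in Ioc (0:ℝ) t, |G (t - y)| * Fbar F y := by
  rw [Bop]
  refine le_trans (intervalIntegral.abs_integral_le_integral_abs ht) (le_of_eq ?_)
  rw [intervalIntegral.integral_of_le ht]
  refine setIntegral_congr_fun measurableSet_Ioc (fun y _ => ?_)
  rw [abs_mul, abs_of_nonneg (hF0 y)]

/-- crude convolution bound via a uniform bound for `G` on `[0,u]` -/
lemma Bop_bound0 (hG : Continuous G) (hF : Monotone F)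
    (hF0 : ∀ y, 0 ≤ Fbar F y) (hF1 : ∀ y, Fbar F y ≤ 1)
    (hε0 : 0 < ε) (hε1 : ε < 1) (hC₀ : 0 < C₀)
    (htail : ∀ z : ℝ, 0 < z → Fbar F z ≤ C₀ * z ^ (-ε))
    {u Nu : ℝ} (hu : 0 < u) (hNu : ∀ v ∈ Icc (0:ℝ) u, |G v| ≤ Nu) :
    ∀ t ∈ Ioc (0:ℝ) u, |Bop F G t| ≤ (Nu * C₀ / (1 - ε)) * t ^ (1 - ε) := by
  intro t ht
  have hNu0 : 0 ≤ Nu := le_trans (abs_nonneg _) (hNu 0 ⟨le_rfl, hu.le⟩)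
  have hmono : ∫ y in Ioc (0:ℝ) t, |G (t - y)| * Fbar F y
      ≤ ∫ y in Ioc (0:ℝ) t, Nu * (C₀ * y ^ (-ε)) := by
    refine setIntegral_mono_on (integrableOn_conv hG hF hF0 hF1 t 0 t)
      (((integrableOn_rpow_Ioc ht.1 (by linarith)).const_mul C₀).const_mul Nu)
      measurableSet_Ioc ?_
    intro y hy
    have hty : t - y ∈ Icc (0:ℝ) u := ⟨by linarith [hy.2], by linarith [hy.1, ht.2]⟩
    exact mul_le_mul (hNu _ hty) (htail y hy.1) (hF0 y) hNu0
  have hval : ∫ y in Ioc (0:ℝ) t, Nu * (C₀ * y ^ (-ε))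
      = (Nu * C₀ / (1 - ε)) * t ^ (1 - ε) := by
    rw [integral_const_mul, integral_const_mul, int_rpow_Ioc ht.1 (by linarith)]
    have h1 : -ε + 1 = 1 - ε := by ring
    rw [h1]; field_simp
  calc |Bop F G t| ≤ ∫ y in Ioc (0:ℝ) t, |G (t - y)| * Fbar F y := abs_Bop_le hF0 ht.1.le
    _ ≤ _ := hmono
    _ = _ := hval

end aux2

section engine

variable {γ α μ Φ₀ ε C₀ : ℝ} {F G : ℝ → ℝ}

lemma engine (hα : 0 < α) (hμ : 0 < μ) (hΦ₀ : 0 < Φ₀) (hC₀ : 0 < C₀)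
    (hε0 : 0 < ε) (hγε : 0 < γ - 1 - ε)
    (hFmono : Monotone F) (hF0 : ∀ y, 0 ≤ Fbar F y) (hF1 : ∀ y, Fbar F y ≤ 1)
    (htail : ∀ z : ℝ, 0 < z → Fbar F z ≤ C₀ * z ^ (-ε))
    (hG : Continuous G)
    (heq : ∀ u : ℝ, 0 < u → G u = μ * u ^ (-γ) * Real.exp (α / u) *
      ∫ t in (0:ℝ)..u, t ^ (γ - 2) * Real.exp (-α / t) * (Φ₀ * Fbar F t + Bop F G t))
    {u δ K₁ K₂ : ℝ} (hu : 0 < u) (hK₁ : 0 ≤ K₁) (hK₂ : 0 ≤ K₂)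
    (hδ0 : 0 ≤ δ) (hδγ : δ < γ - ε)
    (hB : ∀ t ∈ Ioc (0:ℝ) u, |Bop F G t| ≤ K₁ * t ^ (-ε) + K₂ * t ^ (1 - ε - δ)) :
    |G u| ≤ (μ * (Φ₀ * C₀ + K₁) / (γ - 1 - ε)) * u ^ (-1 - ε)
      + (μ * K₂ / (γ - ε - δ)) * u ^ (-(ε + δ)) := by
  obtain ⟨φ, hφm, hφeq⟩ := Bop_meas hG hFmono
  set f : ℝ → ℝ := fun t => t ^ (γ - 2) * Real.exp (-α / t) * (Φ₀ * Fbar F t + Bop F G t)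
    with hf
  set h : ℝ → ℝ := fun t => Real.exp (-α / u) *
      ((Φ₀ * C₀ + K₁) * (t ^ (γ - 2) * t ^ (-ε)) + K₂ * (t ^ (γ - 2) * t ^ (1 - ε - δ)))
    with hh
  -- pointwise bound
  have hpt : ∀ t ∈ Ioc (0:ℝ) u, |f t| ≤ h t := by
    intro t ht
    have ht0 : (0:ℝ) < t := ht.1
    have hr : (0:ℝ) ≤ t ^ (γ - 2) := Real.rpow_nonneg ht0.le _
    have habs : |f t| = t ^ (γ - 2) * (Real.exp (-α / t) * |Φ₀ * Fbar F t + Bop F G t|) := by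
      rw [hf]
      rw [abs_mul, abs_mul, abs_of_nonneg hr, abs_of_nonneg (Real.exp_pos _).le, mul_assoc]
    rw [habs, hh]
    have hexp : Real.exp (-α / t) ≤ Real.exp (-α / u) := by
      apply Real.exp_le_exp.2
      have : α / u ≤ α / t := div_le_div_of_nonneg_left hα.le ht0 ht.2
      rw [neg_div, neg_div]
      linarith
    have hX : |Φ₀ * Fbar F t + Bop F G t|
        ≤ (Φ₀ * C₀ + K₁) * t ^ (-ε) + K₂ * t ^ (1 - ε - δ) := by
      have h1 : |Φ₀ * Fbar F t + Bop F G t| ≤ Φ₀ * Fbar F t + |Bop F G t| := by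
        calc |Φ₀ * Fbar F t + Bop F G t| ≤ |Φ₀ * Fbar F t| + |Bop F G t| := abs_add_le _ _
          _ = Φ₀ * Fbar F t + |Bop F G t| := by
              rw [abs_of_nonneg (mul_nonneg hΦ₀.le (hF0 t))]
      have h2 : Φ₀ * Fbar F t ≤ Φ₀ * (C₀ * t ^ (-ε)) :=
        mul_le_mul_of_nonneg_left (htail t ht0) hΦ₀.le
      have h3 := hB t ht
      calc |Φ₀ * Fbar F t + Bop F G t| ≤ Φ₀ * (C₀ * t ^ (-ε)) + (K₁ * t ^ (-ε)
            + K₂ * t ^ (1 - ε - δ)) := by linarith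
        _ = (Φ₀ * C₀ + K₁) * t ^ (-ε) + K₂ * t ^ (1 - ε - δ) := by ring
    calc t ^ (γ - 2) * (Real.exp (-α / t) * |Φ₀ * Fbar F t + Bop F G t|)
        ≤ t ^ (γ - 2) * (Real.exp (-α / u) * ((Φ₀ * C₀ + K₁) * t ^ (-ε)
            + K₂ * t ^ (1 - ε - δ))) := by
          refine mul_le_mul_of_nonneg_left ?_ hr
          exact mul_le_mul hexp hX (abs_nonneg _) (Real.exp_pos _).le
      _ = Real.exp (-α / u) * ((Φ₀ * C₀ + K₁) * (t ^ (γ - 2) * t ^ (-ε))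
            + K₂ * (t ^ (γ - 2) * t ^ (1 - ε - δ))) := by ring
  -- integrability of pieces
  have hq : ∀ c : ℝ, -1 < γ - 2 + c → IntegrableOn (fun t => t ^ (γ - 2) * t ^ c) (Ioc 0 u) := by
    intro c hc
    refine (integrableOn_rpow_Ioc hu hc).congr_fun (fun t ht => ?_) measurableSet_Ioc
    exact Real.rpow_add ht.1 _ _
  have hc1 : (-1:ℝ) < γ - 2 + -ε := by linarith
  have hc2 : (-1:ℝ) < γ - 2 + (1 - ε - δ) := by linarith
  have hhi : IntegrableOn h (Ioc 0 u) :=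
    ((((hq (-ε) hc1).const_mul (Φ₀ * C₀ + K₁)).add
      ((hq (1 - ε - δ) hc2).const_mul K₂)).const_mul (Real.exp (-α / u)))
  -- measurability of f
  have hfae : AEStronglyMeasurable f (volume.restrict (Ioc 0 u)) := by
    have hmexp : Measurable fun t : ℝ => Real.exp (-α / t) :=
      Real.measurable_exp.comp (measurable_const.div measurable_id)
    have hm : Measurable fun t => t ^ (γ - 2) * Real.exp (-α / t) * (Φ₀ * Fbar F t + φ t) :=
      ((measurable_rpow_const (γ - 2)).mul hmexp).mul
        ((measurable_const.mul (Fbar_meas hFmono)).add hφm)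
    refine hm.aestronglyMeasurable.congr ?_
    refine ae_restrict_of_forall_mem measurableSet_Ioc (fun t ht => ?_)
    rw [hf]
    simp only []
    rw [hφeq t ht.1.le]
  -- integrability of f
  have hfi : IntegrableOn f (Ioc 0 u) := by
    refine Integrable.mono' hhi hfae ?_
    exact ae_restrict_of_forall_mem measurableSet_Ioc (fun t ht => by
      simpa using hpt t ht)
  -- value of ∫ h
  have e1 : ∫ t in Ioc (0:ℝ) u, t ^ (γ - 2) * t ^ (-ε) = u ^ (γ - 1 - ε) / (γ - 1 - ε) := by
    rw [setIntegral_congr_fun measurableSet_Ioc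
      (fun t (ht : t ∈ Ioc (0:ℝ) u) => (Real.rpow_add ht.1 (γ-2) (-ε)).symm),
      int_rpow_Ioc hu hc1]
    have : γ - 2 + -ε + 1 = γ - 1 - ε := by ring
    rw [this]
  have e2 : ∫ t in Ioc (0:ℝ) u, t ^ (γ - 2) * t ^ (1 - ε - δ)
      = u ^ (γ - ε - δ) / (γ - ε - δ) := by
    rw [setIntegral_congr_fun measurableSet_Ioc
      (fun t (ht : t ∈ Ioc (0:ℝ) u) => (Real.rpow_add ht.1 (γ-2) (1-ε-δ)).symm),
      int_rpow_Ioc hu hc2]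
    have : γ - 2 + (1 - ε - δ) + 1 = γ - ε - δ := by ring
    rw [this]
  have hIntH : ∫ t in Ioc (0:ℝ) u, h t = Real.exp (-α / u) *
      ((Φ₀ * C₀ + K₁) * (u ^ (γ - 1 - ε) / (γ - 1 - ε))
        + K₂ * (u ^ (γ - ε - δ) / (γ - ε - δ))) := by
    rw [hh]
    rw [integral_const_mul]
    congr 1
    rw [integral_add (((hq (-ε) hc1).const_mul (Φ₀ * C₀ + K₁)))
      (((hq (1 - ε - δ) hc2).const_mul K₂)), integral_const_mul, integral_const_mul, e1, e2]
  -- main estimate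
  have hmain : |G u| ≤ μ * u ^ (-γ) * (((Φ₀ * C₀ + K₁) * (u ^ (γ - 1 - ε) / (γ - 1 - ε))
        + K₂ * (u ^ (γ - ε - δ) / (γ - ε - δ)))) := by
    have hpos : (0:ℝ) < μ * u ^ (-γ) * Real.exp (α / u) :=
      mul_pos (mul_pos hμ (Real.rpow_pos_of_pos hu _)) (Real.exp_pos _)
    have habs : |G u| = μ * u ^ (-γ) * Real.exp (α / u) * |∫ t in (0:ℝ)..u, f t| := by
      rw [heq u hu, abs_mul, abs_of_pos hpos]
    have h1 : |∫ t in (0:ℝ)..u, f t| ≤ ∫ t in Ioc (0:ℝ) u, h t := by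
      calc |∫ t in (0:ℝ)..u, f t| ≤ ∫ t in (0:ℝ)..u, |f t| :=
            intervalIntegral.abs_integral_le_integral_abs hu.le
        _ = ∫ t in Ioc (0:ℝ) u, |f t| := intervalIntegral.integral_of_le hu.le
        _ ≤ ∫ t in Ioc (0:ℝ) u, h t :=
            setIntegral_mono_on hfi.abs hhi measurableSet_Ioc hpt
    calc |G u| = μ * u ^ (-γ) * Real.exp (α / u) * |∫ t in (0:ℝ)..u, f t| := habs
      _ ≤ μ * u ^ (-γ) * Real.exp (α / u) * ∫ t in Ioc (0:ℝ) u, h t :=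
          mul_le_mul_of_nonneg_left h1 hpos.le
      _ = μ * u ^ (-γ) * (Real.exp (α / u) * Real.exp (-α / u)) *
          (((Φ₀ * C₀ + K₁) * (u ^ (γ - 1 - ε) / (γ - 1 - ε))
            + K₂ * (u ^ (γ - ε - δ) / (γ - ε - δ)))) := by rw [hIntH]; ring
      _ = _ := by
          rw [← Real.exp_add, show α / u + -α / u = 0 by ring, Real.exp_zero, mul_one]
  have hv1 : u ^ (-γ) * u ^ (γ - 1 - ε) = u ^ (-1 - ε) := by
    rw [← Real.rpow_add hu]; congr 1; ring
  have hv2 : u ^ (-γ) * u ^ (γ - ε - δ) = u ^ (-(ε + δ)) := by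
    rw [← Real.rpow_add hu]; congr 1; ring
  calc |G u| ≤ μ * u ^ (-γ) * (((Φ₀ * C₀ + K₁) * (u ^ (γ - 1 - ε) / (γ - 1 - ε))
        + K₂ * (u ^ (γ - ε - δ) / (γ - ε - δ)))) := hmain
    _ = (μ * (Φ₀ * C₀ + K₁) / (γ - 1 - ε)) * (u ^ (-γ) * u ^ (γ - 1 - ε))
        + (μ * K₂ / (γ - ε - δ)) * (u ^ (-γ) * u ^ (γ - ε - δ)) := by ring
    _ = _ := by rw [hv1, hv2]

end engine

section conv

variable {γ α μ Φ₀ ε C₀ : ℝ} {F G : ℝ → ℝ}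

lemma half_rpow_le {c : ℝ} (hc : -2 ≤ c) : ((1:ℝ)/2) ^ c ≤ 4 := by
  have h1 : ((1:ℝ)/2) ^ c = ((2:ℝ) ^ c)⁻¹ := by
    rw [show (1:ℝ)/2 = (2:ℝ)⁻¹ by norm_num, Real.inv_rpow (by norm_num : (0:ℝ) ≤ 2)]
  rw [h1, ← Real.rpow_neg (by norm_num : (0:ℝ) ≤ 2)]
  calc (2:ℝ) ^ (-c) ≤ (2:ℝ) ^ (2:ℝ) :=
        Real.rpow_le_rpow_of_exponent_le one_le_two (by linarith)
    _ = 4 := by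
        rw [show (2:ℝ) = ((2:ℕ):ℝ) by norm_num, Real.rpow_natCast]
        norm_num

lemma thalf_rpow_le {t c : ℝ} (ht : 0 < t) (hc : -2 ≤ c) : (t/2) ^ c ≤ 4 * t ^ c := by
  have : (t/2) ^ c = t ^ c * ((1:ℝ)/2) ^ c := by
    rw [show t/2 = t * (1/2) by ring, Real.mul_rpow ht.le (by norm_num)]
  rw [this]
  have h4 := half_rpow_le hc
  have htc : 0 ≤ t ^ c := Real.rpow_nonneg ht.le c
  nlinarith

/-- head part of the convolution estimate -/
lemma conv_head (hG : Continuous G) (hF : Monotone F)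
    (hF0 : ∀ y, 0 ≤ Fbar F y) (hF1 : ∀ y, Fbar F y ≤ 1)
    (hε0 : 0 < ε) (hε1 : ε < 1) (hC₀ : 0 < C₀)
    (htail : ∀ z : ℝ, 0 < z → Fbar F z ≤ C₀ * z ^ (-ε))
    {t D δ : ℝ} (ht : 0 < t) (hD : 0 ≤ D) (hδ0 : 0 ≤ δ)
    (hbd : ∀ v : ℝ, 0 < v → |G v| ≤ D * v ^ (-δ)) :
    ∫ y in Ioc (0:ℝ) (t/2), |G (t - y)| * Fbar F y
      ≤ (D * C₀ / (1 - ε)) * ((t/2) ^ (-δ) * (t/2) ^ (1 - ε)) := by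
  have ht2 : 0 < t/2 := by linarith
  have hmono : ∫ y in Ioc (0:ℝ) (t/2), |G (t - y)| * Fbar F y
      ≤ ∫ y in Ioc (0:ℝ) (t/2), (D * (t/2) ^ (-δ)) * (C₀ * y ^ (-ε)) := by
    refine setIntegral_mono_on (integrableOn_conv hG hF hF0 hF1 t 0 (t/2))
      (((integrableOn_rpow_Ioc ht2 (by linarith)).const_mul C₀).const_mul _)
      measurableSet_Ioc ?_
    intro y hy
    have hty : t/2 ≤ t - y := by linarith [hy.2]
    have hty0 : (0:ℝ) < t - y := lt_of_lt_of_le ht2 hty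
    have h1 : |G (t - y)| ≤ D * (t/2) ^ (-δ) := by
      calc |G (t - y)| ≤ D * (t - y) ^ (-δ) := hbd _ hty0
        _ ≤ D * (t/2) ^ (-δ) := by
            refine mul_le_mul_of_nonneg_left ?_ hD
            exact Real.rpow_le_rpow_of_nonpos ht2 hty (by linarith)
    exact mul_le_mul h1 (htail y hy.1) (hF0 y)
      (mul_nonneg hD (Real.rpow_nonneg ht2.le _))
  have hval : ∫ y in Ioc (0:ℝ) (t/2), (D * (t/2) ^ (-δ)) * (C₀ * y ^ (-ε))
      = (D * C₀ / (1 - ε)) * ((t/2) ^ (-δ) * (t/2) ^ (1 - ε)) := by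
    rw [integral_const_mul, integral_const_mul, int_rpow_Ioc ht2 (by linarith)]
    rw [show -ε + 1 = 1 - ε by ring]
    field_simp
  linarith
/-- rewrite the tail part of the convolution as an integral of `|G|` -/
lemma conv_tail_eq (hG : Continuous G) {t : ℝ} (ht : 0 < t) :
    ∫ y in Ioc (t/2) t, |G (t - y)| = ∫ s in Ioc (0:ℝ) (t/2), |G s| := by
  have h2 : t/2 ≤ t := by linarith
  rw [← intervalIntegral.integral_of_le h2, ← intervalIntegral.integral_of_le (le_of_lt (by linarith : (0:ℝ) < t/2))]
  rw [intervalIntegral.integral_comp_sub_left (fun s => |G s|) t]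
  rw [show t - t = 0 by ring, show t - t/2 = t/2 by ring]

end conv

section conv2

variable {ε C₀ : ℝ} {F G : ℝ → ℝ}

lemma Bop_split (hG : Continuous G) (hF : Monotone F)
    (hF0 : ∀ y, 0 ≤ Fbar F y) (hF1 : ∀ y, Fbar F y ≤ 1) {t : ℝ} (ht : 0 < t) :
    |Bop F G t| ≤ (∫ y in Ioc (0:ℝ) (t/2), |G (t - y)| * Fbar F y)
      + ∫ y in Ioc (t/2) t, |G (t - y)| * Fbar F y := by
  have h2 : (0:ℝ) ≤ t/2 := by linarith
  have h3 : t/2 ≤ t := by linarith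
  have i1 : IntervalIntegrable (fun y => |G (t - y)| * Fbar F y) volume 0 (t/2) :=
    ⟨integrableOn_conv hG hF hF0 hF1 t 0 (t/2), integrableOn_conv hG hF hF0 hF1 t (t/2) 0⟩
  have i2 : IntervalIntegrable (fun y => |G (t - y)| * Fbar F y) volume (t/2) t :=
    ⟨integrableOn_conv hG hF hF0 hF1 t (t/2) t, integrableOn_conv hG hF hF0 hF1 t t (t/2)⟩
  have hsplit : ∫ y in Ioc (0:ℝ) t, |G (t - y)| * Fbar F y
      = (∫ y in Ioc (0:ℝ) (t/2), |G (t - y)| * Fbar F y)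
        + ∫ y in Ioc (t/2) t, |G (t - y)| * Fbar F y := by
    rw [← intervalIntegral.integral_of_le ht.le, ← intervalIntegral.integral_of_le h2,
      ← intervalIntegral.integral_of_le h3]
    exact (intervalIntegral.integral_add_adjacent_intervals i1 i2).symm
  calc |Bop F G t| ≤ ∫ y in Ioc (0:ℝ) t, |G (t - y)| * Fbar F y := abs_Bop_le hF0 ht.le
    _ = _ := hsplit

lemma conv_tail_le (hG : Continuous G) (hF : Monotone F)
    (hF0 : ∀ y, 0 ≤ Fbar F y) (hF1 : ∀ y, Fbar F y ≤ 1)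
    (hε0 : 0 < ε) (hC₀ : 0 < C₀)
    (htail : ∀ z : ℝ, 0 < z → Fbar F z ≤ C₀ * z ^ (-ε)) {t : ℝ} (ht : 0 < t) :
    ∫ y in Ioc (t/2) t, |G (t - y)| * Fbar F y
      ≤ (C₀ * (t/2) ^ (-ε)) * ∫ s in Ioc (0:ℝ) (t/2), |G s| := by
  have ht2 : 0 < t/2 := by linarith
  have hmono : ∫ y in Ioc (t/2) t, |G (t - y)| * Fbar F y
      ≤ ∫ y in Ioc (t/2) t, (C₀ * (t/2) ^ (-ε)) * |G (t - y)| := by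
    refine setIntegral_mono_on (integrableOn_conv hG hF hF0 hF1 t (t/2) t)
      (Integrable.const_mul ?_ _) measurableSet_Ioc ?_
    · exact ((hG.comp (continuous_const.sub continuous_id)).abs).integrableOn_Ioc
    · intro y hy
      have hF2 : Fbar F y ≤ C₀ * (t/2) ^ (-ε) := by
        calc Fbar F y ≤ C₀ * y ^ (-ε) := htail y (lt_trans ht2 hy.1)
          _ ≤ C₀ * (t/2) ^ (-ε) := by
              refine mul_le_mul_of_nonneg_left ?_ hC₀.le
              exact Real.rpow_le_rpow_of_nonpos ht2 hy.1.le (by linarith)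
      calc |G (t - y)| * Fbar F y ≤ |G (t - y)| * (C₀ * (t/2) ^ (-ε)) :=
            mul_le_mul_of_nonneg_left hF2 (abs_nonneg _)
        _ = (C₀ * (t/2) ^ (-ε)) * |G (t - y)| := by ring
  have heq2 : ∫ y in Ioc (t/2) t, (C₀ * (t/2) ^ (-ε)) * |G (t - y)|
      = (C₀ * (t/2) ^ (-ε)) * ∫ s in Ioc (0:ℝ) (t/2), |G s| := by
    rw [integral_const_mul, conv_tail_eq hG ht]
  linarith

lemma absG_int_le {D δ m : ℝ} (hG : Continuous G) (hm : 0 < m) (hD : 0 ≤ D)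
    (hδ0 : 0 ≤ δ) (hδ1 : δ < 1) (hbd : ∀ v : ℝ, 0 < v → |G v| ≤ D * v ^ (-δ)) :
    ∫ s in Ioc (0:ℝ) m, |G s| ≤ D * (m ^ (1 - δ) / (1 - δ)) := by
  have hmono : ∫ s in Ioc (0:ℝ) m, |G s| ≤ ∫ s in Ioc (0:ℝ) m, D * s ^ (-δ) := by
    refine setIntegral_mono_on (hG.abs.integrableOn_Ioc)
      ((integrableOn_rpow_Ioc hm (by linarith)).const_mul D) measurableSet_Ioc ?_
    exact fun s hs => hbd s hs.1
  have hval : ∫ s in Ioc (0:ℝ) m, D * s ^ (-δ) = D * (m ^ (1 - δ) / (1 - δ)) := by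
    rw [integral_const_mul, int_rpow_Ioc hm (by linarith), show -δ + 1 = 1 - δ by ring]
  linarith

lemma convA (hG : Continuous G) (hF : Monotone F)
    (hF0 : ∀ y, 0 ≤ Fbar F y) (hF1 : ∀ y, Fbar F y ≤ 1)
    (hε0 : 0 < ε) (hε1 : ε < 1) (hC₀ : 0 < C₀)
    (htail : ∀ z : ℝ, 0 < z → Fbar F z ≤ C₀ * z ^ (-ε))
    {D δ : ℝ} (hD : 0 ≤ D) (hδ0 : 0 ≤ δ) (hδ1 : δ < 1)
    (hbd : ∀ v : ℝ, 0 < v → |G v| ≤ D * v ^ (-δ)) :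
    ∀ t : ℝ, 0 < t →
      |Bop F G t| ≤ (4 * (D * C₀ * (1/(1-ε) + 1/(1-δ)))) * t ^ (1-ε-δ) := by
  intro t ht
  have ht2 : 0 < t/2 := by linarith
  have hP : (0:ℝ) ≤ (t/2) ^ (1-ε-δ) := Real.rpow_nonneg ht2.le _
  have hhead := conv_head hG hF hF0 hF1 hε0 hε1 hC₀ htail ht hD hδ0 hbd
  have hh2 : (t/2) ^ (-δ) * (t/2) ^ (1-ε) = (t/2) ^ (1-ε-δ) := by
    rw [← Real.rpow_add ht2]; congr 1; ring
  have htael := conv_tail_le hG hF hF0 hF1 hε0 hC₀ htail ht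
  have htael2 : (C₀ * (t/2) ^ (-ε)) * ∫ s in Ioc (0:ℝ) (t/2), |G s|
      ≤ (D * C₀ / (1-δ)) * (t/2) ^ (1-ε-δ) := by
    have h1 : (C₀ * (t/2) ^ (-ε)) * ∫ s in Ioc (0:ℝ) (t/2), |G s|
        ≤ (C₀ * (t/2) ^ (-ε)) * (D * ((t/2) ^ (1 - δ) / (1 - δ))) := by
      refine mul_le_mul_of_nonneg_left (absG_int_le hG ht2 hD hδ0 hδ1 hbd) ?_
      exact mul_nonneg hC₀.le (Real.rpow_nonneg ht2.le _)
    have h2 : (t/2) ^ (-ε) * (t/2) ^ (1-δ) = (t/2) ^ (1-ε-δ) := by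
      rw [← Real.rpow_add ht2]; congr 1; ring
    calc (C₀ * (t/2) ^ (-ε)) * ∫ s in Ioc (0:ℝ) (t/2), |G s|
        ≤ (C₀ * (t/2) ^ (-ε)) * (D * ((t/2) ^ (1 - δ) / (1 - δ))) := h1
      _ = (D * C₀ / (1-δ)) * ((t/2) ^ (-ε) * (t/2) ^ (1-δ)) := by field_simp
      _ = (D * C₀ / (1-δ)) * (t/2) ^ (1-ε-δ) := by rw [h2]
  have hsum : |Bop F G t| ≤ (D * C₀ / (1-ε) + D * C₀ / (1-δ)) * (t/2) ^ (1-ε-δ) := by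
    have := Bop_split hG hF hF0 hF1 ht
    rw [hh2] at hhead
    have := le_trans this (add_le_add (le_trans hhead (le_refl _)) (le_trans htael htael2))
    linarith [this]
  have h4 : (t/2) ^ (1-ε-δ) ≤ 4 * t ^ (1-ε-δ) := thalf_rpow_le ht (by linarith)
  have hc : (0:ℝ) ≤ D * C₀ / (1-ε) + D * C₀ / (1-δ) := by
    have := mul_nonneg hD hC₀.le
    have h1 : (0:ℝ) ≤ D * C₀ / (1-ε) := div_nonneg this (by linarith)
    have h2 : (0:ℝ) ≤ D * C₀ / (1-δ) := div_nonneg this (by linarith)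
    linarith
  calc |Bop F G t| ≤ (D * C₀ / (1-ε) + D * C₀ / (1-δ)) * (t/2) ^ (1-ε-δ) := hsum
    _ ≤ (D * C₀ / (1-ε) + D * C₀ / (1-δ)) * (4 * t ^ (1-ε-δ)) :=
        mul_le_mul_of_nonneg_left h4 hc
    _ = (4 * (D * C₀ * (1/(1-ε) + 1/(1-δ)))) * t ^ (1-ε-δ) := by ring

end conv2

section conv3

variable {ε C₀ : ℝ} {F G : ℝ → ℝ}

lemma absG_int_le' {D δ m M : ℝ} (hG : Continuous G) (hm : 0 < m) (hD : 0 ≤ D) (hM : 0 ≤ M)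
    (hδ1 : 1 < δ) (hMbd : ∀ v : ℝ, 0 ≤ v → |G v| ≤ M)
    (hbd : ∀ v : ℝ, 0 < v → |G v| ≤ D * v ^ (-δ)) :
    ∫ s in Ioc (0:ℝ) m, |G s| ≤ M + D / (δ-1) := by
  have hD1 : 0 ≤ D / (δ - 1) := div_nonneg hD (by linarith)
  rcases le_or_gt m 1 with hm1 | hm1
  · have h1 : ∫ s in Ioc (0:ℝ) m, |G s| ≤ ∫ s in Ioc (0:ℝ) m, M :=
      setIntegral_mono_on (hG.abs.integrableOn_Ioc)
        ((integrableOn_const_iff (C := M)).2 (Or.inr measure_Ioc_lt_top)) measurableSet_Ioc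
        (fun s hs => hMbd s hs.1.le)
    have h2 : ∫ s in Ioc (0:ℝ) m, (M:ℝ) = m * M := by
      rw [setIntegral_const, Real.volume_real_Ioc_of_le hm.le, smul_eq_mul]
      norm_num
    nlinarith
  · have hcont := hG.abs
    have i1 : IntervalIntegrable (fun s => |G s|) volume 0 1 := hcont.intervalIntegrable 0 1
    have i2 : IntervalIntegrable (fun s => |G s|) volume 1 m := hcont.intervalIntegrable 1 m
    have hsplit : ∫ s in Ioc (0:ℝ) m, |G s|
        = (∫ s in (0:ℝ)..1, |G s|) + ∫ s in (1:ℝ)..m, |G s| := by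
      rw [← intervalIntegral.integral_of_le hm.le]
      exact (intervalIntegral.integral_add_adjacent_intervals i1 i2).symm
    have hpart1 : ∫ s in (0:ℝ)..1, |G s| ≤ M := by
      have := intervalIntegral.integral_mono_on zero_le_one i1
        (intervalIntegrable_const (c := M)) (fun s hs => hMbd s hs.1)
      simpa using this
    have h0mem : (0:ℝ) ∉ Set.uIcc (1:ℝ) m := by
      rw [Set.uIcc_of_le hm1.le]
      intro h
      have := h.1
      norm_num at this
    have hpart2 : ∫ s in (1:ℝ)..m, |G s| ≤ D / (δ - 1) := by
      have hint : IntervalIntegrable (fun s : ℝ => D * s ^ (-δ)) volume 1 m :=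
        (intervalIntegral.intervalIntegrable_rpow (Or.inr h0mem)).const_mul D
      have hmono := intervalIntegral.integral_mono_on hm1.le i2 hint
        (fun s hs => hbd s (by linarith [hs.1]))
      have hval : ∫ s in (1:ℝ)..m, D * s ^ (-δ)
          = D * ((m ^ (-δ+1) - 1) / (-δ+1)) := by
        rw [intervalIntegral.integral_const_mul, integral_rpow (Or.inr ⟨by
          intro h; linarith [neg_eq_iff_eq_neg.1 h], h0mem⟩)]
        rw [Real.one_rpow]
      have hq : (0:ℝ) ≤ m ^ (-δ+1) := Real.rpow_nonneg (by linarith) _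
      have hle : D * ((m ^ (-δ+1) - 1) / (-δ+1)) ≤ D / (δ-1) := by
        have heq : (m ^ (-δ+1) - 1) / (-δ+1) = (1 - m ^ (-δ+1)) / (δ-1) := by
          have h1 : (-δ+1) ≠ 0 := by intro h; linarith
          have h2 : (δ-1) ≠ 0 := by intro h; linarith
          field_simp
          ring
        rw [heq]
        calc D * ((1 - m ^ (-δ+1)) / (δ-1)) ≤ D * (1 / (δ-1)) := by
              refine mul_le_mul_of_nonneg_left ?_ hD
              exact (div_le_div_iff_of_pos_right (show (0:ℝ) < δ-1 by linarith)).2 (by linarith)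
          _ = D / (δ-1) := by ring
      linarith [hmono, hval ▸ hmono]
    calc ∫ s in Ioc (0:ℝ) m, |G s|
        = (∫ s in (0:ℝ)..1, |G s|) + ∫ s in (1:ℝ)..m, |G s| := hsplit
      _ ≤ M + D / (δ-1) := add_le_add hpart1 hpart2

end conv3

section conv4

variable {ε C₀ : ℝ} {F G : ℝ → ℝ}

lemma convB (hG : Continuous G) (hF : Monotone F)
    (hF0 : ∀ y, 0 ≤ Fbar F y) (hF1 : ∀ y, Fbar F y ≤ 1)
    (hε0 : 0 < ε) (hε1 : ε < 1) (hC₀ : 0 < C₀)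
    (htail : ∀ z : ℝ, 0 < z → Fbar F z ≤ C₀ * z ^ (-ε))
    {D δ M : ℝ} (hD : 0 ≤ D) (hδ1 : 1 < δ) (hδ2 : δ ≤ 2) (hM : 0 ≤ M)
    (hMbd : ∀ v : ℝ, 0 ≤ v → |G v| ≤ M)
    (hbd : ∀ v : ℝ, 0 < v → |G v| ≤ D * v ^ (-δ)) :
    ∀ t : ℝ, 0 < t →
      |Bop F G t| ≤ (4 * (C₀ * (M + D / (δ-1)))) * t ^ (-ε)
        + (4 * (D * C₀ / (1-ε))) * t ^ (1-ε-δ) := by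
  intro t ht
  have ht2 : 0 < t/2 := by linarith
  have hδ0 : (0:ℝ) ≤ δ := by linarith
  have hhead := conv_head hG hF hF0 hF1 hε0 hε1 hC₀ htail ht hD hδ0 hbd
  have hh2 : (t/2) ^ (-δ) * (t/2) ^ (1-ε) = (t/2) ^ (1-ε-δ) := by
    rw [← Real.rpow_add ht2]; congr 1; ring
  rw [hh2] at hhead
  have hhead2 : (D * C₀ / (1-ε)) * (t/2) ^ (1-ε-δ)
      ≤ (4 * (D * C₀ / (1-ε))) * t ^ (1-ε-δ) := by
    have h4 := thalf_rpow_le ht (show (-2:ℝ) ≤ 1-ε-δ by linarith)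
    have hc : (0:ℝ) ≤ D * C₀ / (1-ε) := div_nonneg (mul_nonneg hD hC₀.le) (by linarith)
    nlinarith [Real.rpow_nonneg ht.le (1-ε-δ)]
  have htael := conv_tail_le hG hF hF0 hF1 hε0 hC₀ htail ht
  have hIle := absG_int_le' hG ht2 hD hM hδ1 hMbd hbd
  have htael2 : (C₀ * (t/2) ^ (-ε)) * ∫ s in Ioc (0:ℝ) (t/2), |G s|
      ≤ (4 * (C₀ * (M + D / (δ-1)))) * t ^ (-ε) := by
    have hW : (0:ℝ) ≤ (t/2) ^ (-ε) := Real.rpow_nonneg ht2.le _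
    have h1 : (C₀ * (t/2) ^ (-ε)) * ∫ s in Ioc (0:ℝ) (t/2), |G s|
        ≤ (C₀ * (t/2) ^ (-ε)) * (M + D / (δ-1)) := by
      refine mul_le_mul_of_nonneg_left hIle (mul_nonneg hC₀.le hW)
    have h4 := thalf_rpow_le ht (show (-2:ℝ) ≤ -ε by linarith)
    have hMD : (0:ℝ) ≤ M + D / (δ-1) := by
      have := div_nonneg hD (show (0:ℝ) ≤ δ - 1 by linarith)
      linarith
    calc (C₀ * (t/2) ^ (-ε)) * ∫ s in Ioc (0:ℝ) (t/2), |G s|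
        ≤ (C₀ * (t/2) ^ (-ε)) * (M + D / (δ-1)) := h1
      _ ≤ (C₀ * (4 * t ^ (-ε))) * (M + D / (δ-1)) := by
          refine mul_le_mul_of_nonneg_right ?_ hMD
          exact mul_le_mul_of_nonneg_left h4 hC₀.le
      _ = (4 * (C₀ * (M + D / (δ-1)))) * t ^ (-ε) := by ring
  have hsplit := Bop_split hG hF hF0 hF1 ht
  linarith

end conv4

theorem stmt8 (γ α μ : ℝ) (hγ : 1 < γ) (hα : 0 < α) (hμ : 0 < μ)
    (F : ℝ → ℝ) (hF : IsCDF F) (Φ₀ : ℝ) (hΦ₀ : 0 < Φ₀)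
    (ε C₀ : ℝ) (hε : ε ∈ Set.Ioo (0:ℝ) 1) (hγε : 0 < γ - 1 - ε) (hC₀ : 0 < C₀)
    (htail : ∀ z : ℝ, 0 < z → Fbar F z ≤ C₀ * z ^ (-ε))
    (g : ℝ → ℝ) (hg : IsVolterraSol γ α μ Φ₀ F g) :
    (∃ C : ℝ, 0 < C ∧ ∃ U : ℝ, 0 < U ∧
      ∀ u : ℝ, U ≤ u → |g u| ≤ C * u ^ (-1 - ε)) ∧
    IntegrableOn g (Set.Ioi 0) volume := by
  obtain ⟨hFmono, hFrc, hFzero, hFtop⟩ := hF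
  obtain ⟨hε0, hε1⟩ := hε
  have hF0 : ∀ y, 0 ≤ Fbar F y := Fbar_nonneg hFmono hFzero hFtop
  have hF1 : ∀ y, Fbar F y ≤ 1 := Fbar_le_one hFmono hFzero
  obtain ⟨hgc, hgeq⟩ := hg
  set G : ℝ → ℝ := fun x => g (max x 0) with hGdef
  have hGc : Continuous G := by
    exact hgc.comp_continuous (continuous_id.max continuous_const)
      (fun x => mem_Ici.mpr (le_max_right x 0))
  have hGg : ∀ x : ℝ, 0 ≤ x → G x = g x := by
    intro x hx; simp only [hGdef, max_eq_left hx]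
  have hBeq : ∀ t : ℝ, 0 ≤ t → Bop F g t = Bop F G t := by
    intro t ht
    refine intervalIntegral.integral_congr ?_
    intro y hy
    rw [Set.uIcc_of_le ht] at hy
    show g (t - y) * Fbar F y = G (t - y) * Fbar F y
    rw [hGg (t - y) (by linarith [hy.1, hy.2])]
  have heqG : ∀ u : ℝ, 0 < u → G u = μ * u ^ (-γ) * Real.exp (α / u) *
      ∫ t in (0:ℝ)..u, t ^ (γ - 2) * Real.exp (-α / t) * (Φ₀ * Fbar F t + Bop F G t) := by
    intro u hu
    rw [hGg u hu.le, hgeq u hu]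
    congr 1
    refine intervalIntegral.integral_congr ?_
    intro t ht
    rw [Set.uIcc_of_le hu.le] at ht
    show t ^ (γ - 2) * Real.exp (-α / t) * (Φ₀ * Fbar F t + Bop F g t)
      = t ^ (γ - 2) * Real.exp (-α / t) * (Φ₀ * Fbar F t + Bop F G t)
    rw [hBeq t ht.1]
  have hγε' : (1:ℝ) < γ - ε := by linarith
  -- the crude a priori bound (★★)
  have star : ∀ u : ℝ, 0 < u → ∀ Nu : ℝ, (∀ v ∈ Icc (0:ℝ) u, |G v| ≤ Nu) →
      |G u| ≤ (μ * Φ₀ * C₀ / (γ - 1 - ε)) * u ^ (-1-ε)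
        + ((μ * C₀ / ((1-ε) * (γ-ε))) * Nu) * u ^ (-ε) := by
    intro u hu Nu hNu
    have hNu0 : 0 ≤ Nu := le_trans (abs_nonneg _) (hNu 0 ⟨le_rfl, hu.le⟩)
    have hB : ∀ t ∈ Ioc (0:ℝ) u, |Bop F G t|
        ≤ 0 * t ^ (-ε) + (Nu * C₀ / (1-ε)) * t ^ (1-ε-0) := by
      intro t ht
      rw [zero_mul, zero_add, show (1:ℝ)-ε-0 = 1-ε by ring]
      exact Bop_bound0 hGc hFmono hF0 hF1 hε0 hε1 hC₀ htail hu hNu t ht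
    have := engine hα hμ hΦ₀ hC₀ hε0 hγε hFmono hF0 hF1 htail hGc heqG hu
      (le_refl 0) (by apply div_nonneg (mul_nonneg hNu0 hC₀.le); linarith)
      (le_refl 0) (by linarith) hB
    have e1 : μ * (Φ₀ * C₀ + 0) / (γ - 1 - ε) = μ * Φ₀ * C₀ / (γ - 1 - ε) := by ring
    have e2 : μ * (Nu * C₀ / (1-ε)) / (γ - ε - 0) = (μ * C₀ / ((1-ε) * (γ-ε))) * Nu := by
      have h1 : (1:ℝ) - ε ≠ 0 := by linarith
      have h2 : γ - ε ≠ 0 := by linarith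
      field_simp
      ring
    have e3 : -(ε + 0) = -ε := by ring
    rw [e1, e2, e3] at this
    exact this
  -- global boundedness of |G|
  have hA : 0 < μ * Φ₀ * C₀ / (γ - 1 - ε) :=
    div_pos (by positivity) (by linarith)
  set A := μ * Φ₀ * C₀ / (γ - 1 - ε) with hAdef
  set BB := μ * C₀ / ((1-ε) * (γ-ε)) with hBBdef
  have hBB : 0 < BB := div_pos (by positivity) (by nlinarith)
  set U₀ : ℝ := max 1 ((2*BB+1) ^ (1/ε)) with hU₀def
  have hU₀1 : (1:ℝ) ≤ U₀ := le_max_left _ _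
  have hU₀pos : (0:ℝ) < U₀ := by linarith
  have hU₀ : BB * U₀ ^ (-ε) ≤ 1/2 := by
    have hbase : (0:ℝ) < 2*BB+1 := by linarith
    have h1 : (2*BB+1) ^ (1/ε) ≤ U₀ := le_max_right _ _
    have h2 : 2*BB+1 ≤ U₀ ^ ε := by
      have hpow : ((2*BB+1) ^ (1/ε)) ^ ε = (2*BB+1) := by
        rw [← Real.rpow_mul hbase.le, one_div, inv_mul_cancel₀ (ne_of_gt hε0), Real.rpow_one]
      calc 2*BB+1 = ((2*BB+1) ^ (1/ε)) ^ ε := hpow.symm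
        _ ≤ U₀ ^ ε := Real.rpow_le_rpow (Real.rpow_nonneg hbase.le _) h1 hε0.le
    have h3 : U₀ ^ (-ε) = (U₀ ^ ε)⁻¹ := Real.rpow_neg hU₀pos.le ε
    have h4 : 0 < U₀ ^ ε := Real.rpow_pos_of_pos hU₀pos ε
    rw [h3]
    rw [mul_inv_le_iff₀ h4]
    nlinarith
  obtain ⟨N₀, hN₀⟩ := (isCompact_Icc (a := (0:ℝ)) (b := U₀)).exists_bound_of_continuousOn
    hGc.continuousOn
  have hN₀' : ∀ v ∈ Icc (0:ℝ) U₀, |G v| ≤ N₀ := by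
    intro v hv; have := hN₀ v hv; rwa [Real.norm_eq_abs] at this
  set Minf := max N₀ (2*A) with hMdef
  have hMinfpos : 0 < Minf := lt_of_lt_of_le (by linarith) (le_max_right _ _)
  have hMbd : ∀ v : ℝ, 0 ≤ v → |G v| ≤ Minf := by
    intro v hv
    rcases le_or_gt v U₀ with hvU | hvU
    · exact le_trans (hN₀' v ⟨hv, hvU⟩) (le_max_left _ _)
    · obtain ⟨w, hw, hwmax⟩ := (isCompact_Icc (a := (0:ℝ)) (b := v)).exists_isMaxOn
        ⟨0, ⟨le_rfl, hv⟩⟩ (hGc.abs.continuousOn)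
      have hvmem : v ∈ Icc (0:ℝ) v := ⟨hv, le_rfl⟩
      have hGv : |G v| ≤ |G w| := hwmax hvmem
      rcases le_or_gt w U₀ with hwU | hwU
      · exact le_trans hGv (le_trans (hN₀' w ⟨hw.1, hwU⟩) (le_max_left _ _))
      · have hwpos : 0 < w := lt_trans hU₀pos hwU
        have hNw : ∀ v' ∈ Icc (0:ℝ) w, |G v'| ≤ |G w| :=
          fun v' hv' => hwmax ⟨hv'.1, le_trans hv'.2 hw.2⟩
        have hs := star w hwpos (|G w|) hNw
        have hw1 : (1:ℝ) ≤ w := le_trans hU₀1 hwU.le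
        have hw1' : w ^ (-1-ε) ≤ 1 :=
          Real.rpow_le_one_of_one_le_of_nonpos hw1 (by linarith)
        have hwε : w ^ (-ε) ≤ U₀ ^ (-ε) :=
          Real.rpow_le_rpow_of_nonpos hU₀pos hwU.le (by linarith)
        have h5 : (BB * |G w|) * w ^ (-ε) ≤ (1/2) * |G w| := by
          calc (BB * |G w|) * w ^ (-ε) ≤ (BB * |G w|) * U₀ ^ (-ε) := by
                refine mul_le_mul_of_nonneg_left hwε ?_
                positivity
            _ = (BB * U₀ ^ (-ε)) * |G w| := by ring
            _ ≤ (1/2) * |G w| := mul_le_mul_of_nonneg_right hU₀ (abs_nonneg _)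
        have h6 : A * w ^ (-1-ε) ≤ A := by nlinarith [Real.rpow_nonneg hwpos.le (-1-ε)]
        have h7 : |G w| ≤ 2 * A := by nlinarith
        calc |G v| ≤ |G w| := hGv
          _ ≤ 2*A := h7
          _ ≤ Minf := le_max_right _ _
  -- packaging lemma
  have pack : ∀ (C₁ C₂ a b m : ℝ), 0 ≤ C₁ → 0 ≤ C₂ → 0 ≤ m → m ≤ a → m ≤ b →
      (∀ u : ℝ, 0 < u → |G u| ≤ C₁ * u ^ (-a) + C₂ * u ^ (-b)) →
      ∃ D : ℝ, 0 < D ∧ ∀ v : ℝ, 0 < v → |G v| ≤ D * v ^ (-m) := by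
    intro C₁ C₂ a b m hC₁ hC₂ hm hma hmb hbd
    refine ⟨max (C₁ + C₂) Minf + 1, by positivity, ?_⟩
    intro v hv
    have hvm : 0 ≤ v ^ (-m) := Real.rpow_nonneg hv.le _
    rcases le_or_gt 1 v with h1 | h1
    · have e1 : v ^ (-a) ≤ v ^ (-m) := Real.rpow_le_rpow_of_exponent_le h1 (by linarith)
      have e2 : v ^ (-b) ≤ v ^ (-m) := Real.rpow_le_rpow_of_exponent_le h1 (by linarith)
      have hva : 0 ≤ v ^ (-a) := Real.rpow_nonneg hv.le _
      have hvb : 0 ≤ v ^ (-b) := Real.rpow_nonneg hv.le _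
      calc |G v| ≤ C₁ * v ^ (-a) + C₂ * v ^ (-b) := hbd v hv
        _ ≤ (C₁ + C₂) * v ^ (-m) := by nlinarith
        _ ≤ (max (C₁ + C₂) Minf + 1) * v ^ (-m) := by
            refine mul_le_mul_of_nonneg_right ?_ hvm
            have := le_max_left (C₁ + C₂) Minf
            linarith
    · have hv1 : (1:ℝ) ≤ v ^ (-m) := by
        have := Real.rpow_le_rpow_of_exponent_ge hv h1.le (neg_nonpos.mpr hm)
        rwa [Real.rpow_zero] at this
      calc |G v| ≤ Minf := hMbd v hv.le
        _ = Minf * 1 := (mul_one _).symm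
        _ ≤ (max (C₁ + C₂) Minf + 1) * v ^ (-m) := by
            refine mul_le_mul ?_ hv1 zero_le_one ?_
            · have := le_max_right (C₁ + C₂) Minf; linarith
            · positivity
  -- one bootstrap step (δ < 1)
  have stepA : ∀ (D δ : ℝ), 0 < D → 0 ≤ δ → δ < 1 →
      (∀ v : ℝ, 0 < v → |G v| ≤ D * v ^ (-δ)) →
      ∀ u : ℝ, 0 < u → |G u| ≤ (μ * (Φ₀ * C₀ + 0) / (γ - 1 - ε)) * u ^ (-(1+ε))
        + (μ * (4 * (D * C₀ * (1/(1-ε) + 1/(1-δ)))) / (γ - ε - δ)) * u ^ (-(ε+δ)) := by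
    intro D δ hD hδ0 hδ1 hbd u hu
    have a1 : (0:ℝ) < 1/(1-ε) := div_pos one_pos (by linarith)
    have a2 : (0:ℝ) < 1/(1-δ) := div_pos one_pos (by linarith)
    have hK₂ : 0 ≤ 4 * (D * C₀ * (1/(1-ε) + 1/(1-δ))) := by
      nlinarith [mul_nonneg hD.le hC₀.le]
    have hB : ∀ t ∈ Ioc (0:ℝ) u, |Bop F G t|
        ≤ 0 * t ^ (-ε) + (4 * (D * C₀ * (1/(1-ε) + 1/(1-δ)))) * t ^ (1-ε-δ) := by
      intro t ht
      rw [zero_mul, zero_add]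
      exact convA hGc hFmono hF0 hF1 hε0 hε1 hC₀ htail hD.le hδ0 hδ1 hbd t ht.1
    have := engine hα hμ hΦ₀ hC₀ hε0 hγε hFmono hF0 hF1 htail hGc heqG hu
      (le_refl 0) hK₂ hδ0 (by linarith) hB
    rw [show -(1+ε) = -1-ε by ring]
    exact this
  have hC₁nn : 0 ≤ μ * (Φ₀ * C₀ + 0) / (γ - 1 - ε) := by
    apply div_nonneg (by nlinarith [mul_pos hΦ₀ hC₀]) (by linarith)
  -- induction up to exponent 1 - ε/2
  have hQ : ∀ n : ℕ, ∃ D : ℝ, 0 < D ∧ ∀ v : ℝ, 0 < v →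
      |G v| ≤ D * v ^ (-(min ((n:ℝ)*ε) (1-ε/2))) := by
    intro n
    induction n with
    | zero =>
      refine ⟨Minf, hMinfpos, ?_⟩
      intro v hv
      have hmin : min (((0:ℕ):ℝ)*ε) (1-ε/2) = 0 := by
        push_cast; rw [zero_mul]; exact min_eq_left (by linarith)
      rw [hmin, neg_zero, Real.rpow_zero, mul_one]
      exact hMbd v hv.le
    | succ n ih =>
      obtain ⟨D, hD, hbd⟩ := ih
      set δn := min ((n:ℝ)*ε) (1-ε/2) with hδndef
      have hδn0 : 0 ≤ δn := le_min (by positivity) (by linarith)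
      have hδn1 : δn < 1 := lt_of_le_of_lt (min_le_right _ _) (by linarith)
      have hst := stepA D δn hD hδn0 hδn1 hbd
      have hC₂nn : 0 ≤ μ * (4 * (D * C₀ * (1/(1-ε) + 1/(1-δn)))) / (γ - ε - δn) := by
        have a1 : (0:ℝ) < 1/(1-ε) := div_pos one_pos (by linarith)
        have a2 : (0:ℝ) < 1/(1-δn) := div_pos one_pos (by linarith)
        have hx : 0 ≤ D * C₀ * (1/(1-ε) + 1/(1-δn)) :=
          mul_nonneg (mul_nonneg hD.le hC₀.le) (by linarith)
        apply div_nonneg ?_ (by linarith)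
        exact mul_nonneg hμ.le (by linarith)
      have hm'0 : 0 ≤ min (((n:ℝ)+1)*ε) (1-ε/2) := le_min (by positivity) (by linarith)
      have hm'a : min (((n:ℝ)+1)*ε) (1-ε/2) ≤ 1+ε := le_trans (min_le_right _ _) (by linarith)
      have hm'b : min (((n:ℝ)+1)*ε) (1-ε/2) ≤ ε + δn := by
        rcases le_total ((n:ℝ)*ε) (1-ε/2) with h | h
        · have hq : δn = (n:ℝ)*ε := min_eq_left h
          rw [hq]
          calc min (((n:ℝ)+1)*ε) (1-ε/2) ≤ ((n:ℝ)+1)*ε := min_le_left _ _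
            _ = ε + (n:ℝ)*ε := by ring
        · have hq : δn = 1-ε/2 := min_eq_right h
          rw [hq]
          calc min (((n:ℝ)+1)*ε) (1-ε/2) ≤ 1-ε/2 := min_le_right _ _
            _ ≤ ε + (1-ε/2) := by linarith
      obtain ⟨D', hD', hbd'⟩ := pack _ _ (1+ε) (ε+δn) (min (((n:ℝ)+1)*ε) (1-ε/2))
        hC₁nn hC₂nn hm'0 hm'a hm'b hst
      refine ⟨D', hD', ?_⟩
      intro v hv
      have hcast : ((n+1 : ℕ):ℝ) = (n:ℝ)+1 := by push_cast; ring
      rw [hcast]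
      exact hbd' v hv
  -- reach exponent 1 - ε/2
  have hn₀ : 1 ≤ ((⌈1/ε⌉₊ : ℕ):ℝ) * ε := by
    have h1 : (1/ε : ℝ) ≤ (⌈1/ε⌉₊ : ℕ) := Nat.le_ceil _
    calc (1:ℝ) = (1/ε) * ε := by field_simp
      _ ≤ ((⌈1/ε⌉₊ : ℕ):ℝ) * ε := mul_le_mul_of_nonneg_right h1 hε0.le
  obtain ⟨D₁, hD₁, hbd₁⟩ := hQ ⌈1/ε⌉₊
  rw [min_eq_right (by linarith)] at hbd₁
  -- crossing step: reach exponent 1 + τ > 1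
  have hτ0 : 0 < (min ε (γ-1-ε))/2 := div_pos (lt_min hε0 hγε) two_pos
  set τ := (min ε (γ-1-ε))/2 with hτdef
  have hτε : τ ≤ ε/2 := by
    have := min_le_left ε (γ-1-ε); rw [hτdef]; linarith
  have hτγ : τ ≤ (γ-1-ε)/2 := by
    have := min_le_right ε (γ-1-ε); rw [hτdef]; linarith
  have hst₂ := stepA D₁ (1-ε/2) hD₁ (by linarith) (by linarith) hbd₁
  have hC₂nn' : 0 ≤ μ * (4 * (D₁ * C₀ * (1/(1-ε) + 1/(1-(1-ε/2))))) / (γ - ε - (1-ε/2)) := by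
    have a1 : (0:ℝ) < 1/(1-ε) := div_pos one_pos (by linarith)
    have a2 : (0:ℝ) < 1/(1-(1-ε/2)) := div_pos one_pos (by linarith)
    have hx : 0 ≤ D₁ * C₀ * (1/(1-ε) + 1/(1-(1-ε/2))) :=
      mul_nonneg (mul_nonneg hD₁.le hC₀.le) (by linarith)
    apply div_nonneg ?_ (by linarith)
    exact mul_nonneg hμ.le (by linarith)
  obtain ⟨D₂, hD₂, hbd₂⟩ := pack _ _ (1+ε) (ε+(1-ε/2)) (1+τ)
    hC₁nn hC₂nn' (by linarith) (by linarith) (by linarith) hst₂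
  -- final step via the δ > 1 convolution bound
  have hδτ1 : 1 < 1+τ := by linarith
  have hδτ2 : 1+τ ≤ 2 := by linarith
  have hδτγ : 1+τ < γ - ε := by linarith
  have hBfin : ∀ t : ℝ, 0 < t →
      |Bop F G t| ≤ (4 * (C₀ * (Minf + D₂ / (1+τ-1)))) * t ^ (-ε)
        + (4 * (D₂ * C₀ / (1-ε))) * t ^ (1-ε-(1+τ)) :=
    convB hGc hFmono hF0 hF1 hε0 hε1 hC₀ htail hD₂.le hδτ1 hδτ2 hMinfpos.le hMbd hbd₂
  have hK₁fin : 0 ≤ 4 * (C₀ * (Minf + D₂ / (1+τ-1))) := by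
    have : 0 ≤ D₂ / (1+τ-1) := div_nonneg hD₂.le (by linarith)
    nlinarith
  have hK₂fin : 0 ≤ 4 * (D₂ * C₀ / (1-ε)) := by
    have : 0 ≤ D₂ * C₀ / (1-ε) := div_nonneg (mul_nonneg hD₂.le hC₀.le) (by linarith)
    linarith
  have hfin : ∀ u : ℝ, 0 < u →
      |G u| ≤ (μ * (Φ₀ * C₀ + 4 * (C₀ * (Minf + D₂ / (1+τ-1)))) / (γ - 1 - ε)) * u ^ (-1-ε)
        + (μ * (4 * (D₂ * C₀ / (1-ε))) / (γ - ε - (1+τ))) * u ^ (-(ε+(1+τ))) := by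
    intro u hu
    exact engine hα hμ hΦ₀ hC₀ hε0 hγε hFmono hF0 hF1 htail hGc heqG hu
      hK₁fin hK₂fin (by linarith) hδτγ (fun t ht => hBfin t ht.1)
  set Cf₁ := μ * (Φ₀ * C₀ + 4 * (C₀ * (Minf + D₂ / (1+τ-1)))) / (γ - 1 - ε) with hCf₁
  set Cf₂ := μ * (4 * (D₂ * C₀ / (1-ε))) / (γ - ε - (1+τ)) with hCf₂
  have hCf₁pos : 0 < Cf₁ := by
    apply div_pos ?_ (by linarith)
    nlinarith [mul_pos hΦ₀ hC₀]
  have hCf₂nn : 0 ≤ Cf₂ := by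
    apply div_nonneg ?_ (by linarith)
    nlinarith
  have hfinal : ∀ u : ℝ, 1 ≤ u → |G u| ≤ (Cf₁ + Cf₂) * u ^ (-1-ε) := by
    intro u hu1
    have hu : 0 < u := lt_of_lt_of_le one_pos hu1
    have h1 := hfin u hu
    have h2 : u ^ (-(ε+(1+τ))) ≤ u ^ (-1-ε) :=
      Real.rpow_le_rpow_of_exponent_le hu1 (by linarith)
    have h3 : 0 ≤ u ^ (-1-ε) := Real.rpow_nonneg hu.le _
    nlinarith
  constructor
  · refine ⟨Cf₁ + Cf₂, by linarith, 1, one_pos, ?_⟩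
    intro u hu1
    rw [← hGg u (by linarith)]
    exact hfinal u hu1
  · rw [← Set.Ioc_union_Ioi_eq_Ioi (zero_le_one)]
    refine IntegrableOn.union ?_ ?_
    · refine (hGc.integrableOn_Ioc).congr_fun ?_ measurableSet_Ioc
      intro x hx
      exact hGg x hx.1.le
    · have hint : IntegrableOn (fun u : ℝ => (Cf₁ + Cf₂) * u ^ (-1-ε)) (Ioi 1) volume :=
        (integrableOn_Ioi_rpow_of_lt (by linarith) one_pos).const_mul _
      refine Integrable.mono' hint ?_ ?_
      · refine (hGc.measurable.aestronglyMeasurable).congr ?_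
        refine ae_restrict_of_forall_mem measurableSet_Ioi (fun x hx => ?_)
        exact hGg x (by simp only [mem_Ioi] at hx; linarith)
      · refine ae_restrict_of_forall_mem measurableSet_Ioi (fun x hx => ?_)
        simp only [mem_Ioi] at hx
        rw [Real.norm_eq_abs, ← hGg x (by linarith)]
        exact hfinal x hx.le
end

section
/- Strict positivity: if Φ₀ > 0 and g is a continuous solution of the Volterra equation (★) on [0, ∞), then g(u) > 0 for all u ≥ 0. Consequently the function G(u) := Φ₀ + ∫₀ᵘ g(y) dy is strictly increasing on [0, ∞). -/
open MeasureTheory Filter Set Topology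

/-! ### Auxiliary definitions -/

/-- Extension of `g` to all of `ℝ` by `g (max t 0)`. -/
noncomputable def gE (g : ℝ → ℝ) : ℝ → ℝ := fun t => g (max t 0)

/-- Measurable version of the convolution operator. -/
noncomputable def Hf (F g : ℝ → ℝ) : ℝ → ℝ :=
  fun t => ∫ y in Set.Ioc (0:ℝ) t, gE g (t - y) * Fbar F y

/-- The kernel `φ(t) = t^{γ-2} e^{-α/t}`. -/
noncomputable def phiK (γ α : ℝ) : ℝ → ℝ := fun t => t ^ (γ - 2) * Real.exp (-α / t)

/-- The full integrand of the Volterra equation. -/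
noncomputable def hT (γ α Φ₀ : ℝ) (F g : ℝ → ℝ) : ℝ → ℝ :=
  fun t => phiK γ α t * (Φ₀ * Fbar F t + Hf F g t)

lemma gE_continuous {g : ℝ → ℝ} (hg : ContinuousOn g (Set.Ici 0)) : Continuous (gE g) :=
  hg.comp_continuous (continuous_id.max continuous_const) fun _ => Set.mem_Ici.mpr (le_max_right _ _)

lemma Bop_eq_Hf {F g : ℝ → ℝ} {t : ℝ} (ht : 0 ≤ t) : Bop F g t = Hf F g t := by
  unfold Bop Hf
  rw [intervalIntegral.integral_of_le ht]
  refine setIntegral_congr_fun measurableSet_Ioc fun y hy => ?_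
  have h1 : 0 ≤ t - y := by linarith [hy.2]
  unfold gE
  rw [max_eq_left h1]

lemma Hf_zero {F g : ℝ → ℝ} : Hf F g 0 = 0 := by
  unfold Hf
  simp

lemma Hf_stronglyMeasurable {F g : ℝ → ℝ} (hgc : ContinuousOn g (Set.Ici 0))
    (hFm : Measurable F) : StronglyMeasurable (Hf F g) := by
  have hK : Measurable fun p : ℝ × ℝ => gE g (p.1 - p.2) * Fbar F p.2 := by
    refine Measurable.mul ?_ ?_
    · exact (gE_continuous hgc).measurable.comp (measurable_fst.sub measurable_snd)
    · exact (measurable_const.sub hFm).comp measurable_snd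
  have hS : MeasurableSet {p : ℝ × ℝ | 0 < p.2 ∧ p.2 ≤ p.1} :=
    (measurableSet_lt measurable_const measurable_snd).inter
      (measurableSet_le measurable_snd measurable_fst)
  have hrw : Hf F g = fun t => ∫ y,
      ({p : ℝ × ℝ | 0 < p.2 ∧ p.2 ≤ p.1}.indicator
        (fun p => gE g (p.1 - p.2) * Fbar F p.2)) (t, y) := by
    funext t
    unfold Hf
    rw [← MeasureTheory.integral_indicator measurableSet_Ioc]
    refine integral_congr_ae (Eventually.of_forall fun y => ?_)
    by_cases hy : y ∈ Set.Ioc (0:ℝ) t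
    · rw [Set.indicator_of_mem hy]
      exact (Set.indicator_of_mem
        (show (t, y) ∈ {p : ℝ × ℝ | 0 < p.2 ∧ p.2 ≤ p.1} from ⟨hy.1, hy.2⟩)
        (fun p : ℝ × ℝ => gE g (p.1 - p.2) * Fbar F p.2)).symm
    · rw [Set.indicator_of_notMem hy]
      exact (Set.indicator_of_notMem
        (show (t, y) ∉ {p : ℝ × ℝ | 0 < p.2 ∧ p.2 ≤ p.1} from fun h => hy ⟨h.1, h.2⟩)
        (fun p : ℝ × ℝ => gE g (p.1 - p.2) * Fbar F p.2)).symm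
  rw [hrw]
  exact ((hK.indicator hS).stronglyMeasurable).integral_prod_right'

lemma Hf_norm_le {F g : ℝ → ℝ} {t C : ℝ} (hFb0 : ∀ y, 0 ≤ Fbar F y)
    (hFb1 : ∀ y, Fbar F y ≤ 1) (hC : ∀ y ∈ Set.Ico 0 t, ‖g y‖ ≤ C) (hC0 : 0 ≤ C)
    (ht : 0 ≤ t) : ‖Hf F g t‖ ≤ C * t := by
  have h := MeasureTheory.norm_setIntegral_le_of_norm_le_const (C := C) (μ := volume)
    (s := Set.Ioc (0:ℝ) t) (f := fun y => gE g (t - y) * Fbar F y)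
    measure_Ioc_lt_top ?_
  · calc ‖Hf F g t‖ ≤ C * (volume (Set.Ioc (0:ℝ) t)).toReal := h
      _ = C * t := by rw [Real.volume_Ioc, ENNReal.toReal_ofReal (by linarith)]; ring_nf
  · intro y hy
    have h1 : 0 ≤ t - y := by linarith [hy.2]
    have h2 : t - y < t := by linarith [hy.1]
    rw [norm_mul]
    have h3 : ‖gE g (t - y)‖ ≤ C := by
      unfold gE; rw [max_eq_left h1]; exact hC _ ⟨h1, h2⟩
    have h4 : ‖Fbar F y‖ ≤ 1 := by
      rw [Real.norm_eq_abs, abs_of_nonneg (hFb0 y)]; exact hFb1 y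
    calc ‖gE g (t - y)‖ * ‖Fbar F y‖ ≤ C * 1 :=
          mul_le_mul h3 h4 (norm_nonneg _) hC0
      _ = C := mul_one C

lemma Hf_nonneg {F g : ℝ → ℝ} {t : ℝ} (hFb0 : ∀ y, 0 ≤ Fbar F y)
    (hgpos : ∀ y ∈ Set.Ico 0 t, 0 ≤ g y) : 0 ≤ Hf F g t := by
  refine setIntegral_nonneg measurableSet_Ioc fun y hy => ?_
  have h1 : 0 ≤ t - y := by linarith [hy.2]
  have h2 : t - y < t := by linarith [hy.1]
  refine mul_nonneg ?_ (hFb0 y)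
  unfold gE; rw [max_eq_left h1]; exact hgpos _ ⟨h1, h2⟩

lemma phiK_pos {γ α t : ℝ} (ht : 0 < t) : 0 < phiK γ α t :=
  mul_pos (Real.rpow_pos_of_pos ht _) (Real.exp_pos _)

lemma phiK_nonneg {γ α t : ℝ} (ht : 0 ≤ t) : 0 ≤ phiK γ α t :=
  mul_nonneg (Real.rpow_nonneg ht _) (Real.exp_pos _).le

lemma exp_neg_div_le {α t : ℝ} (hα : 0 < α) (ht : 0 < t) :
    Real.exp (-α / t) ≤ 4 * t ^ 2 / α ^ 2 := by
  have hx : 0 < α / t := div_pos hα ht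
  set x := α / t with hxdef
  have e1 : x / 2 ≤ Real.exp (x / 2) := by linarith [Real.add_one_le_exp (x / 2)]
  have e2 : (x / 2) ^ 2 ≤ Real.exp (x / 2) ^ 2 :=
    pow_le_pow_left₀ (by linarith) e1 2
  have e3 : Real.exp (x / 2) ^ 2 = Real.exp x := by
    rw [sq, ← Real.exp_add]; ring_nf
  have e4 : x ^ 2 / 4 ≤ Real.exp x := by
    rw [← e3]; nlinarith [e2]
  have e5 : Real.exp (-x) ≤ 4 / x ^ 2 := by
    rw [show -x = -x from rfl, Real.exp_neg]
    rw [show (4:ℝ) / x ^ 2 = (x ^ 2 / 4)⁻¹ by field_simp]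
    exact inv_anti₀ (by positivity) e4
  have e6 : -α / t = -x := by rw [hxdef]; ring
  rw [e6]
  calc Real.exp (-x) ≤ 4 / x ^ 2 := e5
    _ = 4 * t ^ 2 / α ^ 2 := by rw [hxdef]; field_simp; try ring

lemma phiK_le {γ α t b : ℝ} (hγ : 1 < γ) (hα : 0 < α) (ht : 0 < t) (htb : t ≤ b) :
    phiK γ α t ≤ 4 * b ^ γ / α ^ 2 := by
  have h1 : phiK γ α t ≤ t ^ (γ - 2) * (4 * t ^ 2 / α ^ 2) :=
    mul_le_mul_of_nonneg_left (exp_neg_div_le hα ht) (Real.rpow_nonneg ht.le _)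
  have h2 : t ^ (γ - 2) * (4 * t ^ 2 / α ^ 2) = 4 * t ^ γ / α ^ 2 := by
    rw [show (t:ℝ) ^ 2 = t ^ ((2:ℕ):ℝ) from (Real.rpow_natCast t 2).symm]
    rw [show ((2:ℕ):ℝ) = (2:ℝ) by norm_num]
    rw [show t ^ (γ - 2) * (4 * t ^ (2:ℝ) / α ^ 2) =
      (t ^ (γ - 2) * t ^ (2:ℝ)) * 4 / α ^ 2 by ring]
    rw [← Real.rpow_add ht]
    ring_nf
  have h3 : t ^ γ ≤ b ^ γ := Real.rpow_le_rpow ht.le htb (by linarith)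
  calc phiK γ α t ≤ 4 * t ^ γ / α ^ 2 := by rw [← h2]; exact h1
    _ ≤ 4 * b ^ γ / α ^ 2 := by
        apply div_le_div_of_nonneg_right ?_ (by positivity)
        · linarith

lemma phiK_measurable {γ α : ℝ} : Measurable (phiK γ α) := by
  unfold phiK
  refine Measurable.mul ?_ ?_
  · exact Measurable.pow measurable_id measurable_const
  · exact Real.measurable_exp.comp (measurable_const.mul measurable_inv)

lemma phiK_intervalIntegrable {γ α u : ℝ} (hγ : 1 < γ) (hα : 0 < α) (hu : 0 ≤ u) :
    IntervalIntegrable (phiK γ α) volume 0 u := by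
  rw [intervalIntegrable_iff_integrableOn_Ioc_of_le hu]
  refine Measure.integrableOn_of_bounded (M := 4 * u ^ γ / α ^ 2) measure_Ioc_lt_top.ne
    phiK_measurable.aestronglyMeasurable ?_
  rw [ae_restrict_iff' measurableSet_Ioc]
  filter_upwards with t ht
  rw [Real.norm_eq_abs, abs_of_nonneg (phiK_nonneg ht.1.le)]
  exact phiK_le hγ hα ht.1 ht.2

lemma phiK_integral_pos {γ α u : ℝ} (hγ : 1 < γ) (hα : 0 < α) (hu : 0 < u) :
    0 < ∫ t in (0:ℝ)..u, phiK γ α t :=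
  intervalIntegral.intervalIntegral_pos_of_pos_on (phiK_intervalIntegrable hγ hα hu.le)
    (fun t ht => phiK_pos ht.1) hu

lemma hT_measurable {γ α Φ₀ : ℝ} {F g : ℝ → ℝ} (hgc : ContinuousOn g (Set.Ici 0))
    (hFm : Measurable F) : Measurable (hT γ α Φ₀ F g) := by
  unfold hT Fbar
  exact phiK_measurable.mul ((measurable_const.mul (measurable_const.sub hFm)).add
    (Hf_stronglyMeasurable hgc hFm).measurable)

lemma hT_intervalIntegrable {γ α Φ₀ : ℝ} {F g : ℝ → ℝ} (hγ : 1 < γ) (hα : 0 < α)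
    (hΦ₀ : 0 ≤ Φ₀) (hgc : ContinuousOn g (Set.Ici 0)) (hFm : Measurable F)
    (hFb0 : ∀ y, 0 ≤ Fbar F y) (hFb1 : ∀ y, Fbar F y ≤ 1)
    {u : ℝ} (hu : 0 ≤ u) : IntervalIntegrable (hT γ α Φ₀ F g) volume 0 u := by
  obtain ⟨C, hC⟩ := (isCompact_Icc : IsCompact (Set.Icc (0:ℝ) u)).exists_bound_of_continuousOn
    (hgc.mono fun x hx => hx.1)
  set C' := max C 0 with hC'def
  have hC'0 : (0:ℝ) ≤ C' := le_max_right _ _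
  have hC'b : ∀ y ∈ Set.Icc (0:ℝ) u, ‖g y‖ ≤ C' := fun y hy => (hC y hy).trans (le_max_left _ _)
  rw [intervalIntegrable_iff_integrableOn_Ioc_of_le hu]
  refine Measure.integrableOn_of_bounded (M := (4 * u ^ γ / α ^ 2) * (Φ₀ + C' * u))
    measure_Ioc_lt_top.ne (hT_measurable hgc hFm).aestronglyMeasurable ?_
  rw [ae_restrict_iff' measurableSet_Ioc]
  filter_upwards with t ht
  unfold hT
  rw [norm_mul]
  have h1 : ‖phiK γ α t‖ ≤ 4 * u ^ γ / α ^ 2 := by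
    rw [Real.norm_eq_abs, abs_of_nonneg (phiK_nonneg ht.1.le)]
    exact phiK_le hγ hα ht.1 ht.2
  have h2 : ‖Φ₀ * Fbar F t + Hf F g t‖ ≤ Φ₀ + C' * u := by
    have h3 : ‖Hf F g t‖ ≤ C' * t := Hf_norm_le hFb0 hFb1
      (fun y hy => hC'b y ⟨hy.1, hy.2.le.trans ht.2⟩) hC'0 ht.1.le
    have h4 : ‖Φ₀ * Fbar F t‖ ≤ Φ₀ := by
      rw [norm_mul, Real.norm_eq_abs, Real.norm_eq_abs, abs_of_nonneg hΦ₀,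
        abs_of_nonneg (hFb0 t)]
      calc Φ₀ * Fbar F t ≤ Φ₀ * 1 := mul_le_mul_of_nonneg_left (hFb1 t) hΦ₀
        _ = Φ₀ := mul_one _
    calc ‖Φ₀ * Fbar F t + Hf F g t‖ ≤ ‖Φ₀ * Fbar F t‖ + ‖Hf F g t‖ := norm_add_le _ _
      _ ≤ Φ₀ + C' * t := add_le_add h4 h3
      _ ≤ Φ₀ + C' * u := by nlinarith [ht.2, hC'0]
  exact mul_le_mul h1 h2 (norm_nonneg _) (by positivity)

set_option maxHeartbeats 2000000 in
theorem stmt9 (γ α μ : ℝ) (hγ : 1 < γ) (hα : 0 < α) (hμ : 0 < μ)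
    (F : ℝ → ℝ) (hF : IsCDF F) (Φ₀ : ℝ) (hΦ₀ : 0 < Φ₀)
    (g : ℝ → ℝ) (hg : IsVolterraSol γ α μ Φ₀ F g) :
    (∀ u : ℝ, 0 ≤ u → 0 < g u) ∧
    StrictMonoOn (fun u : ℝ => Φ₀ + ∫ y in (0:ℝ)..u, g y) (Set.Ici 0) := by
  obtain ⟨hgc, heqn⟩ := hg
  obtain ⟨hFmono, hFrc, hF0, hFtop⟩ := hF
  have hFm : Measurable F := hFmono.measurable
  have hF_nonneg : ∀ x, 0 ≤ F x := by
    intro x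
    rcases le_or_gt x 0 with h | h
    · rw [hF0 x h]
    · rw [← hF0 0 le_rfl]; exact hFmono h.le
  have hF_le_one : ∀ x, F x ≤ 1 := fun x => hFmono.ge_of_tendsto hFtop x
  have hFb0 : ∀ x, 0 ≤ Fbar F x := fun x => by unfold Fbar; linarith [hF_le_one x]
  have hFb1 : ∀ x, Fbar F x ≤ 1 := fun x => by unfold Fbar; linarith [hF_nonneg x]
  have hγ0 : (0:ℝ) < γ := by linarith
  have heq' : ∀ u : ℝ, 0 < u → g u = μ * u ^ (-γ) * Real.exp (α / u) *
      ∫ t in (0:ℝ)..u, hT γ α Φ₀ F g t := by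
    intro u hu
    rw [heqn u hu]
    congr 1
    refine intervalIntegral.integral_congr fun t ht => ?_
    rw [Set.uIcc_of_le hu.le] at ht
    unfold hT phiK
    rw [Bop_eq_Hf ht.1]
  -- `Fbar ≥ 1/2` near zero
  obtain ⟨δ₁, hδ₁pos, hδ₁⟩ : ∃ δ : ℝ, 0 < δ ∧ ∀ x ∈ Set.Icc (0:ℝ) δ,
      (1:ℝ)/2 ≤ Fbar F x := by
    have h0 : Tendsto F (𝓝[Set.Ici 0] 0) (𝓝 0) := by
      have := hFrc 0
      rwa [ContinuousWithinAt, hF0 0 le_rfl] at this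
    have h1 : ∀ᶠ x in 𝓝[Set.Ici 0] (0:ℝ), F x < 1/2 :=
      h0.eventually (gt_mem_nhds (by norm_num : (0:ℝ) < 1/2))
    rw [eventually_nhdsWithin_iff, Metric.eventually_nhds_iff] at h1
    obtain ⟨ε, hε, h2⟩ := h1
    refine ⟨ε/2, by linarith, fun x hx => ?_⟩
    have h3 : F x < 1/2 := by
      refine h2 (show dist x 0 < ε from ?_) hx.1
      rw [Real.dist_eq, sub_zero, abs_of_nonneg hx.1]; linarith [hx.2]
    unfold Fbar; linarith
  -- bound for `g` on `[0,1]`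
  obtain ⟨M, hM⟩ := (isCompact_Icc : IsCompact (Set.Icc (0:ℝ) 1)).exists_bound_of_continuousOn
    (hgc.mono fun x hx => hx.1)
  set M' : ℝ := max M 0 with hM'def
  have hM'0 : (0:ℝ) ≤ M' := le_max_right _ _
  have hM' : ∀ y ∈ Set.Icc (0:ℝ) 1, ‖g y‖ ≤ M' := fun y hy => (hM y hy).trans (le_max_left _ _)
  set δ₂ : ℝ := min δ₁ (min 1 (Φ₀ / (4 * (M' + 1)))) with hδ₂def
  have hδ₂pos : 0 < δ₂ := lt_min hδ₁pos (lt_min one_pos (by positivity))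
  have hδ₂le1 : δ₂ ≤ 1 := le_trans (min_le_right _ _) (min_le_left _ _)
  have hδ₂leδ₁ : δ₂ ≤ δ₁ := min_le_left _ _
  have hδ₂leΦ : δ₂ ≤ Φ₀ / (4 * (M' + 1)) := le_trans (min_le_right _ _) (min_le_right _ _)
  -- core estimate
  have hcore : ∀ t ∈ Set.Icc (0:ℝ) δ₂, Φ₀/4 ≤ Φ₀ * Fbar F t + Hf F g t := by
    intro t ht
    have h1 : (1:ℝ)/2 ≤ Fbar F t := hδ₁ t ⟨ht.1, ht.2.trans hδ₂leδ₁⟩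
    have h2 : ‖Hf F g t‖ ≤ M' * t := by
      refine Hf_norm_le hFb0 hFb1 (fun y hy => hM' y ⟨hy.1, ?_⟩) hM'0 ht.1
      exact le_trans hy.2.le (le_trans ht.2 hδ₂le1)
    have h3 : M' * t ≤ Φ₀/4 := by
      have h4 : M' * t ≤ M' * (Φ₀ / (4 * (M' + 1))) :=
        mul_le_mul_of_nonneg_left (ht.2.trans hδ₂leΦ) hM'0
      have h5 : M' * (Φ₀ / (4 * (M' + 1))) ≤ Φ₀/4 := by
        rw [mul_div_assoc', div_le_div_iff₀ (by positivity) (by norm_num : (0:ℝ) < 4)]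
        nlinarith
      linarith
    have h6 := abs_le.mp (by rwa [Real.norm_eq_abs] at h2)
    have h7 := mul_le_mul_of_nonneg_left h1 hΦ₀.le
    linarith [h6.1]
  have hlow : ∀ t ∈ Set.Icc (0:ℝ) δ₂, Φ₀/4 * phiK γ α t ≤ hT γ α Φ₀ F g t := by
    intro t ht
    unfold hT
    rw [mul_comm (Φ₀/4)]
    exact mul_le_mul_of_nonneg_left (hcore t ht) (phiK_nonneg ht.1)
  have hlow0 : ∀ t ∈ Set.Icc (0:ℝ) δ₂, 0 ≤ hT γ α Φ₀ F g t := by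
    intro t ht
    refine le_trans ?_ (hlow t ht)
    exact mul_nonneg (by positivity) (phiK_nonneg ht.1)
  have hint : ∀ u : ℝ, 0 ≤ u → IntervalIntegrable (hT γ α Φ₀ F g) volume 0 u :=
    fun u hu => hT_intervalIntegrable hγ hα hΦ₀.le hgc hFm hFb0 hFb1 hu
  have hIpos : ∀ u : ℝ, 0 < u → u ≤ δ₂ → 0 < ∫ t in (0:ℝ)..u, hT γ α Φ₀ F g t := by
    intro u hu hud
    have h1 : 0 < Φ₀/4 * ∫ t in (0:ℝ)..u, phiK γ α t :=
      mul_pos (by positivity) (phiK_integral_pos hγ hα hu)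
    have h2 : Φ₀/4 * ∫ t in (0:ℝ)..u, phiK γ α t = ∫ t in (0:ℝ)..u, Φ₀/4 * phiK γ α t :=
      (intervalIntegral.integral_const_mul _ _).symm
    have h3 : (∫ t in (0:ℝ)..u, Φ₀/4 * phiK γ α t) ≤ ∫ t in (0:ℝ)..u, hT γ α Φ₀ F g t := by
      refine intervalIntegral.integral_mono_on hu.le
        ((phiK_intervalIntegrable hγ hα hu.le).const_mul _) (hint u hu.le) fun t ht => ?_
      exact hlow t ⟨ht.1, ht.2.trans hud⟩
    rw [h2] at h1
    linarith
  have hpref : ∀ u : ℝ, 0 < u → 0 < μ * u ^ (-γ) * Real.exp (α / u) :=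
    fun u hu => mul_pos (mul_pos hμ (Real.rpow_pos_of_pos hu _)) (Real.exp_pos _)
  have hA : ∀ u : ℝ, 0 < u → u ≤ δ₂ → 0 < g u := by
    intro u hu hud
    rw [heq' u hu]
    exact mul_pos (hpref u hu) (hIpos u hu hud)
  -- Step B : lower bound near 0
  set η : ℝ := min δ₂ (1/2) with hηdef
  have hηpos : 0 < η := lt_min hδ₂pos (by norm_num)
  have hηδ₂ : η ≤ δ₂ := min_le_left _ _
  have hη2 : η ≤ 1/2 := min_le_right _ _
  set c : ℝ := μ * (Φ₀/4) * Real.exp (-(2*α)) / (2:ℝ) ^ γ with hcdef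
  have h2γpos : (0:ℝ) < (2:ℝ) ^ γ := Real.rpow_pos_of_pos two_pos _
  have hcpos : 0 < c := by positivity
  have hB : ∀ u : ℝ, 0 < u → u ≤ η → c ≤ g u := by
    intro u hu huη
    have hu2 : u ≤ 1/2 := huη.trans hη2
    have huδ : u ≤ δ₂ := huη.trans hηδ₂
    set v : ℝ := u - u^2 with hvdef
    have hv0 : 0 < v := by nlinarith
    have hvu : v < u := by nlinarith
    have hvhalf : u/2 ≤ v := by nlinarith
    have hi1 : IntervalIntegrable (hT γ α Φ₀ F g) volume 0 v := hint v hv0.le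
    have hi2 : IntervalIntegrable (hT γ α Φ₀ F g) volume v u :=
      (hint u hu.le).mono_set (by
        rw [Set.uIcc_of_le hvu.le, Set.uIcc_of_le hu.le]
        exact Set.Icc_subset_Icc hv0.le le_rfl)
    have hsplit := intervalIntegral.integral_add_adjacent_intervals hi1 hi2
    have h1 : 0 ≤ ∫ t in (0:ℝ)..v, hT γ α Φ₀ F g t :=
      intervalIntegral.integral_nonneg hv0.le fun t ht =>
        hlow0 t ⟨ht.1, ht.2.trans (hvu.le.trans huδ)⟩
    set m : ℝ := Φ₀/4 * ((u/2) ^ γ * u ^ (-(2:ℝ)) * Real.exp (-α / v)) with hmdef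
    have h2 : ∀ t ∈ Set.Icc v u, m ≤ hT γ α Φ₀ F g t := by
      intro t ht
      have ht0 : 0 < t := lt_of_lt_of_le hv0 ht.1
      have htδ : t ≤ δ₂ := ht.2.trans huδ
      have hphi : (u/2) ^ γ * u ^ (-(2:ℝ)) * Real.exp (-α / v) ≤ phiK γ α t := by
        unfold phiK
        have e1 : t ^ (γ - 2) = t ^ γ * t ^ (-(2:ℝ)) := by
          rw [show γ - 2 = γ + (-2) by ring, Real.rpow_add ht0]
        rw [e1]
        have b1 : (u/2) ^ γ ≤ t ^ γ :=
          Real.rpow_le_rpow (by positivity) (le_trans (by linarith) ht.1) hγ0.le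
        have b2 : u ^ (-(2:ℝ)) ≤ t ^ (-(2:ℝ)) :=
          Real.rpow_le_rpow_of_nonpos ht0 ht.2 (by norm_num)
        have b3 : Real.exp (-α / v) ≤ Real.exp (-α / t) := by
          apply Real.exp_le_exp.mpr
          rw [neg_div, neg_div, neg_le_neg_iff]
          gcongr
          exact ht.1
        calc (u/2) ^ γ * u ^ (-(2:ℝ)) * Real.exp (-α / v)
            ≤ t ^ γ * t ^ (-(2:ℝ)) * Real.exp (-α / v) := by
              refine mul_le_mul_of_nonneg_right ?_ (Real.exp_pos _).le
              exact mul_le_mul b1 b2 (Real.rpow_nonneg hu.le _) (Real.rpow_nonneg ht0.le _)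
          _ ≤ t ^ γ * t ^ (-(2:ℝ)) * Real.exp (-α / t) := by
              refine mul_le_mul_of_nonneg_left b3 ?_
              exact mul_nonneg (Real.rpow_nonneg ht0.le _) (Real.rpow_nonneg ht0.le _)
      calc m ≤ Φ₀/4 * phiK γ α t := mul_le_mul_of_nonneg_left hphi (by positivity)
        _ ≤ hT γ α Φ₀ F g t := hlow t ⟨ht0.le, htδ⟩
    have h3 : m * u^2 ≤ ∫ t in v..u, hT γ α Φ₀ F g t := by
      have h4 := intervalIntegral.integral_mono_on hvu.le intervalIntegrable_const hi2 h2
      rw [intervalIntegral.integral_const, smul_eq_mul] at h4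
      have e : u - v = u^2 := by rw [hvdef]; ring
      rw [e] at h4
      linarith
    have hIlow : m * u^2 ≤ ∫ t in (0:ℝ)..u, hT γ α Φ₀ F g t := by
      rw [← hsplit]; linarith
    rw [heq' u hu]
    have hP := hpref u hu
    have step := mul_le_mul_of_nonneg_left hIlow hP.le
    refine le_trans ?_ step
    have e1 : μ * u ^ (-γ) * Real.exp (α / u) * (m * u^2)
        = μ * (Φ₀/4) * (u ^ (-γ) * (u/2) ^ γ) * (u ^ (-(2:ℝ)) * u^2)
          * (Real.exp (α / u) * Real.exp (-α / v)) := by rw [hmdef]; ring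
    have e2 : u ^ (-γ) * (u/2) ^ γ = 1 / (2:ℝ) ^ γ := by
      rw [Real.div_rpow hu.le (by norm_num : (0:ℝ) ≤ 2), Real.rpow_neg hu.le]
      have huγ : u ^ γ ≠ 0 := (Real.rpow_pos_of_pos hu γ).ne'
      field_simp
    have e3 : u ^ (-(2:ℝ)) * u^2 = 1 := by
      rw [show (u:ℝ)^2 = u ^ ((2:ℕ):ℝ) from (Real.rpow_natCast u 2).symm,
        show ((2:ℕ):ℝ) = (2:ℝ) by norm_num, ← Real.rpow_add hu]
      norm_num
    have e4 : Real.exp (α / u) * Real.exp (-α / v) = Real.exp (α/u - α/v) := by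
      rw [← Real.exp_add]; ring_nf
    have e5 : Real.exp (-(2*α)) ≤ Real.exp (α/u - α/v) := by
      apply Real.exp_le_exp.mpr
      have hv' : v = u * (1 - u) := by rw [hvdef]; ring
      have h1u : (0:ℝ) < 1 - u := by linarith
      have id1 : α/u - α/v = -(α / (1-u)) := by
        rw [hv']
        field_simp
        ring
      rw [id1]
      have h2u : α / (1 - u) ≤ 2*α := by
        rw [div_le_iff₀ h1u]; nlinarith
      linarith
    rw [e1, e2, e3, e4]
    calc c = μ * (Φ₀/4) * (1/(2:ℝ)^γ) * 1 * Real.exp (-(2*α)) := by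
          rw [hcdef]; ring
      _ ≤ μ * (Φ₀/4) * (1/(2:ℝ)^γ) * 1 * Real.exp (α/u - α/v) := by
          refine mul_le_mul_of_nonneg_left e5 ?_
          positivity
  -- g 0 > 0
  have hg0 : c ≤ g 0 := by
    have hcont : Tendsto g (𝓝[>] (0:ℝ)) (𝓝 (g 0)) :=
      (hgc 0 Set.self_mem_Ici).mono_left (nhdsWithin_mono 0 Set.Ioi_subset_Ici_self)
    refine ge_of_tendsto hcont ?_
    filter_upwards [Ioc_mem_nhdsGT_of_mem (Set.left_mem_Ico.mpr hηpos)] with u hu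
    exact hB u hu.1 hu.2
  have hg0pos : 0 < g 0 := lt_of_lt_of_le hcpos hg0
  -- Step C : global positivity
  have hall : ∀ u : ℝ, 0 ≤ u → 0 < g u := by
    by_contra hcon
    push_neg at hcon
    obtain ⟨u₁, hu₁0, hu₁⟩ := hcon
    set S : Set ℝ := {u : ℝ | 0 ≤ u ∧ g u ≤ 0} with hSdef
    have hSne : S.Nonempty := ⟨u₁, hu₁0, hu₁⟩
    have hSbd : BddBelow S := ⟨0, fun x hx => hx.1⟩
    have hSclosed : IsClosed S := by
      have hrw : S = Set.Ici 0 ∩ g ⁻¹' Set.Iic 0 := rfl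
      rw [hrw]
      exact hgc.preimage_isClosed_of_isClosed isClosed_Ici isClosed_Iic
    set u₀ : ℝ := sInf S with hu₀def
    have hu₀S : u₀ ∈ S := hSclosed.csInf_mem hSne hSbd
    have hu₀η : η < u₀ := by
      rcases lt_or_ge η u₀ with h | h
      · exact h
      · exfalso
        rcases eq_or_lt_of_le hu₀S.1 with h0 | h0
        · exact absurd hu₀S.2 (not_le.mpr (h0 ▸ hg0pos))
        · exact absurd hu₀S.2 (not_le.mpr (lt_of_lt_of_le hcpos (hB u₀ h0 h)))
    have hglt : ∀ t, 0 ≤ t → t < u₀ → 0 < g t := by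
      intro t ht htlt
      by_contra h
      push_neg at h
      exact absurd (csInf_le hSbd ⟨ht, h⟩) (not_le.mpr htlt)
    have hu₀0 : 0 < u₀ := lt_trans hηpos hu₀η
    have hnn : ∀ t ∈ Set.Icc η u₀, 0 ≤ hT γ α Φ₀ F g t := by
      intro t ht
      have ht0 : (0:ℝ) ≤ t := le_trans hηpos.le ht.1
      unfold hT
      refine mul_nonneg (phiK_nonneg ht0) (add_nonneg (mul_nonneg hΦ₀.le (hFb0 t)) ?_)
      refine Hf_nonneg hFb0 fun y hy => ?_
      exact (hglt y hy.1 (lt_of_lt_of_le hy.2 ht.2)).le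
    have hi1 : IntervalIntegrable (hT γ α Φ₀ F g) volume 0 η := hint η hηpos.le
    have hi2 : IntervalIntegrable (hT γ α Φ₀ F g) volume η u₀ :=
      (hint u₀ hu₀0.le).mono_set (by
        rw [Set.uIcc_of_le hu₀η.le, Set.uIcc_of_le hu₀0.le]
        exact Set.Icc_subset_Icc hηpos.le le_rfl)
    have hsplit := intervalIntegral.integral_add_adjacent_intervals hi1 hi2
    have h1 : 0 < ∫ t in (0:ℝ)..η, hT γ α Φ₀ F g t := hIpos η hηpos hηδ₂
    have h2 : 0 ≤ ∫ t in η..u₀, hT γ α Φ₀ F g t :=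
      intervalIntegral.integral_nonneg hu₀η.le hnn
    have h3 : 0 < ∫ t in (0:ℝ)..u₀, hT γ α Φ₀ F g t := by rw [← hsplit]; linarith
    have hgu₀ : 0 < g u₀ := by
      rw [heq' u₀ hu₀0]; exact mul_pos (hpref u₀ hu₀0) h3
    exact absurd hu₀S.2 (not_le.mpr hgu₀)
  refine ⟨hall, ?_⟩
  intro a ha b hb hab
  simp only
  have hia : IntervalIntegrable g volume 0 a := by
    refine ContinuousOn.intervalIntegrable (hgc.mono ?_)
    rw [Set.uIcc_of_le ha]
    exact fun x hx => hx.1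
  have hib : IntervalIntegrable g volume a b := by
    refine ContinuousOn.intervalIntegrable (hgc.mono ?_)
    rw [Set.uIcc_of_le hab.le]
    exact fun x hx => le_trans ha hx.1
  have hsum := intervalIntegral.integral_add_adjacent_intervals hia hib
  have hpos : 0 < ∫ y in a..b, g y :=
    intervalIntegral.intervalIntegral_pos_of_pos_on hib
      (fun x hx => hall x (le_trans ha hx.1.le)) hab
  linarith
end
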